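/- arXiv:2207.08108 — 6 statements merged into one kernel-verified Lean document; each statement's English description precedes it below -/
import Mathlib

section
/- The sequence (b_{2n})_{n=1}^∞ is strictly increasing and converges to b_∞. -/
open Filter Finset

private lemma aux_term_pos {x : ℝ} (hx : 1 < x) (e : ℝ) : 0 < x ^ e :=
  Real.rpow_pos_of_pos (by linarith) e

private lemma aux_exp_neg (k : ℕ) : -((k:ℝ)+1)^2/2 < 0 := by
  have : (0:ℝ) < ((k:ℝ)+1)^2 := by positivity
  linarith

private lemma aux_anti_le {x y : ℝ} (hx : 1 < x) (hxy : x ≤ y) (k : ℕ) :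
    y ^ (-((k:ℝ)+1)^2/2) ≤ x ^ (-((k:ℝ)+1)^2/2) := by
  rcases eq_or_lt_of_le hxy with h | h
  · rw [h]
  · exact (Real.rpow_lt_rpow_of_neg (by linarith) h (aux_exp_neg k)).le

private lemma aux_summable {x : ℝ} (hx : 1 < x) :
    Summable (fun k : ℕ => x ^ (-((k:ℝ)+1)^2/2)) := by
  have hx0 : (0:ℝ) < x := by linarith
  have hr : x ^ (-(1/2) : ℝ) < 1 := Real.rpow_lt_one_of_one_lt_of_neg hx (by norm_num)
  have hr0 : (0:ℝ) ≤ x ^ (-(1/2) : ℝ) := (Real.rpow_pos_of_pos hx0 _).le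
  have hgeo : Summable (fun k : ℕ => (x ^ (-(1/2) : ℝ)) ^ (k+1)) :=
    ((summable_geometric_of_lt_one hr0 hr).mul_left _).congr (fun k => by ring)
  refine Summable.of_nonneg_of_le (fun k => (Real.rpow_pos_of_pos hx0 _).le) (fun k => ?_) hgeo
  have h1 : (x ^ (-(1/2) : ℝ)) ^ (k+1) = x ^ ((-(1/2) : ℝ) * (k+1)) := by
    rw [← Real.rpow_natCast (x ^ (-(1/2):ℝ)) (k+1), ← Real.rpow_mul hx0.le]
    push_cast; ring_nf
  rw [h1]
  apply Real.rpow_le_rpow_of_exponent_le hx.le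
  have : ((k:ℝ)+1) ≤ ((k:ℝ)+1)^2 := by nlinarith [Nat.cast_nonneg (α := ℝ) k]
  nlinarith

private lemma aux_S_anti {x y : ℝ} (hx : 1 < x) (hxy : x < y) :
    (∑' k : ℕ, y ^ (-((k:ℝ)+1)^2/2)) < ∑' k : ℕ, x ^ (-((k:ℝ)+1)^2/2) := by
  refine Summable.tsum_lt_tsum_of_nonneg (i := 0)
    (fun k => (aux_term_pos (by linarith) _).le)
    (fun k => aux_anti_le hx hxy.le k)
    (Real.rpow_lt_rpow_of_neg (by linarith) hxy (aux_exp_neg 0))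
    (aux_summable hx)

private lemma aux_reindex (x : ℝ) (n : ℕ) :
    ∑ k ∈ Icc 1 (n+1), x ^ (-(k:ℝ)^2/2) = ∑ k ∈ range (n+1), x ^ (-((k:ℝ)+1)^2/2) := by
  rw [show Icc 1 (n+1) = Ico 1 (n+2) from (Finset.Ico_add_one_right_eq_Icc (a := 1) (b := n + 1)).symm,
    Finset.sum_Ico_eq_sum_range]
  refine Finset.sum_congr (by norm_num) (fun k _ => ?_)
  push_cast
  ring_nf

/-- The sequence `(b_{2n})_{n≥1}` (here `b n = b_{2(n+1)}`) is strictly increasing and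
converges to `b_∞`. -/
theorem stmt_2 (b : ℕ → ℝ) (B : ℝ)
    (hb : ∀ n : ℕ, 1 < b n ∧
      1 - 2 * ∑ k ∈ Finset.Icc 1 (n + 1), (b n) ^ (-(k : ℝ) ^ 2 / 2) = 0)
    (hB : 1 < B ∧ 1 - 2 * ∑' k : ℕ, B ^ (-((k : ℝ) + 1) ^ 2 / 2) = 0) :
    StrictMono b ∧ Filter.Tendsto b Filter.atTop (nhds B) := by
  obtain ⟨hB1, hBeq⟩ := hB
  have hb1 : ∀ n, 1 < b n := fun n => (hb n).1
  -- partial-sum equation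
  have key : ∀ n, ∑ k ∈ range (n+1), (b n) ^ (-((k:ℝ)+1)^2/2) = 1/2 := by
    intro n
    have := (hb n).2
    rw [aux_reindex] at this
    linarith
  have hSB : (∑' k : ℕ, B ^ (-((k:ℝ)+1)^2/2)) = 1/2 := by linarith
  -- strict monotonicity
  have hmono : StrictMono b := by
    refine strictMono_nat_of_lt_succ (fun n => ?_)
    by_contra h
    push_neg at h
    have h1 : ∑ k ∈ range (n+1+1), (b (n+1)) ^ (-((k:ℝ)+1)^2/2) = 1/2 := key (n+1)
    have h2 : ∑ k ∈ range (n+1), (b n) ^ (-((k:ℝ)+1)^2/2) = 1/2 := key n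
    have h3 : (1:ℝ)/2 < ∑ k ∈ range (n+1+1), (b n) ^ (-((k:ℝ)+1)^2/2) := by
      rw [Finset.sum_range_succ, h2]
      have := aux_term_pos (hb1 n) (-((n+1:ℕ):ℝ)+1)
      nlinarith [aux_term_pos (hb1 n) (-(((n+1:ℕ):ℝ)+1)^2/2)]
    have h4 : ∑ k ∈ range (n+1+1), (b n) ^ (-((k:ℝ)+1)^2/2)
        ≤ ∑ k ∈ range (n+1+1), (b (n+1)) ^ (-((k:ℝ)+1)^2/2) :=
      Finset.sum_le_sum (fun k _ => aux_anti_le (hb1 (n+1)) h k)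
    linarith
  -- b n < B
  have hlt : ∀ n, b n < B := by
    intro n
    by_contra h
    push_neg at h
    have h5 : (∑' k : ℕ, (b n) ^ (-((k:ℝ)+1)^2/2)) ≤ ∑' k : ℕ, B ^ (-((k:ℝ)+1)^2/2) :=
      Summable.tsum_le_tsum (fun k => aux_anti_le hB1 h k) (aux_summable (hb1 n)) (aux_summable hB1)
    have h6 : ∑ k ∈ range (n+1+1), (b n) ^ (-((k:ℝ)+1)^2/2)
        ≤ ∑' k : ℕ, (b n) ^ (-((k:ℝ)+1)^2/2) :=
      Summable.sum_le_tsum _ (fun k _ => (aux_term_pos (hb1 n) _).le) (aux_summable (hb1 n))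
    have h3 : (1:ℝ)/2 < ∑ k ∈ range (n+1+1), (b n) ^ (-((k:ℝ)+1)^2/2) := by
      rw [Finset.sum_range_succ, key n]
      nlinarith [aux_term_pos (hb1 n) (-(((n+1:ℕ):ℝ)+1)^2/2)]
    linarith
  -- limit
  set L := ⨆ n, b n with hL
  have hbdd : BddAbove (Set.range b) := ⟨B, by rintro _ ⟨n, rfl⟩; exact (hlt n).le⟩
  have htend : Tendsto b atTop (nhds L) := tendsto_atTop_ciSup hmono.monotone hbdd
  have hbL : ∀ n, b n ≤ L := fun n => le_ciSup hbdd n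
  have hL1 : 1 < L := lt_of_lt_of_le (hb1 0) (hbL 0)
  have hLB : L ≤ B := ciSup_le (fun n => (hlt n).le)
  have hb0 : ∀ n, b 0 ≤ b n := fun n => hmono.monotone (Nat.zero_le n)
  -- S L ≤ 1/2
  have hSle : (∑' k : ℕ, L ^ (-((k:ℝ)+1)^2/2)) ≤ 1/2 := by
    have hPt : Tendsto (fun n => ∑ k ∈ range (n+1), L ^ (-((k:ℝ)+1)^2/2)) atTop
        (nhds (∑' k : ℕ, L ^ (-((k:ℝ)+1)^2/2))) :=
      ((aux_summable hL1).hasSum.tendsto_sum_nat).comp (tendsto_add_atTop_nat 1)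
    refine le_of_tendsto hPt (Filter.Eventually.of_forall (fun n => ?_))
    calc ∑ k ∈ range (n+1), L ^ (-((k:ℝ)+1)^2/2)
        ≤ ∑ k ∈ range (n+1), (b n) ^ (-((k:ℝ)+1)^2/2) :=
          Finset.sum_le_sum (fun k _ => aux_anti_le (hb1 n) (hbL n) k)
      _ = 1/2 := key n
  -- S L ≥ 1/2 via dominated convergence
  have hSge : (1:ℝ)/2 ≤ ∑' k : ℕ, L ^ (-((k:ℝ)+1)^2/2) := by
    have hdom : Tendsto (fun n => ∑' k : ℕ, (b n) ^ (-((k:ℝ)+1)^2/2)) atTop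
        (nhds (∑' k : ℕ, L ^ (-((k:ℝ)+1)^2/2))) := by
      refine tendsto_tsum_of_dominated_convergence (aux_summable (hb1 0))
        (fun k => ?_) (Filter.Eventually.of_forall (fun n k => ?_))
      · exact ((Real.continuousAt_rpow_const L _ (Or.inl (by linarith))).tendsto).comp htend
      · rw [Real.norm_eq_abs, abs_of_pos (aux_term_pos (hb1 n) _)]
        exact aux_anti_le (hb1 0) (hb0 n) k
    refine ge_of_tendsto hdom (Filter.Eventually.of_forall (fun n => ?_))
    have h6 : ∑ k ∈ range (n+1), (b n) ^ (-((k:ℝ)+1)^2/2)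
        ≤ ∑' k : ℕ, (b n) ^ (-((k:ℝ)+1)^2/2) :=
      Summable.sum_le_tsum _ (fun k _ => (aux_term_pos (hb1 n) _).le) (aux_summable (hb1 n))
    rw [key n] at h6
    exact h6
  -- conclude L = B
  have hLeqB : L = B := by
    by_contra h
    have hLltB : L < B := lt_of_le_of_ne hLB h
    have := aux_S_anti hL1 hLltB
    rw [hSB] at this
    linarith
  exact ⟨hmono, hLeqB ▸ htend⟩
end

section
/- Let n be a positive integer and let P(z) = ∑_{k=0}^{2n} a_k z^k be a complex polynomial with a_k ∈ ℂ \ {0} for all k. If |q_k(P)| > b_{2n} for all k = 2, 3, …, 2n, then all zeros of P are simple; moreover, the moduli of the zeros of P are pairwise different. -/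
set_option maxHeartbeats 1000000

section NVIneq
open Finset
open Finset


variable {N : ℕ} {b : ℝ} {A : ℕ → ℝ}
variable (hb1 : 1 < b) (hA : ∀ j, j ≤ N → 0 < A j)
variable (hq2 : ∀ j, j + 2 ≤ N → b * (A j * A (j + 2)) < A (j + 1) ^ 2)
variable {i : ℕ} (hi : i + 1 ≤ N)

noncomputable def rr (b : ℝ) (A : ℕ → ℝ) (i : ℕ) : ℝ := A i / (A (i+1) * b ^ ((1:ℝ)/2))

lemma hb0 (hb1 : 1 < b) : (0:ℝ) < b := lt_trans one_pos hb1

lemma sb_pos (hb1 : 1 < b) : (0:ℝ) < b ^ ((1:ℝ)/2) := Real.rpow_pos_of_pos (hb0 hb1) _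

lemma rr_pos (hb1 : 1 < b) (hA : ∀ j, j ≤ N → 0 < A j) (hi : i + 1 ≤ N) :
    0 < rr b A i :=
  div_pos (hA i (by omega)) (mul_pos (hA (i+1) hi) (sb_pos hb1))

-- base identity : A (i+1) * rr = A i * b ^ (-(1:ℝ)/2)
lemma TR0 (hb1 : 1 < b) (hA : ∀ j, j ≤ N → 0 < A j) (hi : i + 1 ≤ N) :
    A (i+1) * rr b A i = A i * b ^ (-(1:ℝ)/2) := by
  have h1 : A (i+1) ≠ 0 := ne_of_gt (hA (i+1) hi)
  have h2 : b ^ ((1:ℝ)/2) ≠ 0 := ne_of_gt (sb_pos hb1)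
  rw [rr, show (-(1:ℝ)/2) = -((1:ℝ)/2) by ring, Real.rpow_neg (le_of_lt (hb0 hb1))]
  field_simp

lemma TR (hb1 : 1 < b) (hA : ∀ j, j ≤ N → 0 < A j)
    (hq2 : ∀ j, j + 2 ≤ N → b * (A j * A (j + 2)) < A (j + 1) ^ 2)
    (hi : i + 1 ≤ N) :
    ∀ d, i + d + 1 ≤ N →
      A (i+d+1) * rr b A i ≤ A (i+d) * b ^ (-(d:ℝ) - 1/2) ∧
      (1 ≤ d → A (i+d+1) * rr b A i < A (i+d) * b ^ (-(d:ℝ) - 1/2)) := by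
  intro d
  induction d with
  | zero =>
    intro hd
    refine ⟨?_, by omega⟩
    rw [TR0 hb1 hA hi]
    apply le_of_eq
    norm_num
  | succ d ih =>
    intro hd
    have ih' := (ih (by omega)).1
    have q := hq2 (i+d) (by omega)
    have hA0 := hA (i+d) (by omega)
    have hA1 := hA (i+d+1) (by omega)
    have hA2 := hA (i+d+2) (by omega)
    have hr := rr_pos hb1 hA hi
    have hbA : (0:ℝ) < b * A (i+d) := mul_pos (hb0 hb1) hA0
    have hexp : b ^ (-(d:ℝ) - 1/2) = b ^ (-((d:ℕ)+1:ℝ) - 1/2) * b := by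
      rw [← Real.rpow_add_one (ne_of_gt (hb0 hb1))]
      congr 1
      ring
    have key : A (i+d+2) * rr b A i * (b * A (i+d))
        < A (i+d+1) * b ^ (-((d+1:ℕ):ℝ) - 1/2) * (b * A (i+d)) := by
      calc A (i+d+2) * rr b A i * (b * A (i+d))
          = (b * (A (i+d) * A (i+d+2))) * rr b A i := by ring
        _ < A (i+d+1)^2 * rr b A i := mul_lt_mul_of_pos_right q hr
        _ = A (i+d+1) * (A (i+d+1) * rr b A i) := by ring
        _ ≤ A (i+d+1) * (A (i+d) * b ^ (-(d:ℝ) - 1/2)) :=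
            mul_le_mul_of_nonneg_left ih' hA1.le
        _ = A (i+d+1) * b ^ (-(d:ℝ) - 1/2) * A (i+d) := by ring
        _ = A (i+d+1) * b ^ (-((d+1:ℕ):ℝ) - 1/2) * (b * A (i+d)) := by
            rw [hexp]; push_cast; ring
    have lt := (mul_lt_mul_iff_left₀ hbA).1 key
    exact ⟨le_of_lt lt, fun _ => lt⟩

lemma TL (hb1 : 1 < b) (hA : ∀ j, j ≤ N → 0 < A j)
    (hq2 : ∀ j, j + 2 ≤ N → b * (A j * A (j + 2)) < A (j + 1) ^ 2)
    (hi : i + 1 ≤ N) :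
    ∀ e j, j + (e+1) = i → A j * b ^ ((e:ℝ) + 1/2) < A (j+1) * rr b A i := by
  intro e
  induction e with
  | zero =>
    intro j hj
    have hj1 : j + 1 = i := by omega
    have q := hq2 j (by omega)
    have hA0 := hA j (by omega)
    have hA1 := hA (j+1) (by omega)
    have hA2 := hA (j+2) (by omega)
    have hsb := sb_pos (b := b) hb1
    have hrr : A (j+1) * rr b A i * (A (j+2) * b ^ ((1:ℝ)/2)) = A (j+1)^2 := by
      rw [rr, ← hj1]
      have : A (j+1+1) = A (j+2) := by norm_num
      rw [this]
      field_simp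
    have key : A j * b ^ (((0:ℕ):ℝ) + 1/2) * (A (j+2) * b ^ ((1:ℝ)/2))
        < A (j+1) * rr b A i * (A (j+2) * b ^ ((1:ℝ)/2)) := by
      rw [hrr]
      calc A j * b ^ (((0:ℕ):ℝ) + 1/2) * (A (j+2) * b ^ ((1:ℝ)/2))
          = (b ^ (((0:ℕ):ℝ) + 1/2) * b ^ ((1:ℝ)/2)) * (A j * A (j+2)) := by ring
        _ = b * (A j * A (j+2)) := by
            rw [← Real.rpow_add (hb0 hb1), show (((0:ℕ):ℝ) + 1/2) + 1/2 = 1 by norm_num,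
              Real.rpow_one]
        _ < A (j+1)^2 := q
    have hpos : (0:ℝ) < A (j+2) * b ^ ((1:ℝ)/2) := mul_pos hA2 hsb
    exact (mul_lt_mul_iff_left₀ hpos).1 key
  | succ e ih =>
    intro j hj
    have ih' := ih (j+1) (by omega)
    have q := hq2 j (by omega)
    have hA0 := hA j (by omega)
    have hA1 := hA (j+1) (by omega)
    have hA2 := hA (j+2) (by omega)
    have hr := rr_pos hb1 hA hi
    have hp : (0:ℝ) < b ^ ((e:ℝ) + 1/2) := Real.rpow_pos_of_pos (hb0 hb1) _
    have hexp : b ^ (((e+1:ℕ):ℝ) + 1/2) = b ^ ((e:ℝ) + 1/2) * b := by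
      rw [← Real.rpow_add_one (ne_of_gt (hb0 hb1))]
      congr 1
      push_cast
      ring
    have key : A j * b ^ (((e+1:ℕ):ℝ) + 1/2) * A (j+2)
        < A (j+1) * rr b A i * A (j+2) := by
      calc A j * b ^ (((e+1:ℕ):ℝ) + 1/2) * A (j+2)
          = (b * (A j * A (j+2))) * b ^ ((e:ℝ) + 1/2) := by rw [hexp]; ring
        _ < A (j+1)^2 * b ^ ((e:ℝ) + 1/2) := mul_lt_mul_of_pos_right q hp
        _ = A (j+1) * (A (j+1) * b ^ ((e:ℝ) + 1/2)) := by ring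
        _ < A (j+1) * (A (j+1+1) * rr b A i) := (mul_lt_mul_iff_right₀ hA1).2 ih'
        _ = A (j+1) * rr b A i * A (j+2) := by ring
    exact (mul_lt_mul_iff_left₀ hA2).1 key

noncomputable def mm (b : ℝ) (A : ℕ → ℝ) (i j : ℕ) : ℝ := A j * (rr b A i) ^ j

noncomputable def bet (b : ℝ) (d : ℕ) : ℝ := b ^ (-((d:ℝ))^2/2)

lemma bet_pos (hb1 : 1 < b) (d : ℕ) : 0 < bet b d := Real.rpow_pos_of_pos (hb0 hb1) _

lemma mm_pos (hb1 : 1 < b) (hA : ∀ j, j ≤ N → 0 < A j) (hi : i + 1 ≤ N) (j : ℕ) (hj : j ≤ N) :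
    0 < mm b A i j := mul_pos (hA j hj) (pow_pos (rr_pos hb1 hA hi) j)

lemma MR (hb1 : 1 < b) (hA : ∀ j, j ≤ N → 0 < A j)
    (hq2 : ∀ j, j + 2 ≤ N → b * (A j * A (j + 2)) < A (j + 1) ^ 2)
    (hi : i + 1 ≤ N) :
    ∀ d, i + d ≤ N →
      mm b A i (i+d) ≤ mm b A i i * bet b d ∧
      (2 ≤ d → mm b A i (i+d) < mm b A i i * bet b d) := by
  intro d
  induction d with
  | zero =>
    intro _
    refine ⟨le_of_eq ?_, by omega⟩
    rw [bet]
    norm_num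
  | succ d ih =>
    intro hd
    have ih' := (ih (by omega)).1
    have tr := TR hb1 hA hq2 hi d (by omega)
    have hr := rr_pos hb1 hA hi
    have hrp : (0:ℝ) < (rr b A i) ^ (i+d) := pow_pos hr _
    have hmi : 0 < mm b A i i := mm_pos hb1 hA hi i (by omega)
    have hbp : (0:ℝ) < b ^ (-(d:ℝ) - 1/2) := Real.rpow_pos_of_pos (hb0 hb1) _
    have hexp : bet b d * b ^ (-(d:ℝ) - 1/2) = bet b (d+1) := by
      rw [bet, bet, ← Real.rpow_add (hb0 hb1)]
      congr 1
      push_cast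
      ring
    have step : mm b A i (i+(d+1)) ≤ mm b A i (i+d) * b ^ (-(d:ℝ) - 1/2) ∧
        (1 ≤ d → mm b A i (i+(d+1)) < mm b A i (i+d) * b ^ (-(d:ℝ) - 1/2)) := by
      constructor
      · calc mm b A i (i+(d+1)) = (A (i+d+1) * rr b A i) * (rr b A i)^(i+d) := by
              rw [mm]; ring
          _ ≤ (A (i+d) * b ^ (-(d:ℝ) - 1/2)) * (rr b A i)^(i+d) :=
              mul_le_mul_of_nonneg_right tr.1 hrp.le
          _ = mm b A i (i+d) * b ^ (-(d:ℝ) - 1/2) := by rw [mm]; ring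
      · intro hd1
        calc mm b A i (i+(d+1)) = (A (i+d+1) * rr b A i) * (rr b A i)^(i+d) := by
              rw [mm]; ring
          _ < (A (i+d) * b ^ (-(d:ℝ) - 1/2)) * (rr b A i)^(i+d) :=
              mul_lt_mul_of_pos_right (tr.2 hd1) hrp
          _ = mm b A i (i+d) * b ^ (-(d:ℝ) - 1/2) := by rw [mm]; ring
    constructor
    · calc mm b A i (i+(d+1)) ≤ mm b A i (i+d) * b ^ (-(d:ℝ) - 1/2) := step.1
        _ ≤ (mm b A i i * bet b d) * b ^ (-(d:ℝ) - 1/2) :=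
            mul_le_mul_of_nonneg_right ih' hbp.le
        _ = mm b A i i * bet b (d+1) := by rw [← hexp]; ring
    · intro hd2
      have hd1 : 1 ≤ d := by omega
      calc mm b A i (i+(d+1)) < mm b A i (i+d) * b ^ (-(d:ℝ) - 1/2) := step.2 hd1
        _ ≤ (mm b A i i * bet b d) * b ^ (-(d:ℝ) - 1/2) :=
            mul_le_mul_of_nonneg_right ih' hbp.le
        _ = mm b A i i * bet b (d+1) := by rw [← hexp]; ring

lemma ML (hb1 : 1 < b) (hA : ∀ j, j ≤ N → 0 < A j)
    (hq2 : ∀ j, j + 2 ≤ N → b * (A j * A (j + 2)) < A (j + 1) ^ 2)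
    (hi : i + 1 ≤ N) :
    ∀ d j, j + (d+1) = i → mm b A i j < mm b A i i * bet b (d+1) := by
  intro d
  induction d with
  | zero =>
    intro j hj
    have tl := TL hb1 hA hq2 hi 0 j hj
    have hr := rr_pos hb1 hA hi
    have hrp : (0:ℝ) < (rr b A i) ^ j := pow_pos hr _
    have hbet : 0 < bet b 1 := bet_pos hb1 1
    have hb12 : bet b 1 * b ^ (((0:ℕ):ℝ) + 1/2) = 1 := by
      rw [bet, ← Real.rpow_add (hb0 hb1)]
      norm_num
    have key : mm b A i j * b ^ (((0:ℕ):ℝ) + 1/2) < mm b A i i := by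
      calc mm b A i j * b ^ (((0:ℕ):ℝ) + 1/2)
          = (A j * b ^ (((0:ℕ):ℝ) + 1/2)) * (rr b A i)^j := by rw [mm]; ring
        _ < (A (j+1) * rr b A i) * (rr b A i)^j := mul_lt_mul_of_pos_right tl hrp
        _ = A (j+1) * (rr b A i)^(j+1) := by ring
        _ = mm b A i i := by rw [mm, ← hj]
    have hp : (0:ℝ) < b ^ (((0:ℕ):ℝ) + 1/2) := Real.rpow_pos_of_pos (hb0 hb1) _
    calc mm b A i j = (mm b A i j * b ^ (((0:ℕ):ℝ) + 1/2)) * (b ^ (((0:ℕ):ℝ) + 1/2))⁻¹ := by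
          field_simp
      _ < mm b A i i * (b ^ (((0:ℕ):ℝ) + 1/2))⁻¹ :=
          mul_lt_mul_of_pos_right key (inv_pos.2 hp)
      _ = mm b A i i * (bet b 1 * b ^ (((0:ℕ):ℝ) + 1/2)) * (b ^ (((0:ℕ):ℝ) + 1/2))⁻¹ := by
          rw [hb12]; ring
      _ = mm b A i i * bet b 1 := by field_simp
  | succ d ih =>
    intro j hj
    have ih' := ih (j+1) (by omega)
    have tl := TL hb1 hA hq2 hi (d+1) j hj
    have hr := rr_pos hb1 hA hi
    have hrp : (0:ℝ) < (rr b A i) ^ j := pow_pos hr _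
    have hp : (0:ℝ) < b ^ (((d+1:ℕ):ℝ) + 1/2) := Real.rpow_pos_of_pos (hb0 hb1) _
    have hmi : 0 < mm b A i i := mm_pos hb1 hA hi i (by omega)
    have hexp : bet b (d+1) = bet b (d+2) * b ^ (((d+1:ℕ):ℝ) + 1/2) := by
      rw [bet, bet, ← Real.rpow_add (hb0 hb1)]
      congr 1
      push_cast
      ring
    have key : mm b A i j * b ^ (((d+1:ℕ):ℝ) + 1/2) < mm b A i i * bet b (d+1) := by
      calc mm b A i j * b ^ (((d+1:ℕ):ℝ) + 1/2)
          = (A j * b ^ (((d+1:ℕ):ℝ) + 1/2)) * (rr b A i)^j := by rw [mm]; ring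
        _ < (A (j+1) * rr b A i) * (rr b A i)^j := mul_lt_mul_of_pos_right tl hrp
        _ = mm b A i (j+1) := by rw [mm]; ring
        _ < mm b A i i * bet b (d+1) := ih'
    calc mm b A i j = (mm b A i j * b ^ (((d+1:ℕ):ℝ) + 1/2)) * (b ^ (((d+1:ℕ):ℝ) + 1/2))⁻¹ := by
          field_simp
      _ < (mm b A i i * bet b (d+1)) * (b ^ (((d+1:ℕ):ℝ) + 1/2))⁻¹ :=
          mul_lt_mul_of_pos_right key (inv_pos.2 hp)
      _ = (mm b A i i * (bet b (d+2) * b ^ (((d+1:ℕ):ℝ) + 1/2))) * (b ^ (((d+1:ℕ):ℝ) + 1/2))⁻¹ := by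
          rw [← hexp]
      _ = mm b A i i * bet b (d+2) := by field_simp

lemma bet_anti (hb1 : 1 < b) : ∀ d e : ℕ, d ≤ e → bet b e ≤ bet b d := by
  intro d e hde
  rw [bet, bet]
  apply Real.rpow_le_rpow_left_iff hb1 |>.2
  have : (d:ℝ) ≤ (e:ℝ) := by exact_mod_cast hde
  have h0 : (0:ℝ) ≤ (d:ℝ) := Nat.cast_nonneg d
  nlinarith

lemma balanced_half {n p q : ℕ} (hb1 : 1 < b) (hpq : p + q = 2*n) (hle : p ≤ q) :
    ∑ d ∈ range p, bet b (d+1) + ∑ d ∈ range q, bet b (d+1)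
      ≤ 2 * ∑ d ∈ range n, bet b (d+1) := by
  have hpn : p ≤ n := by omega
  have hnq : n ≤ q := by omega
  have h1 : ∑ d ∈ range q, bet b (d+1)
      = ∑ d ∈ range n, bet b (d+1) + ∑ d ∈ Finset.Ico n q, bet b (d+1) := by
    rw [range_eq_Ico, range_eq_Ico]
    exact (Finset.sum_Ico_consecutive _ (Nat.zero_le n) hnq).symm
  have h2 : ∑ d ∈ range n, bet b (d+1)
      = ∑ d ∈ range p, bet b (d+1) + ∑ d ∈ Finset.Ico p n, bet b (d+1) := by
    rw [range_eq_Ico, range_eq_Ico]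
    exact (Finset.sum_Ico_consecutive _ (Nat.zero_le p) hpn).symm
  have h3 : ∑ d ∈ Finset.Ico n q, bet b (d+1) ≤ ∑ d ∈ Finset.Ico p n, bet b (d+1) := by
    rw [Finset.sum_Ico_eq_sum_range, Finset.sum_Ico_eq_sum_range]
    have hcard : q - n = n - p := by omega
    rw [hcard]
    apply Finset.sum_le_sum
    intro d _
    exact bet_anti hb1 _ _ (by omega)
  linarith

lemma balanced {n p q : ℕ} (hb1 : 1 < b) (hpq : p + q = 2*n) :
    ∑ d ∈ range p, bet b (d+1) + ∑ d ∈ range q, bet b (d+1)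
      ≤ 2 * ∑ d ∈ range n, bet b (d+1) := by
  rcases le_total p q with h | h
  · exact balanced_half hb1 hpq h
  · have := balanced_half (n := n) (p := q) (q := p) hb1 (by omega) h
    linarith

lemma domination {n : ℕ} (hb1 : 1 < b) (hA : ∀ j, j ≤ N → 0 < A j)
    (hq2 : ∀ j, j + 2 ≤ N → b * (A j * A (j + 2)) < A (j + 1) ^ 2)
    (hN : N = 2*n) (hn : 1 ≤ n)
    (hsum : 2 * ∑ d ∈ range n, bet b (d+1) = 1)
    (hi : i + 1 ≤ N) :
    ∑ j ∈ (range (N+1)).erase i, mm b A i j < mm b A i i := by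
  have hmi : 0 < mm b A i i := mm_pos hb1 hA hi i (by omega)
  have hsplit : (range (N+1)).erase i = range i ∪ Finset.Ico (i+1) (N+1) := by
    ext j
    simp only [Finset.mem_erase, Finset.mem_range, Finset.mem_union, Finset.mem_Ico]
    omega
  have hdisj : Disjoint (range i) (Finset.Ico (i+1) (N+1)) := by
    rw [Finset.disjoint_left]
    intro j hj1 hj2
    simp only [Finset.mem_range] at hj1
    simp only [Finset.mem_Ico] at hj2
    omega
  rw [hsplit, Finset.sum_union hdisj]
  set L := ∑ j ∈ range i, mm b A i j with hL
  set Rs := ∑ j ∈ Finset.Ico (i+1) (N+1), mm b A i j with hRs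
  have hLre : L = ∑ d ∈ range i, mm b A i (i - 1 - d) := (Finset.sum_range_reflect _ _).symm
  have hRre : Rs = ∑ d ∈ range (N - i), mm b A i (i+1+d) := by
    rw [hRs, Finset.sum_Ico_eq_sum_range]
    have : N + 1 - (i+1) = N - i := by omega
    rw [this]
  have hRle : Rs ≤ mm b A i i * ∑ d ∈ range (N - i), bet b (d+1) := by
    rw [hRre, Finset.mul_sum]
    apply Finset.sum_le_sum
    intro d hd
    simp only [Finset.mem_range] at hd
    have := (MR hb1 hA hq2 hi (d+1) (by omega)).1
    calc mm b A i (i+1+d) = mm b A i (i+(d+1)) := by rw [show i+1+d = i+(d+1) by omega]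
      _ ≤ mm b A i i * bet b (d+1) := this
  have key : L + Rs < mm b A i i * (∑ d ∈ range i, bet b (d+1)
      + ∑ d ∈ range (N - i), bet b (d+1)) := by
    rcases Nat.eq_zero_or_pos i with hi0 | hip
    · have hL0 : L = 0 := by rw [hL, hi0]; simp
      have hS0 : ∑ d ∈ range i, bet b (d+1) = 0 := by rw [hi0]; simp
      have hstrict : Rs < mm b A i i * ∑ d ∈ range (N - i), bet b (d+1) := by
        rw [hRre, Finset.mul_sum]
        apply Finset.sum_lt_sum
        · intro d hd
          simp only [Finset.mem_range] at hd
          have := (MR hb1 hA hq2 hi (d+1) (by omega)).1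
          calc mm b A i (i+1+d) = mm b A i (i+(d+1)) := by rw [show i+1+d = i+(d+1) by omega]
            _ ≤ mm b A i i * bet b (d+1) := this
        · refine ⟨1, Finset.mem_range.2 (by omega), ?_⟩
          have := (MR hb1 hA hq2 hi 2 (by omega)).2 (by norm_num)
          calc mm b A i (i+1+1) = mm b A i (i+2) := by rw [show i+1+1 = i+2 by omega]
            _ < mm b A i i * bet b 2 := this
      rw [hS0]
      simp only [zero_add]
      linarith
    · have hLlt : L < mm b A i i * ∑ d ∈ range i, bet b (d+1) := by
        rw [hLre, Finset.mul_sum]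
        apply Finset.sum_lt_sum_of_nonempty (Finset.nonempty_range_iff.2 (by omega))
        intro d hd
        simp only [Finset.mem_range] at hd
        exact ML hb1 hA hq2 hi d (i - 1 - d) (by omega)
      linarith
  have hbal := balanced (n := n) (p := i) (q := N - i) hb1 (by omega)
  calc L + Rs < mm b A i i * (∑ d ∈ range i, bet b (d+1)
      + ∑ d ∈ range (N - i), bet b (d+1)) := key
    _ ≤ mm b A i i * (2 * ∑ d ∈ range n, bet b (d+1)) :=
        mul_le_mul_of_nonneg_left hbal hmi.le
    _ = mm b A i i := by rw [hsum, mul_one]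



end NVIneq

section NVCA
open Polynomial Metric Complex
open Polynomial Metric
-- pointwise logarithmic derivative identity
lemma logderiv_id (M : Multiset ℂ) (a : ℂ) (ha : a ≠ 0) (z : ℂ) (hz : ∀ r ∈ M, z ≠ r) :
    (Polynomial.derivative (C a * (M.map fun r => X - C r).prod)).eval z /
      (C a * (M.map fun r => X - C r).prod).eval z
      = (M.map fun r => (z - r)⁻¹).sum := by
  induction M using Multiset.induction with
  | empty => simp
  | cons r M ih =>
    have hWz : ((C a * (M.map fun r => X - C r).prod)).eval z ≠ 0 := by
      rw [eval_mul, eval_C, eval_multiset_prod]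
      refine mul_ne_zero ha (Multiset.prod_ne_zero ?_)
      simp only [Multiset.mem_map]
      rintro ⟨q, ⟨s, hs, rfl⟩, h0⟩
      simp only [eval_sub, eval_X, eval_C, sub_eq_zero] at h0
      exact hz s (Multiset.mem_cons_of_mem hs) h0
    have hzr : z - r ≠ 0 := sub_ne_zero.2 (hz r (Multiset.mem_cons_self r M))
    have key : C a * ((r ::ₘ M).map fun r => X - C r).prod
        = (X - C r) * (C a * (M.map fun r => X - C r).prod) := by
      rw [Multiset.map_cons, Multiset.prod_cons]; ring
    rw [key, derivative_mul, Multiset.map_cons, Multiset.sum_cons,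
      ← ih (fun s hs => hz s (Multiset.mem_cons_of_mem hs))]
    simp only [eval_add, eval_mul, eval_sub, eval_X, eval_C, derivative_sub, derivative_X,
      derivative_C, sub_zero, eval_one, one_mul]
    have hWz' : a * eval z ((M.map fun r => X - C r)).prod ≠ 0 := by
      simpa [eval_mul] using hWz
    have hgen : ∀ u w d : ℂ, u ≠ 0 → w ≠ 0 → (w + u * d) / (u * w) = u⁻¹ + d / w := by
      intro u w d hu hw; field_simp
    exact hgen _ _ _ hzr hWz'

open Polynomial Metric Complex

lemma ci_single {R : ℝ} (hR : 0 < R) (r : ℂ) (hr : ‖r‖ ≠ R) :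
    CircleIntegrable (fun z => (z - r)⁻¹) 0 R := by
  apply ContinuousOn.circleIntegrable hR.le
  apply ContinuousOn.inv₀ (by fun_prop)
  intro z hz
  rw [mem_sphere_zero_iff_norm] at hz
  intro h0
  apply hr
  rw [← hz, sub_eq_zero.1 h0]

lemma ci_sum {R : ℝ} (hR : 0 < R) (M : Multiset ℂ) (hM : ∀ r ∈ M, ‖r‖ ≠ R) :
    CircleIntegrable (fun z => (M.map fun r => (z - r)⁻¹).sum) 0 R := by
  induction M using Multiset.induction with
  | empty => simp only [Multiset.map_zero, Multiset.sum_zero]; simpa [CircleIntegrable] using intervalIntegrable_const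
  | cons r M ih =>
    simp only [Multiset.map_cons, Multiset.sum_cons]
    exact (ci_single hR r (hM r (Multiset.mem_cons_self r M))).add
      (ih fun s hs => hM s (Multiset.mem_cons_of_mem hs))

lemma int_single_out {R : ℝ} (hR : 0 < R) (r : ℂ) (hr : R < ‖r‖) :
    (∮ z in C(0, R), (z - r)⁻¹) = 0 := by
  apply circleIntegral_eq_zero_of_differentiable_on_off_countable hR.le Set.countable_empty
  · apply ContinuousOn.inv₀ (by fun_prop)
    intro z hz h0
    rw [mem_closedBall_zero_iff] at hz
    rw [sub_eq_zero] at h0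
    subst h0
    exact absurd hz (not_le.2 hr)
  · intro z hz
    apply DifferentiableAt.inv (by fun_prop)
    intro h0
    rw [sub_eq_zero] at h0
    subst h0
    have h2 := mem_ball_zero_iff.1 hz.1
    linarith


open Polynomial Metric Complex

lemma int_sum {R : ℝ} (hR : 0 < R) (M : Multiset ℂ) (hM : ∀ r ∈ M, ‖r‖ ≠ R) :
    (∮ z in C(0, R), (M.map fun r => (z - r)⁻¹).sum)
      = 2 * Real.pi * Complex.I * (M.filter fun r => ‖r‖ < R).card := by
  induction M using Multiset.induction with
  | empty =>
    simp only [Multiset.map_zero, Multiset.sum_zero, Multiset.filter_zero, Multiset.card_zero,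
      Nat.cast_zero, mul_zero]
    simpa using circleIntegral.integral_const_mul 0 (fun _ => (1:ℂ)) 0 R
  | cons r M ih =>
    have hr := hM r (Multiset.mem_cons_self r M)
    have hM' : ∀ s ∈ M, ‖s‖ ≠ R := fun s hs => hM s (Multiset.mem_cons_of_mem hs)
    have step : (∮ z in C(0, R), ((r ::ₘ M).map fun s => (z - s)⁻¹).sum)
        = (∮ z in C(0, R), (z - r)⁻¹) + ∮ z in C(0, R), (M.map fun s => (z - s)⁻¹).sum := by
      have hneg : CircleIntegrable (fun z => -(M.map fun s => (z - s)⁻¹).sum) 0 R :=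
        (ci_sum hR M hM').neg
      have h1 : (∮ z in C(0, R), ((r ::ₘ M).map fun s => (z - s)⁻¹).sum)
          = ∮ z in C(0, R), ((z - r)⁻¹ - (-(M.map fun s => (z - s)⁻¹).sum)) := by
        apply circleIntegral.integral_congr hR.le
        intro z _
        simp [Multiset.map_cons, Multiset.sum_cons, sub_neg_eq_add]
      rw [h1, circleIntegral.integral_sub (ci_single hR r hr) hneg]
      have h2 : (∮ z in C(0, R), -(M.map fun s => (z - s)⁻¹).sum)
          = -∮ z in C(0, R), (M.map fun s => (z - s)⁻¹).sum := by
        have := circleIntegral.integral_const_mul (-1 : ℂ)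
          (fun z => (M.map fun s => (z - s)⁻¹).sum) 0 R
        simpa using this
      rw [h2, sub_neg_eq_add]
    rw [step, ih hM']
    rcases lt_or_gt_of_ne hr with h | h
    · rw [circleIntegral.integral_sub_inv_of_mem_ball (by simpa [mem_ball_zero_iff] using h)]
      rw [Multiset.filter_cons_of_pos _ (by exact h)]
      simp only [Multiset.card_cons]
      push_cast
      ring
    · rw [int_single_out hR r h, Multiset.filter_cons_of_neg _ (by exact not_lt.2 h.le)]
      ring

open Polynomial Metric Complex

lemma arg_principle {R : ℝ} (hR : 0 < R) (Q : Polynomial ℂ) (hQ : Q ≠ 0)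
    (hs : ∀ z ∈ sphere (0:ℂ) R, Q.eval z ≠ 0) :
    (∮ z in C(0, R), (Polynomial.derivative Q).eval z / Q.eval z)
      = 2 * Real.pi * Complex.I * (Q.roots.filter fun z => ‖z‖ < R).card := by
  have hcard : Multiset.card Q.roots = Q.natDegree :=
    (Polynomial.splits_iff_card_roots.1 (IsAlgClosed.splits Q))
  have hfact : C Q.leadingCoeff * (Q.roots.map fun r => X - C r).prod = Q :=
    Polynomial.C_leadingCoeff_mul_prod_multiset_X_sub_C hcard
  have hroot_mod : ∀ r ∈ Q.roots, ‖r‖ ≠ R := by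
    intro r hr habs
    exact hs r (by simpa [mem_sphere_zero_iff_norm] using habs)
      (Polynomial.isRoot_of_mem_roots hr)
  have key : ∀ z ∈ sphere (0:ℂ) R,
      (Polynomial.derivative Q).eval z / Q.eval z = (Q.roots.map fun r => (z - r)⁻¹).sum := by
    intro z hz
    conv_lhs => rw [← hfact]
    apply logderiv_id
    · exact Polynomial.leadingCoeff_ne_zero.2 hQ
    · intro r hr hzr
      exact hs z hz (by rw [hzr]; exact Polynomial.isRoot_of_mem_roots hr)
  rw [circleIntegral.integral_congr hR.le key]
  exact int_sum hR Q.roots hroot_mod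

open Polynomial Metric Complex

lemma rouche {R : ℝ} (hR : 0 < R) (f g : Polynomial ℂ)
    (hlt : ∀ z ∈ sphere (0:ℂ) R, ‖g.eval z‖ < ‖f.eval z‖) :
    ((f + g).roots.filter fun z => ‖z‖ < R).card
      = (f.roots.filter fun z => ‖z‖ < R).card := by
  set F : ℝ → Polynomial ℂ := fun t => f + C (t:ℂ) * g with hF
  have hFnz : ∀ t : ℝ, t ∈ Set.Icc (0:ℝ) 1 → ∀ z ∈ sphere (0:ℂ) R, (F t).eval z ≠ 0 := by
    intro t ht z hz h0
    simp only [hF, eval_add, eval_mul, eval_C] at h0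
    have h1 : f.eval z = -(t : ℂ) * g.eval z := by linear_combination h0
    have h2 : ‖f.eval z‖ = |t| * ‖g.eval z‖ := by
      rw [h1, norm_mul]
      congr 1
      rw [show (-(t:ℂ)) = ((-t : ℝ) : ℂ) by push_cast; ring, Complex.norm_real, Real.norm_eq_abs, abs_neg]
    have h3 : |t| ≤ 1 := abs_le.2 ⟨by linarith [ht.1], ht.2⟩
    have h4 := hlt z hz
    nlinarith [norm_nonneg (g.eval z)]
  have hRz : (R : ℂ) ∈ sphere (0:ℂ) R := by
    simp [mem_sphere_zero_iff_norm, Complex.norm_real, abs_of_pos hR]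
  have hFne : ∀ t : ℝ, t ∈ Set.Icc (0:ℝ) 1 → F t ≠ 0 := by
    intro t ht h0
    exact hFnz t ht (R:ℂ) hRz (by rw [h0]; simp)
  set ψ : ℝ → ℂ := fun t =>
    ∮ z in C(0, R), (Polynomial.derivative (F t)).eval z / (F t).eval z with hψdef
  have hψ : ∀ t ∈ Set.Icc (0:ℝ) 1,
      ψ t = 2 * Real.pi * Complex.I * (((F t).roots.filter fun z => ‖z‖ < R).card) :=
    fun t ht => arg_principle hR (F t) (hFne t ht) (hFnz t ht)
  -- continuity
  have hcont : ContinuousOn ψ (Set.Icc (0:ℝ) 1) := by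
    rw [continuousOn_iff_continuous_restrict]
    have : (Set.Icc (0:ℝ) 1).domRestrict ψ = fun t : (Set.Icc (0:ℝ) 1) =>
        ∫ θ in (0:ℝ)..(2 * Real.pi), deriv (circleMap 0 R) θ •
          ((Polynomial.derivative (F (t:ℝ))).eval (circleMap 0 R θ) /
            (F (t:ℝ)).eval (circleMap 0 R θ)) := rfl
    rw [this]
    apply intervalIntegral.continuous_parametric_intervalIntegral_of_continuous'
    have hcm : Continuous fun p : (Set.Icc (0:ℝ) 1) × ℝ => circleMap 0 R p.2 :=
      (continuous_circleMap 0 R).comp continuous_snd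
    have hct : Continuous fun p : (Set.Icc (0:ℝ) 1) × ℝ => ((p.1 : ℝ) : ℂ) :=
      Complex.continuous_ofReal.comp (continuous_subtype_val.comp continuous_fst)
    have hnum : Continuous fun p : (Set.Icc (0:ℝ) 1) × ℝ =>
        (Polynomial.derivative (F (p.1:ℝ))).eval (circleMap 0 R p.2) := by
      have : ∀ p : (Set.Icc (0:ℝ) 1) × ℝ,
          (Polynomial.derivative (F (p.1:ℝ))).eval (circleMap 0 R p.2)
          = (Polynomial.derivative f).eval (circleMap 0 R p.2)
            + ((p.1:ℝ):ℂ) * (Polynomial.derivative g).eval (circleMap 0 R p.2) := by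
        intro p
        simp [hF, derivative_add, derivative_C_mul, eval_add, eval_mul, eval_C]
      rw [funext this]
      fun_prop
    have hden : Continuous fun p : (Set.Icc (0:ℝ) 1) × ℝ =>
        (F (p.1:ℝ)).eval (circleMap 0 R p.2) := by
      have : ∀ p : (Set.Icc (0:ℝ) 1) × ℝ,
          (F (p.1:ℝ)).eval (circleMap 0 R p.2)
          = f.eval (circleMap 0 R p.2) + ((p.1:ℝ):ℂ) * g.eval (circleMap 0 R p.2) := by
        intro p; simp [hF]
      rw [funext this]
      fun_prop
    have hden_ne : ∀ p : (Set.Icc (0:ℝ) 1) × ℝ, (F (p.1:ℝ)).eval (circleMap 0 R p.2) ≠ 0 :=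
      fun p => hFnz (p.1:ℝ) p.1.2 _ (circleMap_mem_sphere 0 hR.le p.2)
    have hderiv : Continuous fun p : (Set.Icc (0:ℝ) 1) × ℝ => deriv (circleMap 0 R) p.2 := by
      have : (fun p : (Set.Icc (0:ℝ) 1) × ℝ => deriv (circleMap 0 R) p.2)
          = fun p => circleMap 0 R p.2 * Complex.I := by
        funext p; rw [deriv_circleMap]
      rw [this]
      fun_prop
    exact Continuous.smul hderiv (hnum.div hden hden_ne)
  -- the ℝ-valued count function
  set χ : ℝ → ℝ := fun t => (ψ t * (2 * Real.pi * Complex.I)⁻¹).re with hχdef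
  have h2πI : (2 * (Real.pi:ℂ) * Complex.I) ≠ 0 := by
    simp [Real.pi_ne_zero, Complex.I_ne_zero, Complex.ofReal_ne_zero]
  have hχ : ∀ t ∈ Set.Icc (0:ℝ) 1,
      χ t = (((F t).roots.filter fun z => ‖z‖ < R).card : ℝ) := by
    intro t ht
    rw [hχdef]
    simp only [hψ t ht]
    rw [mul_comm (2 * (Real.pi:ℂ) * Complex.I), mul_assoc, mul_inv_cancel₀ h2πI, mul_one]
    simp
  have hχcont : ContinuousOn χ (Set.Icc (0:ℝ) 1) :=
    (Complex.continuous_re.comp_continuousOn (hcont.mul continuousOn_const))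
  -- integer values + IVT ⇒ endpoints equal
  set A := ((F 0).roots.filter fun z => ‖z‖ < R).card with hA
  set B := ((F 1).roots.filter fun z => ‖z‖ < R).card with hB
  have hAB : A = B := by
    by_contra hne
    have h01 : (0:ℝ) ≤ 1 := by norm_num
    have hχ0 : χ 0 = A := hχ 0 (by constructor <;> norm_num)
    have hχ1 : χ 1 = B := hχ 1 (by constructor <;> norm_num)
    rcases lt_or_gt_of_ne hne with h | h
    · have hsub := intermediate_value_Icc h01 hχcont
      have hy : (A:ℝ) + 1/2 ∈ Set.Icc (χ 0) (χ 1) := by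
        rw [hχ0, hχ1]
        constructor
        · linarith
        · have : (A:ℝ) + 1 ≤ B := by exact_mod_cast Nat.succ_le_of_lt h
          linarith
      obtain ⟨t, ht, hχt⟩ := hsub hy
      have := hχ t ht
      rw [this] at hχt
      set c := ((F t).roots.filter fun z => ‖z‖ < R).card
      have : (2*c : ℝ) = 2*A + 1 := by push_cast; linarith
      have : 2*c = 2*A + 1 := by exact_mod_cast this
      omega
    · have hsub := intermediate_value_Icc' h01 hχcont
      have hy : (B:ℝ) + 1/2 ∈ Set.Icc (χ 1) (χ 0) := by
        rw [hχ0, hχ1]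
        constructor
        · linarith
        · have : (B:ℝ) + 1 ≤ A := by exact_mod_cast Nat.succ_le_of_lt h
          linarith
      obtain ⟨t, ht, hχt⟩ := hsub hy
      have := hχ t ht
      rw [this] at hχt
      set c := ((F t).roots.filter fun z => ‖z‖ < R).card
      have : (2*c : ℝ) = 2*B + 1 := by push_cast; linarith
      have : 2*c = 2*B + 1 := by exact_mod_cast this
      omega
  have hF0 : F 0 = f := by simp [hF]
  have hF1 : F 1 = f + g := by simp [hF]
  rw [hA, hF0] at hAB
  rw [hB, hF1] at hAB
  exact hAB.symm

end NVCA

section NVCount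
open Polynomial
open Polynomial

-- counting assembly
lemma CKey {N : ℕ} (hN2 : 2 ≤ N) (P : Polynomial ℂ) (Rad : ℕ → ℝ)
    (hmono : ∀ i, i + 1 < N → Rad i < Rad (i+1))
    (hne : ∀ i, i < N → ∀ z ∈ P.roots, ‖z‖ ≠ Rad i)
    (hcount : ∀ i, i < N → (P.roots.filter fun z => ‖z‖ < Rad i).card = i)
    (hcard : Multiset.card P.roots = N) :
    ∀ z ∈ P.roots, (P.roots.filter fun w => ‖w‖ = ‖z‖).card ≤ 1 := by
  intro z hz
  set a := ‖z‖ with ha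
  -- helper: card of filter of conjunction annulus
  by_cases hout : Rad (N-1) < a
  · -- outer region
    have h1 : (P.roots.filter fun w => ¬ (‖w‖ < Rad (N-1))).card = 1 := by
      have hsplit := Multiset.filter_add_not (fun w => ‖w‖ < Rad (N-1)) P.roots
      have hcards := congrArg Multiset.card hsplit
      rw [Multiset.card_add, hcard, hcount (N-1) (by omega)] at hcards
      omega
    calc (P.roots.filter fun w => ‖w‖ = a).card
        ≤ (P.roots.filter fun w => ¬ (‖w‖ < Rad (N-1))).card := by
          apply Multiset.card_le_card
          apply Multiset.monotone_filter_right
          intro w hw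
          rw [hw]; exact not_lt.2 hout.le
      _ = 1 := h1
  · have hlt : a < Rad (N-1) := by
      rcases lt_or_gt_of_ne (hne (N-1) (by omega) z hz) with h | h
      · exact h
      · exact absurd h hout
    have hex : ∃ j, j < N ∧ a < Rad j := ⟨N-1, by omega, hlt⟩
    classical
    set j := Nat.find hex with hj
    obtain ⟨hjN, hja⟩ := Nat.find_spec hex
    have hj0 : j ≠ 0 := by
      intro h0
      have hza : a < Rad 0 := by rw [← h0]; exact hja
      have : z ∈ P.roots.filter fun w => ‖w‖ < Rad 0 :=
        Multiset.mem_filter.2 ⟨hz, hza⟩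
      have hc0 := hcount 0 (by omega)
      rw [Multiset.card_eq_zero] at hc0
      rw [hc0] at this
      exact absurd this (Multiset.notMem_zero z)
    have hjm : ¬ (j - 1 < N ∧ a < Rad (j-1)) := Nat.find_min hex (by omega)
    have hglt : Rad (j-1) < a := by
      rcases lt_or_gt_of_ne (hne (j-1) (by omega) z hz) with h | h
      · exact absurd ⟨by omega, h⟩ hjm
      · exact h
    -- annulus count
    have hsplit := Multiset.filter_add_filter (fun w => ‖w‖ < Rad (j-1))
      (fun w => Rad (j-1) < ‖w‖ ∧ ‖w‖ < Rad j) P.roots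
    have hor : (P.roots.filter fun w => (‖w‖ < Rad (j-1)) ∨
        (Rad (j-1) < ‖w‖ ∧ ‖w‖ < Rad j))
        = P.roots.filter fun w => ‖w‖ < Rad j := by
      apply Multiset.filter_congr
      intro w hw
      have hwne : ‖w‖ ≠ Rad (j-1) := hne (j-1) (by omega) w hw
      constructor
      · rintro (h | h)
        · have : Rad (j-1) < Rad j := by
            have := hmono (j-1) (by omega)
            rwa [show j - 1 + 1 = j by omega] at this
          linarith
        · exact h.2
      · intro h
        rcases lt_or_gt_of_ne hwne with h1 | h1
        · exact Or.inl h1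
        · exact Or.inr ⟨h1, h⟩
    have hand : (P.roots.filter fun w => (‖w‖ < Rad (j-1)) ∧
        (Rad (j-1) < ‖w‖ ∧ ‖w‖ < Rad j)) = 0 := by
      rw [Multiset.filter_eq_nil]
      intro w _ hw
      linarith [hw.1, hw.2.1]
    have hcards := congrArg Multiset.card hsplit
    rw [hor, hand, Multiset.card_add, Multiset.card_add, Multiset.card_zero,
      hcount j hjN, hcount (j-1) (by omega)] at hcards
    have hann : (P.roots.filter fun w =>
        Rad (j-1) < ‖w‖ ∧ ‖w‖ < Rad j).card = 1 := by omega
    calc (P.roots.filter fun w => ‖w‖ = a).card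
        ≤ (P.roots.filter fun w =>
            Rad (j-1) < ‖w‖ ∧ ‖w‖ < Rad j).card := by
          apply Multiset.card_le_card
          apply Multiset.monotone_filter_right
          intro w hw
          rw [hw]
          exact ⟨hglt, hja⟩
      _ = 1 := hann

end NVCount

open Polynomial Finset Metric
open Polynomial Finset Metric


/-- If `P` is a complex polynomial of degree `2n` with nonzero coefficients and
`|q_k(P)| > b_{2n}` for all `k = 2, …, 2n`, then all zeros of `P` are simple and
the moduli of the zeros are pairwise different. -/
theorem stmt_3 (n : ℕ) (hn : 0 < n) (b : ℝ)
    (hb : 1 < b ∧ 1 - 2 * ∑ k ∈ Finset.Icc 1 n, b ^ (-(k : ℝ) ^ 2 / 2) = 0)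
    (P : Polynomial ℂ) (hdeg : P.natDegree = 2 * n)
    (hcoeff : ∀ k, k ≤ 2 * n → P.coeff k ≠ 0)
    (hq : ∀ k, 2 ≤ k → k ≤ 2 * n →
      b < ‖(P.coeff (k - 1)) ^ 2 / (P.coeff (k - 2) * P.coeff k)‖) :
    (∀ z : ℂ, P.IsRoot z → P.rootMultiplicity z = 1) ∧
    (∀ z w : ℂ, P.IsRoot z → P.IsRoot w → z ≠ w →
      ‖z‖ ≠ ‖w‖) := by
  obtain ⟨hb1, hbeq⟩ := hb
  set N := 2 * n with hN
  have hN2 : 2 ≤ N := by omega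
  set A : ℕ → ℝ := fun j => ‖P.coeff j‖ with hA_def
  have hA : ∀ j, j ≤ N → 0 < A j := fun j hj => norm_pos_iff.2 (hcoeff j hj)
  have hPne : P ≠ 0 := fun h => hcoeff 0 (by omega) (by rw [h]; simp)
  have hq2 : ∀ j, j + 2 ≤ N → b * (A j * A (j + 2)) < A (j + 1) ^ 2 := by
    intro j hj
    have h := hq (j+2) (by omega) hj
    have h1 : j + 2 - 1 = j + 1 := by omega
    have h2 : j + 2 - 2 = j := by omega
    rw [h1, h2, norm_div, norm_pow, norm_mul] at h
    have hpos : 0 < A j * A (j+2) :=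
      mul_pos (hA j (by omega)) (hA (j+2) (by omega))
    rw [lt_div_iff₀ hpos] at h
    calc b * (A j * A (j+2)) < ‖P.coeff (j+1)‖ ^ 2 := by linarith
      _ = A (j+1) ^ 2 := rfl
  have hsum : 2 * ∑ d ∈ range n, bet b (d+1) = 1 := by
    have h1 : ∑ k ∈ Finset.Icc 1 n, b ^ (-(k : ℝ) ^ 2 / 2)
        = ∑ d ∈ range n, bet b (d+1) := by
      rw [← Finset.Ico_add_one_right_eq_Icc, Finset.sum_Ico_eq_sum_range]
      refine Finset.sum_congr (by norm_num) ?_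
      intro d _
      rw [bet]
      congr 1
      push_cast
      ring
    rw [← h1]
    linarith
  -- the radii
  have hRpos : ∀ i, i + 1 ≤ N → 0 < rr b A i := fun i hi => rr_pos hb1 hA hi
  have hmono : ∀ i, i + 1 < N → rr b A i < rr b A (i+1) := by
    intro i hi
    have hsb : (0:ℝ) < b ^ ((1:ℝ)/2) := Real.rpow_pos_of_pos (by linarith) _
    have hA1 := hA (i+1) (by omega)
    have hA2 := hA (i+2) (by omega)
    have hA0 := hA i (by omega)
    rw [rr, rr, div_lt_div_iff₀ (mul_pos hA1 hsb) (mul_pos hA2 hsb)]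
    have hq' := hq2 i (by omega)
    have h1 : A i * A (i+2) < A (i+1)^2 := by nlinarith
    calc A i * (A (i+2) * b ^ ((1:ℝ)/2)) = (A i * A (i+2)) * b ^ ((1:ℝ)/2) := by ring
      _ < A (i+1)^2 * b ^ ((1:ℝ)/2) := mul_lt_mul_of_pos_right h1 hsb
      _ = A (i+1) * (A (i+1) * b ^ ((1:ℝ)/2)) := by ring
  -- key sphere estimate
  have hsphere : ∀ i, i + 1 ≤ N → ∀ z : ℂ, ‖z‖ = rr b A i →
      ‖(P - C (P.coeff i) * X ^ i).eval z‖
        < ‖(C (P.coeff i) * X ^ i).eval z‖ := by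
    intro i hi z hz
    have hfe : ‖(C (P.coeff i) * X ^ i).eval z‖ = mm b A i i := by
      rw [eval_mul, eval_C, eval_pow, eval_X, norm_mul, norm_pow, hz, mm]
    have hev : P.eval z = ∑ j ∈ range (N+1), P.coeff j * z ^ j := by
      exact eval_eq_sum_range' (by rw [hdeg]; omega) z
    have hge : (P - C (P.coeff i) * X ^ i).eval z
        = ∑ j ∈ (range (N+1)).erase i, P.coeff j * z ^ j := by
      rw [eval_sub, eval_mul, eval_C, eval_pow, eval_X, hev]
      have h5 := Finset.sum_erase_add (range (N+1)) (fun j => P.coeff j * z ^ j)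
        (Finset.mem_range.2 (show i < N + 1 by omega))
      linear_combination -h5
    rw [hge, hfe]
    calc ‖∑ j ∈ (range (N+1)).erase i, P.coeff j * z ^ j‖
        ≤ ∑ j ∈ (range (N+1)).erase i, ‖P.coeff j * z ^ j‖ := by
          exact norm_sum_le _ _
      _ = ∑ j ∈ (range (N+1)).erase i, mm b A i j := by
          apply Finset.sum_congr rfl
          intro j _
          rw [norm_mul, norm_pow, hz, mm]
      _ < mm b A i i := domination hb1 hA hq2 hN hn hsum hi
  -- no roots on the circles
  have hne : ∀ i, i < N → ∀ z ∈ P.roots, ‖z‖ ≠ rr b A i := by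
    intro i hi z hz habs
    have hroot : P.eval z = 0 := (Polynomial.isRoot_of_mem_roots hz)
    have h := hsphere i (by omega) z habs
    have hgz : (P - C (P.coeff i) * X ^ i).eval z = - (C (P.coeff i) * X ^ i).eval z := by
      rw [eval_sub, hroot]; ring
    rw [hgz, norm_neg] at h
    exact lt_irrefl _ h
  -- counts
  have hcount : ∀ i, i < N → (P.roots.filter fun z => ‖z‖ < rr b A i).card = i := by
    intro i hi
    have hR := hRpos i (by omega)
    have hlt : ∀ z ∈ sphere (0:ℂ) (rr b A i),
        ‖(P - C (P.coeff i) * X ^ i).eval z‖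
          < ‖(C (P.coeff i) * X ^ i).eval z‖ := by
      intro z hzs
      apply hsphere i (by omega)
      rw [mem_sphere_zero_iff_norm] at hzs
      rw [← hzs]
    have hr := rouche hR (C (P.coeff i) * X ^ i) (P - C (P.coeff i) * X ^ i) hlt
    rw [add_sub_cancel] at hr
    rw [hr]
    have hroots : (C (P.coeff i) * X ^ i).roots = i • ({0} : Multiset ℂ) := by
      rw [Polynomial.roots_C_mul _ (hcoeff i (by omega)), Polynomial.roots_pow,
        Polynomial.roots_X]
    rw [hroots]
    have : Multiset.filter (fun z => ‖z‖ < rr b A i) (i • ({0} : Multiset ℂ))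
        = i • ({0} : Multiset ℂ) := by
      rw [Multiset.filter_eq_self]
      intro z hzm
      have : z = 0 := by
        have := Multiset.mem_of_mem_nsmul hzm
        simpa using this
      rw [this]
      simpa using hR
    rw [this]
    simp
  have hcard : Multiset.card P.roots = N := by
    rw [← hdeg]
    exact Polynomial.splits_iff_card_roots.1 (IsAlgClosed.splits P)
  have key := CKey hN2 P (rr b A) hmono hne hcount hcard
  constructor
  · intro z hz
    have hzr : z ∈ P.roots := by exact (Polynomial.mem_roots hPne).2 hz
    have hk := key z hzr
    have h1 : P.rootMultiplicity z = P.roots.count z := (Polynomial.count_roots P).symm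
    have h2 : P.roots.count z
        = (P.roots.filter fun w => z = w).card := Multiset.count_eq_card_filter_eq _ _
    have h3 : (P.roots.filter fun w => z = w).card
        ≤ (P.roots.filter fun w => ‖w‖ = ‖z‖).card := by
      apply Multiset.card_le_card
      apply Multiset.monotone_filter_right
      intro w hw
      rw [← hw]
    have h4 : 1 ≤ P.roots.count z := Multiset.one_le_count_iff_mem.2 hzr
    omega
  · intro z w hz hw hzw habs
    have hzr : z ∈ P.roots := by exact (Polynomial.mem_roots hPne).2 hz
    have hwr : w ∈ P.roots := by exact (Polynomial.mem_roots hPne).2 hw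
    have hk := key z hzr
    have hsub : ({z, w} : Multiset ℂ) ≤ P.roots.filter fun v => ‖v‖ = ‖z‖ := by
      rw [Multiset.le_iff_count]
      intro a
      rw [Multiset.count_filter]
      by_cases haz : a = z
      · subst haz
        simp only [if_pos rfl]
        have h1 : Multiset.count a ({a, w} : Multiset ℂ) = 1 := by
          rw [Multiset.insert_eq_cons, Multiset.count_cons_self,
            Multiset.count_singleton, if_neg hzw]
        rw [h1]
        exact Multiset.one_le_count_iff_mem.2 hzr
      · by_cases haw : a = w
        · subst haw
          rw [if_pos habs.symm]
          have h1 : Multiset.count a ({z, a} : Multiset ℂ) = 1 := by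
            rw [Multiset.insert_eq_cons, Multiset.count_cons_of_ne (fun h => hzw h.symm),
              Multiset.count_singleton, if_pos rfl]
          rw [h1]
          exact Multiset.one_le_count_iff_mem.2 hwr
        · have h1 : Multiset.count a ({z, w} : Multiset ℂ) = 0 := by
            rw [Multiset.insert_eq_cons, Multiset.count_cons_of_ne haz,
              Multiset.count_singleton, if_neg haw]
          rw [h1]
          omega
    have hcard2 := Multiset.card_le_card hsub
    simp only [Multiset.insert_eq_cons, Multiset.card_cons, Multiset.card_singleton] at hcard2
    omega
end

section
/- Let n ≥ 2 be an integer and let P(z) = ∑_{k=0}^{n} a_k z^k be a complex polynomial of degree n with a_k ∈ ℂ \ {0} for all k. If |q_k(P)| ≥ b_∞ for all k = 2, 3, …, n, then all zeros of P are simple; moreover, the moduli of the zeros of P are pairwise different. -/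
open Polynomial Metric intervalIntegral Complex



lemma eval_msprod_ne_zero {R : ℝ} (s : Multiset ℂ) (hs : ∀ w ∈ s, ‖w‖ ≠ R)
    {z : ℂ} (hz : ‖z‖ = R) :
    eval z (s.map (fun w => X - C w)).prod ≠ 0 := by
  rw [eval_multiset_prod, Multiset.map_map]
  apply Multiset.prod_ne_zero
  intro hmem
  obtain ⟨w, hw, hwz⟩ := Multiset.mem_map.mp hmem
  simp only [Function.comp_apply, eval_sub, eval_X, eval_C] at hwz
  have : z = w := by linear_combination hwz
  exact hs w hw (by rw [← this, hz])

lemma circleIntegral.integral_add' {f g : ℂ → ℂ} {c : ℂ} {R : ℝ} (hf : CircleIntegrable f c R)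
    (hg : CircleIntegrable g c R) :
    (∮ z in C(c, R), f z + g z) = (∮ z in C(c, R), f z) + ∮ z in C(c, R), g z := by
  simp only [circleIntegral, smul_add, intervalIntegral.integral_add hf.out hg.out]

lemma circleIntegral_logDeriv_prod (R : ℝ) (hR : 0 < R) (s : Multiset ℂ)
    (hs : ∀ w ∈ s, ‖w‖ ≠ R) :
    (∮ z in C(0, R), eval z (derivative (s.map (fun w => X - C w)).prod) /
        eval z ((s.map (fun w => X - C w)).prod))
      = 2 * Real.pi * Complex.I * (s.filter (fun w => ‖w‖ < R)).card := by
  induction s using Multiset.induction_on with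
  | empty =>
      simp [circleIntegral]
  | cons a s ih =>
      have hs' : ∀ w ∈ s, ‖w‖ ≠ R := fun w hw => hs w (Multiset.mem_cons_of_mem hw)
      have ha : ‖a‖ ≠ R := hs a (Multiset.mem_cons_self a s)
      set q : Polynomial ℂ := (s.map (fun w => X - C w)).prod with hq
      have hqz : ∀ z : ℂ, ‖z‖ = R → eval z q ≠ 0 := fun z hz =>
        eval_msprod_ne_zero s hs' hz
      have hmap : ((a ::ₘ s).map (fun w => X - C w)).prod = (X - C a) * q := by
        rw [Multiset.map_cons, Multiset.prod_cons]
      rw [hmap]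
      have hcongr : ∀ z ∈ sphere (0:ℂ) R,
          eval z (derivative ((X - C a) * q)) / eval z ((X - C a) * q)
            = (z - a)⁻¹ + eval z (derivative q) / eval z q := by
        intro z hz
        have hzR : ‖z‖ = R := by
          simpa using (mem_sphere_zero_iff_norm.mp hz)
        have h1 : z - a ≠ 0 := by
          intro h
          exact ha (by rw [show a = z by linear_combination -h, hzR])
        have h2 : eval z q ≠ 0 := hqz z hzR
        rw [derivative_mul]
        simp only [derivative_sub, derivative_X, derivative_C, sub_zero, one_mul,
          eval_add, eval_mul, eval_sub, eval_X, eval_C]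
        field_simp
      rw [circleIntegral.integral_congr hR.le hcongr]
      have hint1 : CircleIntegrable (fun z : ℂ => (z - a)⁻¹) 0 R := by
        apply ContinuousOn.circleIntegrable hR.le
        apply ContinuousOn.inv₀ (by fun_prop)
        intro z hz
        have hzR : ‖z‖ = R := by
          simpa using (mem_sphere_zero_iff_norm.mp hz)
        intro h
        exact ha (by rw [show a = z by linear_combination -h, hzR])
      have hint2 : CircleIntegrable (fun z : ℂ => eval z (derivative q) / eval z q) 0 R := by
        apply ContinuousOn.circleIntegrable hR.le
        apply ContinuousOn.div (by fun_prop) (by fun_prop)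
        intro z hz
        exact hqz z (by simpa using (mem_sphere_zero_iff_norm.mp hz))
      rw [circleIntegral.integral_add' hint1 hint2, ih hs']
      have hfirst : (∮ z in C(0, R), (z - a)⁻¹)
          = if ‖a‖ < R then 2 * Real.pi * Complex.I else 0 := by
        split_ifs with h
        · exact circleIntegral.integral_sub_inv_of_mem_ball (by simpa using h)
        · have haR : R < ‖a‖ := lt_of_le_of_ne (not_lt.mp h) (Ne.symm ha)
          apply Complex.circleIntegral_eq_zero_of_differentiable_on_off_countable hR.le
            Set.countable_empty
          · apply ContinuousOn.inv₀ (by fun_prop)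
            intro z hz
            intro hza
            have : ‖z‖ ≤ R := by
              simpa using (mem_closedBall_zero_iff.mp hz)
            rw [show a = z by linear_combination -hza] at haR
            linarith
          · intro z hz
            apply DifferentiableAt.inv (by fun_prop)
            intro hza
            have : ‖z‖ < R := by
              simpa using (mem_ball_zero_iff.mp hz.1)
            rw [show a = z by linear_combination -hza] at haR
            linarith
      rw [hfirst]
      by_cases h : ‖a‖ < R
      · rw [Multiset.filter_cons_of_pos _ (by simpa using h)]
        simp only [h, if_true, Multiset.card_cons]
        push_cast
        ring
      · rw [Multiset.filter_cons_of_neg _ (by simpa using h)]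
        simp only [h, if_false]
        ring


lemma quot_alg0 (c d p q w A : ℂ) (hw : w ≠ 0) (hp : p ≠ 0) (hA : A ≠ 0) :
    (d • ((q * A - p * (c * A / w)) / A ^ 2)) / (p / A) = d * (q / p - c / w) := by
  rw [smul_eq_mul]
  field_simp

lemma quot_alg (k : ℕ) (a d p q w : ℂ) (hw : w ≠ 0) (hp : p ≠ 0) (ha : a ≠ 0) :
    (d • ((q * (a * w ^ k) - p * (a * ((k : ℂ) * w ^ (k - 1)))) / (a * w ^ k) ^ 2)) /
      (p / (a * w ^ k)) = d * (q / p - k / w) := by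
  have hpow : w * ((k : ℂ) * w ^ (k - 1)) = k * w ^ k := by
    cases k with
    | zero => simp
    | succ m => push_cast; rw [pow_succ]; ring
  have hkw : a * ((k : ℂ) * w ^ (k - 1)) = (k : ℂ) * (a * w ^ k) / w := by
    rw [eq_div_iff hw]; linear_combination a * hpow
  rw [hkw]
  exact quot_alg0 _ _ _ _ _ _ hw hp (mul_ne_zero ha (pow_ne_zero _ hw))


lemma circleIntegral_logDeriv_eq_k (P : Polynomial ℂ) (R : ℝ) (hR : 0 < R) (k : ℕ)
    (hk : P.coeff k ≠ 0)
    (hdom : ∀ z : ℂ, ‖z‖ = R →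
      ‖P.eval z - P.coeff k * z ^ k‖ < ‖P.coeff k * z ^ k‖) :
    (∮ z in C(0, R), eval z (derivative P) / eval z P) = 2 * Real.pi * Complex.I * k := by
  set a := P.coeff k with ha
  have habs : ∀ θ : ℝ, ‖circleMap 0 R θ‖ = R := by
    intro θ; rw [norm_circleMap_zero, abs_of_pos hR]
  have hz0 : ∀ z : ℂ, ‖z‖ = R → z ≠ 0 := by
    intro z hz h
    rw [h, norm_zero] at hz
    exact hR.ne hz
  have hPz : ∀ z : ℂ, ‖z‖ = R → eval z P ≠ 0 := by
    intro z hz h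
    have := hdom z hz
    rw [h, zero_sub, norm_neg] at this
    exact lt_irrefl _ this
  have hden : ∀ z : ℂ, ‖z‖ = R → a * z ^ k ≠ 0 :=
    fun z hz => mul_ne_zero hk (pow_ne_zero _ (hz0 z hz))
  set u : ℂ → ℂ := fun z => eval z P / (a * z ^ k) with hu
  have hu1 : ∀ z : ℂ, ‖z‖ = R → ‖u z - 1‖ < 1 := by
    intro z hz
    have h1 : u z - 1 = (eval z P - a * z ^ k) / (a * z ^ k) := by
      show eval z P / (a * z ^ k) - 1 = _
      rw [div_sub_one (hden z hz)]
    rw [h1, norm_div, div_lt_one (norm_pos_iff.mpr (hden z hz))]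
    exact hdom z hz
  have hslit : ∀ z : ℂ, ‖z‖ = R → u z ∈ Complex.slitPlane := by
    intro z hz
    rw [Complex.mem_slitPlane_iff]
    left
    have h1 := hu1 z hz
    have h2 : |(u z - 1).re| ≤ ‖u z - 1‖ := Complex.abs_re_le_norm _
    have h3 : (u z - 1).re = (u z).re - 1 := by simp
    rw [h3] at h2
    have h4 := abs_le.mp h2
    linarith [h4.1]
  have hF : ∀ θ : ℝ, HasDerivAt (fun t => Complex.log (u (circleMap 0 R t)))
      (deriv (circleMap 0 R) θ *
        (eval (circleMap 0 R θ) (derivative P) / eval (circleMap 0 R θ) P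
          - k / circleMap 0 R θ)) θ := by
    intro θ
    set z := circleMap 0 R θ with hzdef
    have hzR : ‖z‖ = R := habs θ
    have hne := hPz z hzR
    have hz0' := hz0 z hzR
    have hg : HasDerivAt (fun w : ℂ => a * w ^ k) (a * ((k : ℂ) * z ^ (k - 1))) z :=
      (hasDerivAt_pow k z).const_mul a
    have hf : HasDerivAt (fun w : ℂ => eval w P) (eval z (derivative P)) z := P.hasDerivAt z
    have hudz : HasDerivAt u ((eval z (derivative P) * (a * z ^ k)
        - eval z P * (a * ((k : ℂ) * z ^ (k - 1)))) / (a * z ^ k) ^ 2) z :=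
      hf.div hg (hden z hzR)
    have hγ : HasDerivAt (circleMap 0 R) (deriv (circleMap 0 R) θ) θ := by
      rw [deriv_circleMap]; exact hasDerivAt_circleMap 0 R θ
    have hcomp : HasDerivAt (fun t => u (circleMap 0 R t))
        (deriv (circleMap 0 R) θ • ((eval z (derivative P) * (a * z ^ k)
        - eval z P * (a * ((k : ℂ) * z ^ (k - 1)))) / (a * z ^ k) ^ 2)) θ :=
      by have := hudz.scomp θ hγ; exact this
    have hlog := hcomp.clog_real (hslit z hzR)
    convert hlog using 1
    rw [← hzdef]
    exact (quot_alg k a (deriv (circleMap 0 R) θ) (eval z P) (eval z (derivative P)) z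
      hz0' hne hk).symm
  have hcont : Continuous (fun θ : ℝ => deriv (circleMap 0 R) θ *
      (eval (circleMap 0 R θ) (derivative P) / eval (circleMap 0 R θ) P
        - k / circleMap 0 R θ)) := by
    have hγc : Continuous (circleMap 0 R) := continuous_circleMap 0 R
    apply Continuous.mul
    · have hd : (fun θ : ℝ => deriv (circleMap 0 R) θ)
          = fun θ : ℝ => circleMap 0 R θ * Complex.I := funext (deriv_circleMap 0 R)
      show Continuous (fun θ : ℝ => deriv (circleMap 0 R) θ)
      rw [hd]
      fun_prop
    · apply Continuous.sub
      · exact Continuous.div (by fun_prop) (by fun_prop) (fun θ => hPz _ (habs θ))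
      · exact Continuous.div continuous_const hγc (fun θ => hz0 _ (habs θ))
  have hper : circleMap 0 R (2 * Real.pi) = circleMap 0 R 0 := by
    simpa using periodic_circleMap 0 R 0
  have key : (∫ θ in (0:ℝ)..(2 * Real.pi), deriv (circleMap 0 R) θ *
      (eval (circleMap 0 R θ) (derivative P) / eval (circleMap 0 R θ) P
        - k / circleMap 0 R θ)) = 0 := by
    rw [intervalIntegral.integral_eq_sub_of_hasDerivAt (fun θ _ => hF θ)
      (hcont.intervalIntegrable 0 (2 * Real.pi))]
    rw [hper, sub_self]
  have hint1 : CircleIntegrable (fun z : ℂ => eval z (derivative P) / eval z P) 0 R := by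
    apply ContinuousOn.circleIntegrable hR.le
    apply ContinuousOn.div (by fun_prop) (by fun_prop)
    intro z hz
    exact hPz z (by simpa using mem_sphere_zero_iff_norm.mp hz)
  have hint2 : CircleIntegrable (fun z : ℂ => (k : ℂ) / z) 0 R := by
    apply ContinuousOn.circleIntegrable hR.le
    apply ContinuousOn.div continuousOn_const (by fun_prop)
    intro z hz
    exact hz0 z (by simpa using mem_sphere_zero_iff_norm.mp hz)
  have hzero : (∮ z in C(0, R), (eval z (derivative P) / eval z P - (k : ℂ) / z)) = 0 := by
    rw [circleIntegral]
    simpa only [smul_eq_mul, mul_sub] using key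
  have hsplit := circleIntegral.integral_sub hint1 hint2
  have hsecond : (∮ z in C(0, R), (k : ℂ) / z) = 2 * Real.pi * Complex.I * k := by
    have h0 : (0 : ℂ) ∈ ball (0 : ℂ) R := by simpa using hR
    have hi := circleIntegral.integral_sub_inv_of_mem_ball h0
    have hrw : (∮ z in C(0, R), (k : ℂ) / z) = (k : ℂ) • ∮ z in C(0, R), (z - 0)⁻¹ := by
      rw [← circleIntegral.integral_smul]
      apply circleIntegral.integral_congr hR.le
      intro z hz
      simp [div_eq_mul_inv, smul_eq_mul]
    rw [hrw, hi, smul_eq_mul]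
    ring
  have := hzero
  rw [hsplit, sub_eq_zero] at this
  rw [this, hsecond]

lemma count_roots_in_ball (P : Polynomial ℂ) (hP0 : P ≠ 0) (R : ℝ) (hR : 0 < R) (k : ℕ)
    (hk : P.coeff k ≠ 0)
    (hdom : ∀ z : ℂ, ‖z‖ = R →
      ‖P.eval z - P.coeff k * z ^ k‖ < ‖P.coeff k * z ^ k‖) :
    (P.roots.filter (fun z => ‖z‖ < R)).card = k := by
  have hPz : ∀ z : ℂ, ‖z‖ = R → eval z P ≠ 0 := by
    intro z hz h
    have := hdom z hz
    rw [h, zero_sub, norm_neg] at this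
    exact lt_irrefl _ this
  have hs : ∀ w ∈ P.roots, ‖w‖ ≠ R := by
    intro w hw hwR
    exact hPz w hwR ((mem_roots hP0).mp hw)
  have hcard : P.roots.card = P.natDegree :=
    splits_iff_card_roots.mp (IsAlgClosed.splits P)
  have hfact : C P.leadingCoeff * (P.roots.map (fun w => X - C w)).prod = P :=
    C_leadingCoeff_mul_prod_multiset_X_sub_C hcard
  have hlc : P.leadingCoeff ≠ 0 := leadingCoeff_ne_zero.mpr hP0
  have heq : (∮ z in C(0, R), eval z (derivative P) / eval z P)
      = ∮ z in C(0, R), eval z (derivative (P.roots.map (fun w => X - C w)).prod) /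
          eval z ((P.roots.map (fun w => X - C w)).prod) := by
    apply circleIntegral.integral_congr hR.le
    intro z _
    conv_lhs => rw [← hfact]
    rw [derivative_C_mul]
    simp only [eval_mul, eval_C]
    rw [mul_div_mul_left _ _ hlc]
  have h1 := circleIntegral_logDeriv_prod R hR P.roots hs
  have h2 := circleIntegral_logDeriv_eq_k P R hR k hk hdom
  rw [heq, h1] at h2
  have hne : (2 * Real.pi * Complex.I : ℂ) ≠ 0 := by
    simp [Real.pi_ne_zero, Complex.I_ne_zero]
  have := mul_left_cancel₀ hne h2
  exact_mod_cast this


section UpDown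

variable {n : ℕ} {c : ℕ → ℝ} {b : ℝ}

lemma rgrow (hb : 0 < b) (hcpos : ∀ j, j ≤ n → 0 < c j)
    (hcc : ∀ j, 1 ≤ j → j + 1 ≤ n → b ^ 2 * (c (j - 1) * c (j + 1)) ≤ c j ^ 2)
    {i : ℕ} (hi : 1 ≤ i) : ∀ m, i + m ≤ n →
    b ^ (2 * m) * (c (i - 1) / c i) ≤ c (i + m - 1) / c (i + m) := by
  intro m
  induction m with
  | zero => intro _; simp
  | succ m ih =>
      intro hmn
      have h1 : i + m ≤ n := by omega
      have ih' := ih h1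
      have hj : 1 ≤ i + m := by omega
      have hstep := hcc (i + m) hj (by omega)
      have hp1 : 0 < c (i + m - 1) := hcpos _ (by omega)
      have hp2 : 0 < c (i + m) := hcpos _ (by omega)
      have hp3 : 0 < c (i + m + 1) := hcpos _ (by omega)
      have hstep' : b ^ 2 * (c (i + m - 1) / c (i + m)) ≤ c (i + m) / c (i + m + 1) := by
        rw [mul_div_assoc', div_le_div_iff₀ hp2 hp3]
        nlinarith [hstep]
      have hkey : i + (m + 1) - 1 = i + m := by omega
      rw [hkey]
      have h2m : b ^ (2 * (m + 1)) * (c (i - 1) / c i)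
          = b ^ 2 * (b ^ (2 * m) * (c (i - 1) / c i)) := by
        rw [show 2 * (m + 1) = 2 * m + 2 by ring, pow_add]; ring
      rw [h2m, show i + (m + 1) = i + m + 1 by ring]
      calc b ^ 2 * (b ^ (2 * m) * (c (i - 1) / c i))
          ≤ b ^ 2 * (c (i + m - 1) / c (i + m)) := by
            apply mul_le_mul_of_nonneg_left ih' (by positivity)
        _ ≤ c (i + m) / c (i + m + 1) := hstep'

lemma up_bound (hb : 1 < b) (hcpos : ∀ j, j ≤ n → 0 < c j)
    (hcc : ∀ j, 1 ≤ j → j + 1 ≤ n → b ^ 2 * (c (j - 1) * c (j + 1)) ≤ c j ^ 2)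
    {k : ℕ} (hk1 : 1 ≤ k) (hkn : k + 1 ≤ n) :
    ∀ m, k + m ≤ n → c (k + m) * (b * (c (k - 1) / c k)) ^ (k + m) * b ^ (m ^ 2)
      ≤ c k * (b * (c (k - 1) / c k)) ^ k := by
  have hb0 : 0 < b := lt_trans one_pos hb
  set R := b * (c (k - 1) / c k) with hR
  have hRpos : 0 < R := by
    have h1 := hcpos (k - 1) (by omega)
    have h2 := hcpos k (by omega)
    positivity
  intro m
  induction m with
  | zero => intro _; simp
  | succ m ih =>
      intro hmn
      have ih' := ih (by omega)
      have hp1 : 0 < c (k + m) := hcpos _ (by omega)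
      have hp2 : 0 < c (k + m + 1) := hcpos _ (by omega)
      have hgrow := rgrow hb0 hcpos hcc hk1 (m + 1) (by omega)
      rw [show k + (m + 1) - 1 = k + m by omega, show k + (m + 1) = k + m + 1 by omega] at hgrow
      have hmul := mul_le_mul_of_nonneg_right hgrow hp2.le
      rw [div_mul_cancel₀ _ hp2.ne'] at hmul
      have hstep : c (k + m + 1) * R * b ^ (2 * m + 1) ≤ c (k + m) := by
        calc c (k + m + 1) * R * b ^ (2 * m + 1)
            = b ^ (2 * (m + 1)) * (c (k - 1) / c k) * c (k + m + 1) := by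
              rw [hR, show 2 * (m + 1) = (2 * m + 1) + 1 by ring, pow_succ]
              ring
          _ ≤ c (k + m) := hmul
      rw [show k + (m + 1) = k + m + 1 by omega]
      calc c (k + m + 1) * R ^ (k + m + 1) * b ^ ((m + 1) ^ 2)
          = (c (k + m + 1) * R * b ^ (2 * m + 1)) * (R ^ (k + m) * b ^ (m ^ 2)) := by
            rw [show (m + 1) ^ 2 = m ^ 2 + (2 * m + 1) by ring, pow_add, pow_succ]
            ring
        _ ≤ c (k + m) * (R ^ (k + m) * b ^ (m ^ 2)) :=
            mul_le_mul_of_nonneg_right hstep (by positivity)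
        _ = c (k + m) * R ^ (k + m) * b ^ (m ^ 2) := by ring
        _ ≤ c k * R ^ k := ih'

lemma down_bound (hb : 1 < b) (hcpos : ∀ j, j ≤ n → 0 < c j)
    (hcc : ∀ j, 1 ≤ j → j + 1 ≤ n → b ^ 2 * (c (j - 1) * c (j + 1)) ≤ c j ^ 2)
    {k : ℕ} (hk1 : 1 ≤ k) (hkn : k + 1 ≤ n) :
    ∀ m, m ≤ k → c (k - m) * (b * (c (k - 1) / c k)) ^ (k - m) * b ^ (m ^ 2)
      ≤ c k * (b * (c (k - 1) / c k)) ^ k := by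
  have hb0 : 0 < b := lt_trans one_pos hb
  set R := b * (c (k - 1) / c k) with hR
  have hRpos : 0 < R := by
    have h1 := hcpos (k - 1) (by omega)
    have h2 := hcpos k (by omega)
    positivity
  intro m
  induction m with
  | zero => intro _; simp
  | succ m ih =>
      intro hmk
      have ih' := ih (by omega)
      have hp1 : 0 < c (k - m) := hcpos _ (by omega)
      have hp2 : 0 < c (k - m - 1) := hcpos _ (by omega)
      have hgrow := rgrow hb0 hcpos hcc (show 1 ≤ k - m by omega) m (by omega)
      rw [show k - m + m = k by omega] at hgrow
      -- hgrow : b ^ (2*m) * (c (k - m - 1) / c (k - m)) ≤ c (k - 1) / c k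
      have hstep : c (k - m - 1) * b ^ (2 * m + 1) ≤ R * c (k - m) := by
        have hmul := mul_le_mul_of_nonneg_left hgrow hb0.le
        have hmul2 := mul_le_mul_of_nonneg_right hmul hp1.le
        calc c (k - m - 1) * b ^ (2 * m + 1)
            = b * (b ^ (2 * m) * (c (k - m - 1) / c (k - m))) * c (k - m) := by
              rw [pow_succ]
              field_simp
          _ ≤ b * (c (k - 1) / c k) * c (k - m) := hmul2
          _ = R * c (k - m) := by rw [hR]
      rw [show k - (m + 1) = k - m - 1 by omega]
      calc c (k - m - 1) * R ^ (k - m - 1) * b ^ ((m + 1) ^ 2)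
          = (c (k - m - 1) * b ^ (2 * m + 1)) * (R ^ (k - m - 1) * b ^ (m ^ 2)) := by
            rw [show (m + 1) ^ 2 = m ^ 2 + (2 * m + 1) by ring, pow_add]
            ring
        _ ≤ (R * c (k - m)) * (R ^ (k - m - 1) * b ^ (m ^ 2)) :=
            mul_le_mul_of_nonneg_right hstep (by positivity)
        _ = c (k - m) * R ^ (k - m) * b ^ (m ^ 2) := by
            obtain ⟨e, he⟩ : ∃ e, k - m = e + 1 := ⟨k - m - 1, by omega⟩
            rw [he, Nat.add_sub_cancel, pow_succ]
            ring
        _ ≤ c k * R ^ k := ih'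


lemma dominance_sum (hb : 1 < b) (hcpos : ∀ j, j ≤ n → 0 < c j)
    (hcc : ∀ j, 1 ≤ j → j + 1 ≤ n → b ^ 2 * (c (j - 1) * c (j + 1)) ≤ c j ^ 2)
    {k : ℕ} (hk1 : 1 ≤ k) (hkn : k + 1 ≤ n)
    (hhalf : ∀ M : ℕ, ∑ i ∈ Finset.range M, ((b ^ ((i + 1) ^ 2) : ℝ))⁻¹ < 1 / 2) :
    ∑ j ∈ (Finset.range (n + 1)).erase k,
        c j * (b * (c (k - 1) / c k)) ^ j < c k * (b * (c (k - 1) / c k)) ^ k := by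
  have hb0 : 0 < b := lt_trans one_pos hb
  set R := b * (c (k - 1) / c k) with hR
  have hRpos : 0 < R := by
    have h1 := hcpos (k - 1) (by omega)
    have h2 := hcpos k (by omega)
    positivity
  have hckR : 0 < c k * R ^ k := by
    have := hcpos k (by omega)
    positivity
  set w : ℕ → ℝ := fun j => (b ^ ((if k ≤ j then j - k else k - j) ^ 2))⁻¹ with hw
  have hterm : ∀ j ∈ (Finset.range (n + 1)).erase k, c j * R ^ j ≤ c k * R ^ k * w j := by
    intro j hj
    have hjn : j ≤ n := by
      have := Finset.mem_range.mp (Finset.mem_of_mem_erase hj)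
      omega
    by_cases hjk : k ≤ j
    · have := up_bound hb hcpos hcc hk1 hkn (j - k) (by omega)
      rw [show k + (j - k) = j by omega] at this
      rw [hw]
      simp only [if_pos hjk]
      calc c j * R ^ j ≤ c k * R ^ k / b ^ ((j - k) ^ 2) := by
            rw [le_div_iff₀ (by positivity)]
            exact this
        _ = c k * R ^ k * (b ^ ((j - k) ^ 2))⁻¹ := by rw [div_eq_mul_inv]
    · have := down_bound hb hcpos hcc hk1 hkn (k - j) (by omega)
      rw [show k - (k - j) = j by omega] at this
      rw [hw]
      simp only [if_neg hjk]
      calc c j * R ^ j ≤ c k * R ^ k / b ^ ((k - j) ^ 2) := by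
            rw [le_div_iff₀ (by positivity)]
            exact this
        _ = c k * R ^ k * (b ^ ((k - j) ^ 2))⁻¹ := by rw [div_eq_mul_inv]
  have hwsum : ∑ j ∈ (Finset.range (n + 1)).erase k, w j < 1 := by
    have hsplit : ∑ j ∈ Finset.range (n + 1), w j
        = ∑ j ∈ Finset.range k, w j + ∑ j ∈ Finset.Ico k (n + 1), w j := by
      rw [Finset.range_eq_Ico, Finset.range_eq_Ico]
      exact (Finset.sum_Ico_consecutive w (k := n + 1) (Nat.zero_le k) (by omega)).symm
    have hbot : ∑ j ∈ Finset.Ico k (n + 1), w j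
        = w k + ∑ j ∈ Finset.Ico (k + 1) (n + 1), w j :=
      Finset.sum_eq_sum_Ico_succ_bot (by omega) w
    have hwk : w k = 1 := by simp [hw]
    have hA : ∑ j ∈ Finset.range k, w j < 1 / 2 := by
      rw [← Finset.sum_range_reflect]
      have : ∀ i ∈ Finset.range k, w (k - 1 - i) = (b ^ ((i + 1) ^ 2))⁻¹ := by
        intro i hi
        have hik : i < k := Finset.mem_range.mp hi
        rw [hw]
        simp only
        rw [if_neg (by omega), show k - (k - 1 - i) = i + 1 by omega]
      rw [Finset.sum_congr rfl this]
      exact hhalf k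
    have hC : ∑ j ∈ Finset.Ico (k + 1) (n + 1), w j < 1 / 2 := by
      rw [Finset.sum_Ico_eq_sum_range]
      have : ∀ i ∈ Finset.range (n + 1 - (k + 1)), w (k + 1 + i) = (b ^ ((i + 1) ^ 2))⁻¹ := by
        intro i hi
        rw [hw]
        simp only
        rw [if_pos (by omega), show k + 1 + i - k = i + 1 by omega]
      rw [Finset.sum_congr rfl this]
      exact hhalf _
    have herase : ∑ j ∈ (Finset.range (n + 1)).erase k, w j
        = ∑ j ∈ Finset.range (n + 1), w j - w k := by
      rw [← Finset.add_sum_erase _ w (Finset.mem_range.mpr (by omega : k < n + 1))]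
      ring
    rw [herase, hsplit, hbot, hwk]
    linarith
  calc ∑ j ∈ (Finset.range (n + 1)).erase k, c j * R ^ j
      ≤ ∑ j ∈ (Finset.range (n + 1)).erase k, c k * R ^ k * w j :=
        Finset.sum_le_sum hterm
    _ = c k * R ^ k * ∑ j ∈ (Finset.range (n + 1)).erase k, w j := by
        rw [Finset.mul_sum]
    _ < c k * R ^ k * 1 := by
        apply mul_lt_mul_of_pos_left hwsum hckR
    _ = c k * R ^ k := mul_one _

end UpDown


lemma half_bound {B : ℝ} (hB1 : 1 < B)
    (hB2 : 1 - 2 * ∑' k : ℕ, B ^ (-((k : ℝ) + 1) ^ 2 / 2) = 0) :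
    1 < Real.sqrt B ∧
      ∀ M : ℕ, ∑ i ∈ Finset.range M, ((Real.sqrt B ^ ((i + 1) ^ 2) : ℝ))⁻¹ < 1 / 2 := by
  have hB0 : (0 : ℝ) < B := lt_trans one_pos hB1
  set b := Real.sqrt B with hbdef
  have hb1 : 1 < b := by
    rw [hbdef]
    rw [Real.lt_sqrt (by norm_num)]
    nlinarith
  have hb0 : 0 < b := lt_trans one_pos hb1
  set u : ℕ → ℝ := fun i => ((b ^ ((i + 1) ^ 2) : ℝ))⁻¹ with hu
  have hueq : ∀ i : ℕ, B ^ (-((i : ℝ) + 1) ^ 2 / 2) = u i := by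
    intro i
    have h1 : -((i : ℝ) + 1) ^ 2 / 2 = -((((i + 1) ^ 2 : ℕ) : ℝ) * (1 / 2)) := by
      push_cast
      ring
    rw [h1, Real.rpow_neg hB0.le, mul_comm, Real.rpow_mul hB0.le, ← Real.sqrt_eq_rpow,
      ← hbdef, Real.rpow_natCast]
  have hupos : ∀ i, 0 < u i := by
    intro i
    rw [hu]
    positivity
  have htsum : ∑' i : ℕ, B ^ (-((i : ℝ) + 1) ^ 2 / 2) = ∑' i, u i := tsum_congr hueq
  have husum : ∑' i, u i = 1 / 2 := by
    rw [← htsum]; linarith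
  have hsummable : Summable u := by
    by_contra h
    have h2 : Summable fun i : ℕ => B ^ (-((i : ℝ) + 1) ^ 2 / 2) := by
      by_contra h3
      rw [tsum_eq_zero_of_not_summable h3] at hB2
      norm_num at hB2
    exact h ((summable_congr hueq).mp h2)
  refine ⟨hb1, fun M => ?_⟩
  have h1 : ∑ i ∈ Finset.range M, u i < ∑ i ∈ Finset.range (M + 1), u i := by
    rw [Finset.sum_range_succ]
    linarith [hupos M]
  have h2 : ∑ i ∈ Finset.range (M + 1), u i ≤ ∑' i, u i :=
    Summable.sum_le_tsum _ (fun i _ => (hupos i).le) hsummable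
  calc ∑ i ∈ Finset.range M, u i < ∑ i ∈ Finset.range (M + 1), u i := h1
    _ ≤ ∑' i, u i := h2
    _ = 1 / 2 := husum


set_option maxHeartbeats 1000000 in
/-- If `P` is a complex polynomial of degree `n ≥ 2` with nonzero coefficients and
`|q_k(P)| ≥ b_∞` for all `k = 2, …, n`, then all zeros of `P` are simple and the
moduli of the zeros are pairwise different. -/
theorem stmt_6 (B : ℝ)
    (hB : 1 < B ∧ 1 - 2 * ∑' k : ℕ, B ^ (-((k : ℝ) + 1) ^ 2 / 2) = 0)
    (n : ℕ) (hn : 2 ≤ n)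
    (P : Polynomial ℂ) (hdeg : P.natDegree = n)
    (hcoeff : ∀ k, k ≤ n → P.coeff k ≠ 0)
    (hq : ∀ k, 2 ≤ k → k ≤ n →
      B ≤ ‖(P.coeff (k - 1)) ^ 2 / (P.coeff (k - 2) * P.coeff k)‖) :
    (∀ z : ℂ, P.IsRoot z → P.rootMultiplicity z = 1) ∧
    (∀ z w : ℂ, P.IsRoot z → P.IsRoot w → z ≠ w →
      ‖z‖ ≠ ‖w‖) := by
  obtain ⟨hB1, hB2⟩ := hB
  obtain ⟨hb1, hhalf⟩ := half_bound hB1 hB2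
  set b : ℝ := Real.sqrt B with hbdef
  have hB0 : (0 : ℝ) < B := lt_trans one_pos hB1
  have hb0 : (0 : ℝ) < b := lt_trans one_pos hb1
  have hBb : B = b ^ 2 := (Real.sq_sqrt hB0.le).symm
  set c : ℕ → ℝ := fun j => ‖P.coeff j‖ with hc
  have hcpos : ∀ j, j ≤ n → 0 < c j := fun j hj => norm_pos_iff.mpr (hcoeff j hj)
  have hcc : ∀ j, 1 ≤ j → j + 1 ≤ n → b ^ 2 * (c (j - 1) * c (j + 1)) ≤ c j ^ 2 := by
    intro j hj1 hjn
    have hq' := hq (j + 1) (by omega) (by omega)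
    rw [show j + 1 - 1 = j by omega, show j + 1 - 2 = j - 1 by omega] at hq'
    rw [norm_div, norm_pow, norm_mul] at hq'
    have hd : 0 < c (j - 1) * c (j + 1) :=
      mul_pos (hcpos _ (by omega)) (hcpos _ (by omega))
    rw [le_div_iff₀ hd] at hq'
    calc b ^ 2 * (c (j - 1) * c (j + 1)) = B * (c (j - 1) * c (j + 1)) := by rw [hBb]
      _ ≤ c j ^ 2 := hq'
  have hP0 : P ≠ 0 := by
    intro h
    exact hcoeff n le_rfl (by rw [h]; simp)
  have hcard : P.roots.card = n := by
    rw [← hdeg]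
    exact splits_iff_card_roots.mp (IsAlgClosed.splits P)
  set Rf : ℕ → ℝ := fun k => b * (c (k - 1) / c k) with hRf
  have hRpos : ∀ k, 1 ≤ k → k ≤ n - 1 → 0 < Rf k := by
    intro k hk1 hk2
    have h1 := hcpos (k - 1) (by omega)
    have h2 := hcpos k (by omega)
    positivity
  have hdomk : ∀ k, 1 ≤ k → k ≤ n - 1 → ∀ z : ℂ, ‖z‖ = Rf k →
      ‖P.eval z - P.coeff k * z ^ k‖ < ‖P.coeff k * z ^ k‖ := by
    intro k hk1 hk2 z hz
    have hkmem : k ∈ Finset.range (n + 1) := Finset.mem_range.mpr (by omega)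
    have heval : P.eval z = ∑ j ∈ Finset.range (n + 1), P.coeff j * z ^ j := by
      rw [eval_eq_sum_range, hdeg]
    have hsub : P.eval z - P.coeff k * z ^ k
        = ∑ j ∈ (Finset.range (n + 1)).erase k, P.coeff j * z ^ j := by
      rw [heval, Finset.sum_erase_eq_sub hkmem]
    rw [hsub]
    have habs : ∀ j : ℕ, ‖P.coeff j * z ^ j‖ = c j * Rf k ^ j := by
      intro j
      rw [norm_mul, norm_pow, hz]
    calc ‖∑ j ∈ (Finset.range (n + 1)).erase k, P.coeff j * z ^ j‖
        ≤ ∑ j ∈ (Finset.range (n + 1)).erase k, ‖P.coeff j * z ^ j‖ :=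
          norm_sum_le _ _
      _ = ∑ j ∈ (Finset.range (n + 1)).erase k, c j * Rf k ^ j :=
          Finset.sum_congr rfl (fun j _ => habs j)
      _ < c k * Rf k ^ k := dominance_sum hb1 hcpos hcc hk1 (by omega) hhalf
      _ = ‖P.coeff k * z ^ k‖ := (habs k).symm
  have hnoroot : ∀ k, 1 ≤ k → k ≤ n - 1 → ∀ z : ℂ, P.IsRoot z →
      ‖z‖ ≠ Rf k := by
    intro k hk1 hk2 z hroot hzR
    have := hdomk k hk1 hk2 z hzR
    rw [hroot, zero_sub, norm_neg] at this
    exact lt_irrefl _ this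
  have hcount : ∀ k, 1 ≤ k → k ≤ n - 1 →
      (P.roots.filter (fun z => ‖z‖ < Rf k)).card = k := by
    intro k hk1 hk2
    exact count_roots_in_ball P hP0 (Rf k) (hRpos k hk1 hk2) k (hcoeff k (by omega))
      (hdomk k hk1 hk2)
  -- key claim: at most one root (with multiplicity) of any given modulus
  have key : ∀ ρ : ℝ, (P.roots.filter (fun z => ‖z‖ = ρ)).card ≤ 1 := by
    intro ρ
    by_contra hcon
    push_neg at hcon
    have h2 : 2 ≤ (P.roots.filter (fun z => ‖z‖ = ρ)).card := hcon
    have hmem : ∃ x ∈ P.roots.filter (fun z => ‖z‖ = ρ), True := by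
      have : 0 < (P.roots.filter (fun z => ‖z‖ = ρ)).card := by omega
      obtain ⟨x, hx⟩ := Multiset.card_pos_iff_exists_mem.mp this
      exact ⟨x, hx, trivial⟩
    obtain ⟨x, hx, -⟩ := hmem
    have hxroot : P.IsRoot x ∧ ‖x‖ = ρ := by
      have := Multiset.mem_filter.mp hx
      exact ⟨(mem_roots hP0).mp this.1, this.2⟩
    have hρne : ∀ k, 1 ≤ k → k ≤ n - 1 → ρ ≠ Rf k := by
      intro k hk1 hk2 h
      exact hnoroot k hk1 hk2 x hxroot.1 (hxroot.2.trans h)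
    -- ρ is greater than every Rf k
    have hmono : ∀ k, 1 ≤ k → k ≤ n - 1 → Rf k < ρ := by
      intro k hk1
      induction k, hk1 using Nat.le_induction with
      | base =>
          intro h1n
          rcases lt_trichotomy ρ (Rf 1) with h | h | h
          · exfalso
            have hle : (P.roots.filter (fun z => ‖z‖ = ρ))
                ≤ (P.roots.filter (fun z => ‖z‖ < Rf 1)) := by
              apply Multiset.monotone_filter_right
              intro a ha
              rw [ha]; exact h
            have := Multiset.card_le_card hle
            rw [hcount 1 le_rfl h1n] at this
            omega
          · exact absurd h (hρne 1 le_rfl h1n)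
          · exact h
      | succ k hk1 ih =>
          intro hk2
          have hRk : Rf k < ρ := ih (by omega)
          rcases lt_trichotomy ρ (Rf (k + 1)) with h | h | h
          · exfalso
            have hdisj : (P.roots.filter
                (fun z => ‖z‖ < Rf k ∧ ‖z‖ = ρ)) = 0 := by
              rw [Multiset.filter_eq_nil]
              rintro a _ ⟨h1, h2⟩
              rw [h2] at h1
              linarith
            have hor : (P.roots.filter (fun z => ‖z‖ < Rf k))
                + (P.roots.filter (fun z => ‖z‖ = ρ))
                ≤ (P.roots.filter (fun z => ‖z‖ < Rf (k + 1))) := by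
              rw [Multiset.filter_add_filter, hdisj, add_zero]
              apply Multiset.monotone_filter_right
              rintro a (h1 | h1)
              · have hRR : Rf k < Rf (k + 1) := lt_trans hRk h
                linarith
              · rw [h1]; exact h
            have hcards := Multiset.card_le_card hor
            rw [Multiset.card_add, hcount k hk1 (by omega), hcount (k + 1) (by omega) hk2]
              at hcards
            omega
          · exact absurd h (hρne (k + 1) (by omega) hk2)
          · exact h
    -- but then at least two roots lie beyond Rf (n-1), impossible
    have hlast := hmono (n - 1) (by omega) le_rfl
    have hle : (P.roots.filter (fun z => ‖z‖ = ρ))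
        ≤ (P.roots.filter (fun z => ¬ ‖z‖ < Rf (n - 1))) := by
      apply Multiset.monotone_filter_right
      intro a ha
      rw [ha]
      exact not_lt.mpr hlast.le
    have hsplit := Multiset.filter_add_not (fun z => ‖z‖ < Rf (n - 1)) P.roots
    have hcards : (P.roots.filter (fun z => ‖z‖ < Rf (n - 1))).card
        + (P.roots.filter (fun z => ¬ ‖z‖ < Rf (n - 1))).card = n := by
      rw [← Multiset.card_add, hsplit, hcard]
    rw [hcount (n - 1) (by omega) le_rfl] at hcards
    have := Multiset.card_le_card hle
    omega
  constructor
  · intro z hz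
    have hcnt : P.roots.count z = P.rootMultiplicity z := P.count_roots
    have hfil : P.roots.count z
        = (P.roots.filter (fun w => ‖w‖ = ‖z‖)).count z :=
      (Multiset.count_filter_of_pos (p := fun w => ‖w‖ = ‖z‖) rfl).symm
    have hle2 : (P.roots.filter (fun w => ‖w‖ = ‖z‖)).count z
        ≤ (P.roots.filter (fun w => ‖w‖ = ‖z‖)).card :=
      Multiset.count_le_card _ _
    have hpos : 0 < P.rootMultiplicity z := (rootMultiplicity_pos hP0).mpr hz
    have := key (‖z‖)
    omega
  · intro z w hz hw hzw habs
    have hzm : z ∈ P.roots.filter (fun v => ‖v‖ = ‖z‖) :=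
      Multiset.mem_filter.mpr ⟨(mem_roots hP0).mpr hz, rfl⟩
    have hwm : w ∈ P.roots.filter (fun v => ‖v‖ = ‖z‖) :=
      Multiset.mem_filter.mpr ⟨(mem_roots hP0).mpr hw, habs.symm⟩
    obtain ⟨t, ht⟩ := Multiset.exists_cons_of_mem hzm
    have hwt : w ∈ t := by
      rw [ht] at hwm
      rcases Multiset.mem_cons.mp hwm with h | h
      · exact absurd h.symm hzw
      · exact h
    have hcard2 : 2 ≤ (P.roots.filter (fun v => ‖v‖ = ‖z‖)).card := by
      rw [ht, Multiset.card_cons]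
      have : 0 < Multiset.card t := Multiset.card_pos_iff_exists_mem.mpr ⟨w, hwt⟩
      omega
    have := key (‖z‖)
    omega
end

section
/- For every positive integer n there exists a complex polynomial P(z) = ∑_{k=0}^{2n} a_k z^k of degree 2n with a_k ∈ ℂ \ {0} for all k, such that |q_k(P)| = b_{2n} for all k = 2, 3, …, 2n, and P has a multiple root. -/
open Polynomial Finset

lemma aux_sum_split {M : Type*} [AddCommMonoid M] (N : ℕ) (g : ℕ → M) :
    ∑ k ∈ range (2 * N + 1), g k
      = (∑ j ∈ Icc 1 N, (g (N - j) + g (N + j))) + g N := by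
  have h1 : 2 * N + 1 = (N + 1) + N := by ring
  have hIcc : ∀ f : ℕ → M, ∑ j ∈ Icc 1 N, f j = ∑ i ∈ range N, f (1 + i) := by
    intro f
    rw [← Finset.Ico_add_one_right_eq_Icc, Finset.sum_Ico_eq_sum_range]
    simp
  rw [h1, Finset.sum_range_add, Finset.sum_range_succ, Finset.sum_add_distrib,
    hIcc, hIcc]
  have h2 : ∀ i ∈ range N, g (N - (1 + i)) = g (N - 1 - i) := by
    intro i _; congr 1; omega
  rw [Finset.sum_congr rfl h2, Finset.sum_range_reflect]
  have h3 : ∀ i ∈ range N, g (N + (1 + i)) = g (N + 1 + i) := by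
    intro i _; congr 1; omega
  rw [Finset.sum_congr rfl h3]
  abel

/-- For every positive integer `n` there is a complex polynomial of degree `2n` with
nonzero coefficients, with `|q_k(P)| = b_{2n}` for all `k = 2, …, 2n`, having a
multiple root. -/
theorem stmt_7 (n : ℕ) (hn : 0 < n) (b : ℝ)
    (hb : 1 < b ∧ 1 - 2 * ∑ k ∈ Finset.Icc 1 n, b ^ (-(k : ℝ) ^ 2 / 2) = 0) :
    ∃ P : Polynomial ℂ, P.natDegree = 2 * n ∧
      (∀ k, k ≤ 2 * n → P.coeff k ≠ 0) ∧
      (∀ k, 2 ≤ k → k ≤ 2 * n →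
        ‖(P.coeff (k - 1)) ^ 2 / (P.coeff (k - 2) * P.coeff k)‖ = b) ∧
      (∃ z : ℂ, 2 ≤ P.rootMultiplicity z) := by
  obtain ⟨hb1, hb2⟩ := hb
  have hb0 : (0:ℝ) < b := lt_trans one_pos hb1
  -- coefficient data
  set c : ℕ → ℝ := fun k => b ^ (-((k:ℝ) - n) ^ 2 / 2) with hc_def
  set ε : ℕ → ℝ := fun k => if k = n then (-1:ℝ)^n else (-1:ℝ)^(k+1) with hε_def
  set a : ℕ → ℝ := fun k => ε k * c k with ha_def
  have hc_pos : ∀ k, 0 < c k := fun k => Real.rpow_pos_of_pos hb0 _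
  have hε_pm : ∀ k, ε k = 1 ∨ ε k = -1 := by
    intro k; simp only [hε_def]; split <;> exact neg_one_pow_eq_or ℝ _
  have hε_abs : ∀ k, |ε k| = 1 := by
    intro k; rcases hε_pm k with h | h <;> rw [h] <;> norm_num
  have ha_ne : ∀ k, a k ≠ 0 := by
    intro k
    simp only [ha_def]
    refine mul_ne_zero ?_ (ne_of_gt (hc_pos k))
    rcases hε_pm k with h | h <;> rw [h] <;> norm_num
  have hs : ∀ k, ε k * (-1:ℝ)^k = if k = n then 1 else -1 := by
    intro k
    simp only [hε_def]
    split
    · rw [← pow_add]; subst ‹k = n›; rw [← two_mul, pow_mul]; norm_num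
    · rw [← pow_add]
      have : k + 1 + k = 2 * k + 1 := by ring
      rw [this, pow_succ, pow_mul]; norm_num
  -- symmetric values of c
  have hc_sub : ∀ j ∈ Icc 1 n, c (n - j) = b ^ (-(j:ℝ)^2/2) := by
    intro j hj
    simp only [Finset.mem_Icc] at hj
    simp only [hc_def]
    congr 1
    have : ((n - j : ℕ) : ℝ) = (n : ℝ) - j := by
      rw [Nat.cast_sub hj.2]
    rw [this]; ring
  have hc_add : ∀ j, c (n + j) = b ^ (-(j:ℝ)^2/2) := by
    intro j
    simp only [hc_def]
    congr 1
    push_cast; ring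
  have hc_n : c n = 1 := by
    simp only [hc_def]
    have : -(((n:ℝ) - n) ^ 2) / 2 = 0 := by ring
    rw [this, Real.rpow_zero]
  -- the two real sums
  have hE : ∑ k ∈ range (2 * n + 1), (ε k * (-1:ℝ)^k) * c k = 0 := by
    rw [aux_sum_split]
    have : ∀ j ∈ Icc 1 n,
        (ε (n - j) * (-1:ℝ)^(n-j)) * c (n - j) + (ε (n + j) * (-1:ℝ)^(n+j)) * c (n + j)
        = -2 * b ^ (-(j:ℝ)^2/2) := by
      intro j hj
      have hj' := hj
      simp only [Finset.mem_Icc] at hj'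
      have h1 : n - j ≠ n := by omega
      have h2 : n + j ≠ n := by omega
      rw [hs, hs, if_neg h1, if_neg h2, hc_sub j hj, hc_add j]
      ring
    rw [Finset.sum_congr rfl this, hs, if_pos rfl, hc_n]
    rw [Finset.sum_congr rfl (fun j _ => by ring : ∀ j ∈ Icc 1 n,
      -2 * b ^ (-(j:ℝ)^2/2) = -2 * b ^ (-(j:ℝ)^2/2)), ← Finset.mul_sum]
    linarith [hb2]
  have hD : ∑ k ∈ range (2 * n + 1), (k:ℝ) * ((ε k * (-1:ℝ)^k) * c k) = 0 := by
    rw [aux_sum_split]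
    have : ∀ j ∈ Icc 1 n,
        ((n-j:ℕ):ℝ) * ((ε (n - j) * (-1:ℝ)^(n-j)) * c (n - j))
          + ((n+j:ℕ):ℝ) * ((ε (n + j) * (-1:ℝ)^(n+j)) * c (n + j))
        = -(2*n) * b ^ (-(j:ℝ)^2/2) := by
      intro j hj
      have hj' := hj
      simp only [Finset.mem_Icc] at hj'
      have h1 : n - j ≠ n := by omega
      have h2 : n + j ≠ n := by omega
      have h3 : ((n - j : ℕ) : ℝ) = (n : ℝ) - j := by rw [Nat.cast_sub hj'.2]
      have h4 : ((n + j : ℕ) : ℝ) = (n : ℝ) + j := by push_cast; ring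
      rw [hs, hs, if_neg h1, if_neg h2, hc_sub j hj, hc_add j, h3, h4]
      ring
    rw [Finset.sum_congr rfl this, hs, if_pos rfl, hc_n, ← Finset.mul_sum]
    have : (1:ℝ) - 2 * ∑ k ∈ Finset.Icc 1 n, b ^ (-(k : ℝ) ^ 2 / 2) = 0 := hb2
    nlinarith [this]
  -- the polynomial
  set P : Polynomial ℂ := ∑ k ∈ range (2 * n + 1), C ((a k : ℂ)) * X ^ k with hP_def
  have hcoeff : ∀ k, P.coeff k = if k ∈ range (2*n+1) then ((a k : ℂ)) else 0 := by
    intro k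
    simp [hP_def, Polynomial.finset_sum_coeff, Polynomial.coeff_C_mul,
      Polynomial.coeff_X_pow, Finset.sum_ite_eq']
  have hcoeff' : ∀ k, k ≤ 2*n → P.coeff k = ((a k : ℂ)) := by
    intro k hk
    rw [hcoeff, if_pos (by simp [Finset.mem_range]; omega)]
  have hcoeff_ne : ∀ k, k ≤ 2*n → P.coeff k ≠ 0 := by
    intro k hk
    rw [hcoeff' k hk]
    exact_mod_cast Complex.ofReal_ne_zero.mpr (ha_ne k)
  have hP0 : P ≠ 0 := fun h => hcoeff_ne 0 (by omega) (by rw [h]; simp)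
  refine ⟨P, ?_, hcoeff_ne, ?_, ⟨-1, ?_⟩⟩
  · -- natDegree
    apply Polynomial.natDegree_eq_of_le_of_coeff_ne_zero
    · rw [Polynomial.natDegree_le_iff_coeff_eq_zero]
      intro N hN
      rw [hcoeff, if_neg (by simp [Finset.mem_range]; omega)]
    · exact hcoeff_ne (2*n) le_rfl
  · -- the quotient moduli
    intro k hk2 hk
    rw [hcoeff' (k-1) (by omega), hcoeff' (k-2) (by omega), hcoeff' k hk]
    rw [show ((a (k-1) : ℂ))^2 / ((a (k-2) : ℂ) * (a k : ℂ))
        = (((a (k-1)^2 / (a (k-2) * a k) : ℝ)) : ℂ) by push_cast; ring,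
      Complex.norm_real, Real.norm_eq_abs]
    have hval : a (k-1)^2 / (a (k-2) * a k)
        = (ε (k-1)^2 / (ε (k-2) * ε k)) * (c (k-1)^2 / (c (k-2) * c k)) := by
      simp only [ha_def]; ring
    have hcr : c (k-1)^2 / (c (k-2) * c k) = b := by
      simp only [hc_def]
      have hsq : ∀ y : ℝ, (b ^ y)^2 = b ^ (y * 2) := by
        intro y
        rw [← Real.rpow_natCast (b ^ y) 2, ← Real.rpow_mul hb0.le]
        norm_num
      rw [hsq, ← Real.rpow_add hb0, ← Real.rpow_sub hb0]
      have h1 : ((k - 1 : ℕ) : ℝ) = (k : ℝ) - 1 := by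
        rw [Nat.cast_sub (by omega : 1 ≤ k)]; norm_num
      have h2 : ((k - 2 : ℕ) : ℝ) = (k : ℝ) - 2 := by
        rw [Nat.cast_sub (by omega : 2 ≤ k)]; norm_num
      have hE1 : -(((k - 1 : ℕ) : ℝ) - n) ^ 2 / 2 * 2
          - (-(((k - 2 : ℕ) : ℝ) - n) ^ 2 / 2 + -(((k : ℕ) : ℝ) - n) ^ 2 / 2) = 1 := by
        rw [h1, h2]; ring
      rw [hE1, Real.rpow_one]
    rw [hval, abs_mul, abs_div, abs_pow, abs_mul, hε_abs, hε_abs, hε_abs, hcr,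
      abs_of_pos hb0]
    norm_num
  · -- double root at -1
    rw [show (2:ℕ) = 1 + 1 from rfl, Nat.add_one_le_iff]
    rw [Polynomial.one_lt_rootMultiplicity_iff_isRoot hP0]
    constructor
    · show P.eval (-1) = 0
      rw [hP_def]
      rw [Polynomial.eval_finset_sum]
      simp only [Polynomial.eval_mul, Polynomial.eval_C, Polynomial.eval_pow,
        Polynomial.eval_X]
      have : ∀ k ∈ range (2*n+1), ((a k : ℂ)) * (-1)^k
          = (((ε k * (-1:ℝ)^k) * c k : ℝ) : ℂ) := by
        intro k _
        push_cast [ha_def]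
        ring
      rw [Finset.sum_congr rfl this, ← Complex.ofReal_sum, hE, Complex.ofReal_zero]
    · show (Polynomial.derivative P).eval (-1) = 0
      rw [hP_def]
      rw [map_sum]
      rw [Polynomial.eval_finset_sum]
      have hder : ∀ k ∈ range (2*n+1),
          (Polynomial.derivative (C ((a k : ℂ)) * X ^ k)).eval (-1)
          = -((((k:ℝ) * ((ε k * (-1:ℝ)^k) * c k) : ℝ)) : ℂ) := by
        intro k _
        rw [Polynomial.derivative_C_mul, Polynomial.derivative_X_pow]
        simp only [Polynomial.eval_mul, Polynomial.eval_C, Polynomial.eval_pow,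
          Polynomial.eval_X, Polynomial.eval_natCast]
        rcases k with _ | m
        · simp
        · have : ((-1:ℂ))^m = -(-1:ℂ)^(m+1) := by rw [pow_succ]; ring
          push_cast [ha_def, Nat.succ_sub_one, this]
          ring
      rw [Finset.sum_congr rfl hder]
      simp only [← Complex.ofReal_neg, ← Complex.ofReal_sum, ← Finset.sum_neg_distrib]
      rw [Finset.sum_neg_distrib, hD]
      simp
end

section
/- For every positive integer n and every ε > 0 there exists a complex polynomial P of degree 2n+1 all of whose coefficients are nonzero, such that |q_k(P)| > b_{2n} - ε for all k = 2, 3, …, 2n+1, and P has a multiple root. -/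
open Polynomial Finset

/-- Gaussian-type coefficient magnitudes. -/
noncomputable def stmt8g (n : ℕ) (b : ℝ) (j : ℕ) : ℝ :=
  b ^ (-(((j : ℝ) - (n : ℝ)) ^ 2) / 2)

/-- Signed coefficients of the inner polynomial `H`. -/
noncomputable def stmt8h (n : ℕ) (b : ℝ) (j : ℕ) : ℝ :=
  (if j = n then 1 else -1) * stmt8g n b j

/-- Inner polynomial `H`. -/
noncomputable def stmt8H (n : ℕ) (b : ℝ) : Polynomial ℂ :=
  ∑ j ∈ Finset.range (2 * n + 1), Polynomial.monomial j ((stmt8h n b j : ℝ) : ℂ)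

/-- The witness polynomial `P = X·H + δ(X-1)²`. -/
noncomputable def stmt8P (n : ℕ) (b δ : ℝ) : Polynomial ℂ :=
  Polynomial.X * stmt8H n b + Polynomial.C (δ : ℂ) * (Polynomial.X - Polynomial.C 1) ^ 2

lemma stmt8g_pos {b : ℝ} (hb : 0 < b) (n j : ℕ) : 0 < stmt8g n b j :=
  Real.rpow_pos_of_pos hb _

lemma stmt8h_abs {b : ℝ} (hb : 0 < b) (n j : ℕ) : |stmt8h n b j| = stmt8g n b j := by
  unfold stmt8h
  split <;> simp [abs_of_pos (stmt8g_pos hb n j)]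

lemma stmt8h_ne {b : ℝ} (hb : 0 < b) (n j : ℕ) : stmt8h n b j ≠ 0 := by
  intro h
  have h2 := stmt8h_abs hb n j
  rw [h, abs_zero] at h2
  exact (stmt8g_pos hb n j).ne' h2.symm

lemma stmt8g_sq {b : ℝ} (hb : 0 < b) (n j : ℕ) :
    stmt8g n b (j + 1) ^ 2 = b * (stmt8g n b j * stmt8g n b (j + 2)) := by
  unfold stmt8g
  rw [sq, ← Real.rpow_add hb]
  have h1 : b * (b ^ (-(((j : ℝ) - n) ^ 2) / 2) * b ^ (-((((j:ℕ)+2 : ℕ) : ℝ) - n) ^ 2 / 2))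
      = b ^ ((1 : ℝ) + (-(((j : ℝ) - n) ^ 2) / 2 + -((((j:ℕ)+2 : ℕ) : ℝ) - n) ^ 2 / 2)) := by
    rw [Real.rpow_add hb, Real.rpow_add hb, Real.rpow_one]
  rw [h1]
  congr 1
  push_cast
  ring

lemma stmt8g_n {b : ℝ} (n : ℕ) : stmt8g n b n = 1 := by
  unfold stmt8g
  rw [show -(((n : ℝ) - (n : ℝ)) ^ 2) / 2 = 0 by ring, Real.rpow_zero]

lemma stmt8h_symm {b : ℝ} (n : ℕ) {j : ℕ} (hj : j ≤ 2 * n) :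
    stmt8h n b (2 * n - j) = stmt8h n b j := by
  unfold stmt8h stmt8g
  have h1 : ((2 * n - j : ℕ) : ℝ) = 2 * (n : ℝ) - (j : ℝ) := by
    push_cast [Nat.cast_sub hj]; ring
  have h2 : (2 * n - j = n) ↔ (j = n) := by omega
  rw [h1]
  simp only [h2]
  congr 2
  ring

lemma stmt8H_coeff (n : ℕ) (b : ℝ) (j : ℕ) :
    (stmt8H n b).coeff j =
      if j ∈ Finset.range (2 * n + 1) then ((stmt8h n b j : ℝ) : ℂ) else 0 := by
  unfold stmt8H
  rw [Polynomial.finset_sum_coeff]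
  simp only [Polynomial.coeff_monomial]
  exact Finset.sum_ite_eq' _ _ _

lemma stmt8_sumIcc (n : ℕ) (b : ℝ) :
    ∑ k ∈ Finset.Icc 1 n, b ^ (-(k : ℝ) ^ 2 / 2)
      = ∑ i ∈ Finset.range n, b ^ (-((1 : ℝ) + i) ^ 2 / 2) := by
  rw [← Finset.Ico_add_one_right_eq_Icc, Finset.sum_Ico_eq_sum_range]
  refine Finset.sum_congr (by norm_num) fun i _ => ?_
  congr 1
  push_cast
  ring

lemma stmt8_S0 (n : ℕ) (hn : 0 < n) {b : ℝ}
    (hb2 : 1 - 2 * ∑ k ∈ Finset.Icc 1 n, b ^ (-(k : ℝ) ^ 2 / 2) = 0) :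
    ∑ j ∈ Finset.range (2 * n + 1), stmt8h n b j = 0 := by
  have hsum : ∑ i ∈ Finset.range n, b ^ (-((1 : ℝ) + i) ^ 2 / 2) = 1 / 2 := by
    have h := stmt8_sumIcc n b
    rw [h] at hb2
    linarith
  have hsplit : (2 * n + 1) = n + (n + 1) := by omega
  rw [hsplit, Finset.sum_range_add, Finset.sum_range_succ']
  have e1 : ∑ i ∈ Finset.range n, stmt8h n b i
      = -∑ i ∈ Finset.range n, b ^ (-((1 : ℝ) + i) ^ 2 / 2) := by
    rw [← Finset.sum_range_reflect (fun i => b ^ (-((1 : ℝ) + i) ^ 2 / 2)) n,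
      ← Finset.sum_neg_distrib]
    refine Finset.sum_congr rfl fun i hi => ?_
    have hi' : i < n := Finset.mem_range.1 hi
    unfold stmt8h stmt8g
    rw [if_neg (by omega)]
    have hc : ((n - 1 - i : ℕ) : ℝ) = (n : ℝ) - 1 - (i : ℝ) := by
      rw [Nat.cast_sub (by omega : i ≤ n - 1), Nat.cast_sub (by omega : 1 ≤ n)]
      norm_num
    have he : -(((i : ℝ) - (n : ℝ)) ^ 2) / 2 = -((1 : ℝ) + ((n:ℝ) - 1 - (i:ℝ))) ^ 2 / 2 := by ring
    rw [he, ← hc]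
    ring
  have e2 : ∑ i ∈ Finset.range n, stmt8h n b (n + (i + 1))
      = -∑ i ∈ Finset.range n, b ^ (-((1 : ℝ) + i) ^ 2 / 2) := by
    rw [← Finset.sum_neg_distrib]
    refine Finset.sum_congr rfl fun i _ => ?_
    unfold stmt8h stmt8g
    rw [if_neg (by omega)]
    have he : -(((n + (i + 1) : ℕ) : ℝ) - (n : ℝ)) ^ 2 / 2 = -((1 : ℝ) + i) ^ 2 / 2 := by
      push_cast; ring
    rw [he]
    ring
  have e3 : stmt8h n b (n + 0) = 1 := by
    unfold stmt8h
    rw [if_pos (by omega)]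
    simpa using stmt8g_n (b := b) n
  rw [e1, e2, e3, hsum]
  norm_num

lemma stmt8_S1 (n : ℕ) (hn : 0 < n) {b : ℝ}
    (hb2 : 1 - 2 * ∑ k ∈ Finset.Icc 1 n, b ^ (-(k : ℝ) ^ 2 / 2) = 0) :
    ∑ j ∈ Finset.range (2 * n + 1), (j : ℝ) * stmt8h n b j = 0 := by
  have S0 := stmt8_S0 n hn hb2
  have hrefl := Finset.sum_range_reflect (fun j => (j : ℝ) * stmt8h n b j) (2 * n + 1)
  have e : ∑ j ∈ Finset.range (2 * n + 1),
        ((2 * n + 1 - 1 - j : ℕ) : ℝ) * stmt8h n b (2 * n + 1 - 1 - j)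
      = ∑ j ∈ Finset.range (2 * n + 1), (2 * (n:ℝ) - (j:ℝ)) * stmt8h n b j := by
    refine Finset.sum_congr rfl fun j hj => ?_
    have hj' : j < 2 * n + 1 := Finset.mem_range.1 hj
    have h1 : 2 * n + 1 - 1 - j = 2 * n - j := by omega
    have hle : j ≤ 2 * n := by omega
    rw [h1, stmt8h_symm n hle, Nat.cast_sub hle]
    push_cast
    ring
  rw [e] at hrefl
  have expand : ∑ j ∈ Finset.range (2 * n + 1), (2 * (n:ℝ) - (j:ℝ)) * stmt8h n b j
      = 2 * (n:ℝ) * (∑ j ∈ Finset.range (2 * n + 1), stmt8h n b j)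
        - ∑ j ∈ Finset.range (2 * n + 1), (j : ℝ) * stmt8h n b j := by
    rw [Finset.mul_sum, ← Finset.sum_sub_distrib]
    refine Finset.sum_congr rfl fun j _ => by ring
  rw [expand, S0] at hrefl
  linarith

lemma stmt8H_eval1 (n : ℕ) (b : ℝ) :
    (stmt8H n b).eval 1 = ((∑ j ∈ Finset.range (2 * n + 1), stmt8h n b j : ℝ) : ℂ) := by
  unfold stmt8H
  rw [Polynomial.eval_finset_sum]
  push_cast
  refine Finset.sum_congr rfl fun j _ => ?_
  simp [Polynomial.eval_monomial]

lemma stmt8H_deriv_eval1 (n : ℕ) (b : ℝ) :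
    ((stmt8H n b).derivative).eval 1
      = ((∑ j ∈ Finset.range (2 * n + 1), (j : ℝ) * stmt8h n b j : ℝ) : ℂ) := by
  unfold stmt8H
  rw [Polynomial.derivative_sum, Polynomial.eval_finset_sum]
  push_cast
  refine Finset.sum_congr rfl fun j _ => ?_
  simp [Polynomial.derivative_monomial, Polynomial.eval_monomial]
  ring

lemma stmt8sq_expand : ((Polynomial.X - Polynomial.C 1) ^ 2 : Polynomial ℂ)
    = Polynomial.X ^ 2 - Polynomial.C 2 * Polynomial.X + Polynomial.C 1 := by
  rw [show (Polynomial.C 1 : Polynomial ℂ) = 1 from map_one Polynomial.C,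
    show (Polynomial.C 2 : Polynomial ℂ) = 2 from map_ofNat _ 2]
  ring

lemma stmt8sq_coeff_ge3 {k : ℕ} (hk : 3 ≤ k) :
    (((Polynomial.X - Polynomial.C 1) ^ 2 : Polynomial ℂ)).coeff k = 0 := by
  apply Polynomial.coeff_eq_zero_of_natDegree_lt
  have h : ((Polynomial.X - Polynomial.C 1) ^ 2 : Polynomial ℂ).natDegree = 2 := by
    rw [Polynomial.natDegree_pow, Polynomial.natDegree_X_sub_C]
  omega

lemma stmt8P_coeff0 (n : ℕ) (b δ : ℝ) : (stmt8P n b δ).coeff 0 = (δ : ℂ) := by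
  unfold stmt8P
  rw [Polynomial.coeff_add, Polynomial.mul_coeff_zero, stmt8sq_expand]
  simp

lemma stmt8P_coeff1 (n : ℕ) (b δ : ℝ) :
    (stmt8P n b δ).coeff 1 = ((stmt8h n b 0 - 2 * δ : ℝ) : ℂ) := by
  unfold stmt8P
  rw [Polynomial.coeff_add, Polynomial.coeff_X_mul, stmt8H_coeff, stmt8sq_expand]
  rw [if_pos (Finset.mem_range.2 (by omega))]
  simp only [Polynomial.coeff_add, Polynomial.coeff_sub, Polynomial.coeff_X_pow,
    Polynomial.coeff_C_mul, Polynomial.coeff_X_one, Polynomial.coeff_C]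
  push_cast
  ring

lemma stmt8P_coeff2 (n : ℕ) (hn : 0 < n) (b δ : ℝ) :
    (stmt8P n b δ).coeff 2 = ((stmt8h n b 1 + δ : ℝ) : ℂ) := by
  unfold stmt8P
  rw [Polynomial.coeff_add, Polynomial.coeff_X_mul, stmt8H_coeff, stmt8sq_expand]
  rw [if_pos (Finset.mem_range.2 (by omega))]
  simp only [Polynomial.coeff_add, Polynomial.coeff_sub, Polynomial.coeff_X_pow,
    Polynomial.coeff_C_mul, Polynomial.coeff_C, Polynomial.coeff_X]
  push_cast
  norm_num

lemma stmt8P_coeff_ge3 (n : ℕ) (b δ : ℝ) (j : ℕ) :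
    (stmt8P n b δ).coeff (j + 3)
      = if j + 2 ∈ Finset.range (2 * n + 1) then ((stmt8h n b (j + 2) : ℝ) : ℂ) else 0 := by
  unfold stmt8P
  rw [Polynomial.coeff_add, show j + 3 = (j + 2) + 1 from rfl, Polynomial.coeff_X_mul,
    stmt8H_coeff, Polynomial.coeff_C_mul, stmt8sq_coeff_ge3 (by omega), mul_zero, add_zero]

set_option maxHeartbeats 1000000 in
/-- For every positive integer `n` and every `ε > 0` there is a complex polynomial of
degree `2n+1` with nonzero coefficients, with `|q_k(P)| > b_{2n} - ε` for all
`k = 2, …, 2n+1`, having a multiple root. -/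
theorem stmt_8 (n : ℕ) (hn : 0 < n) (b : ℝ)
    (hb : 1 < b ∧ 1 - 2 * ∑ k ∈ Finset.Icc 1 n, b ^ (-(k : ℝ) ^ 2 / 2) = 0)
    (ε : ℝ) (hε : 0 < ε) :
    ∃ P : Polynomial ℂ, P.natDegree = 2 * n + 1 ∧
      (∀ k, k ≤ 2 * n + 1 → P.coeff k ≠ 0) ∧
      (∀ k, 2 ≤ k → k ≤ 2 * n + 1 →
        b - ε < ‖(P.coeff (k - 1)) ^ 2 / (P.coeff (k - 2) * P.coeff k)‖) ∧
      (∃ z : ℂ, 2 ≤ P.rootMultiplicity z) := by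
  obtain ⟨hb1, hb2⟩ := hb
  have hb0 : (0:ℝ) < b := by linarith
  set A := stmt8g n b 0 with hA
  set B := stmt8g n b 1 with hB
  set Cc := stmt8g n b 2 with hCc
  set D := stmt8g n b 3 with hD
  have hApos : 0 < A := stmt8g_pos hb0 n 0
  have hBpos : 0 < B := stmt8g_pos hb0 n 1
  have hCpos : 0 < Cc := stmt8g_pos hb0 n 2
  have hDpos : 0 < D := stmt8g_pos hb0 n 3
  have hBsq : B ^ 2 = b * (A * Cc) := stmt8g_sq hb0 n 0
  have hCsq : Cc ^ 2 = b * (B * D) := stmt8g_sq hb0 n 1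
  clear_value A B Cc D
  -- choice of δ
  obtain ⟨δ, hδpos, hδ1, hδB, hδA, hδ3, hδ4⟩ :
      ∃ δ : ℝ, 0 < δ ∧ δ < 1 ∧ δ < B ∧ δ * (B + 1) ≤ A^2 / (2*b) ∧
        2 * δ * (B + b*Cc) < ε * (A * Cc) ∧ b * δ < ε * B := by
    set M := min (min 1 B)
        (min (A^2 / (2*b*(B+1))) (min (ε*A*Cc / (2*(B + b*Cc))) (ε*B/b))) with hMdef
    have hMpos : 0 < M := by
      have h1 : (0:ℝ) < A^2 / (2*b*(B+1)) := by positivity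
      have h2 : (0:ℝ) < ε*A*Cc / (2*(B + b*Cc)) := by positivity
      have h3 : (0:ℝ) < ε*B/b := by positivity
      simp only [hMdef, lt_min_iff]
      exact ⟨⟨one_pos, hBpos⟩, h1, h2, h3⟩
    have hM1 : M ≤ 1 := le_trans (min_le_left _ _) (min_le_left _ _)
    have hMB : M ≤ B := le_trans (min_le_left _ _) (min_le_right _ _)
    have hMA : M ≤ A^2 / (2*b*(B+1)) := le_trans (min_le_right _ _) (min_le_left _ _)
    have hM3 : M ≤ ε*A*Cc / (2*(B + b*Cc)) :=
      le_trans (min_le_right _ _) (le_trans (min_le_right _ _) (min_le_left _ _))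
    have hM4 : M ≤ ε*B/b :=
      le_trans (min_le_right _ _) (le_trans (min_le_right _ _) (min_le_right _ _))
    refine ⟨M/2, by positivity, by linarith, by linarith, ?_, ?_, ?_⟩
    · have hBp1 : (0:ℝ) < B + 1 := by linarith
      have h2 : A^2 / (2*b*(B+1)) = (A^2/(2*b)) / (B+1) := by rw [div_div]
      have h3 : M/2 ≤ (A^2/(2*b)) / (B+1) := by rw [← h2]; linarith
      calc M/2 * (B+1) ≤ ((A^2/(2*b)) / (B+1)) * (B+1) := by nlinarith
        _ = A^2/(2*b) := by field_simp
    · have hden : (0:ℝ) < B + b*Cc := by positivity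
      have h2 : ε*A*Cc / (2*(B + b*Cc)) = (ε*A*Cc/2) / (B + b*Cc) := by rw [div_div]
      have h3 : 2*(M/2) ≤ (ε*A*Cc/2) / (B + b*Cc) := by rw [← h2]; linarith
      have h4 : 2*(M/2)*(B + b*Cc) ≤ ε*A*Cc/2 := by
        calc 2*(M/2)*(B + b*Cc) ≤ ((ε*A*Cc/2) / (B + b*Cc))*(B + b*Cc) := by nlinarith
          _ = ε*A*Cc/2 := by field_simp
      have h5 : (0:ℝ) < ε*A*Cc := by positivity
      nlinarith
    · have h3 : M/2 ≤ (ε*B/b)/2 := by linarith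
      have h4 : b * ((ε*B/b)/2) = ε*B/2 := by field_simp
      have h5 : (0:ℝ) < ε*B := by positivity
      nlinarith [mul_pos hb0 hMpos]
  -- abbreviations
  have hh0 : stmt8h n b 0 = -A := by
    unfold stmt8h
    rw [if_neg (by omega)]
    rw [hA]; ring
  have hh1abs : |stmt8h n b 1| = B := by rw [hB]; exact stmt8h_abs hb0 n 1
  have hh2abs : |stmt8h n b 2| = Cc := by rw [hCc]; exact stmt8h_abs hb0 n 2
  have hh3abs : |stmt8h n b 3| = D := by rw [hD]; exact stmt8h_abs hb0 n 3
  have h2ne : stmt8h n b 1 + δ ≠ 0 := by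
    intro hc
    have : |stmt8h n b 1| = δ := by
      rw [show stmt8h n b 1 = -δ by linarith, abs_neg, abs_of_pos hδpos]
    rw [hh1abs] at this
    linarith
  have habs1low : B - δ ≤ |stmt8h n b 1 + δ| := by
    have h := abs_sub_abs_le_abs_sub (stmt8h n b 1) (-δ)
    rw [sub_neg_eq_add, hh1abs, abs_neg, abs_of_pos hδpos] at h
    linarith
  have habs1up : |stmt8h n b 1 + δ| ≤ B + δ := by
    calc |stmt8h n b 1 + δ| ≤ |stmt8h n b 1| + |δ| := abs_add_le _ _
      _ = B + δ := by rw [hh1abs, abs_of_pos hδpos]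
  have h1ne : stmt8h n b 0 - 2*δ ≠ 0 := by rw [hh0]; intro hc; nlinarith
  have habs0 : |stmt8h n b 0 - 2*δ| = A + 2*δ := by
    rw [hh0, show -A - 2*δ = -(A + 2*δ) by ring, abs_neg, abs_of_pos (by linarith)]
  have hred : ∀ x y z : ℝ, y ≠ 0 → z ≠ 0 →
      ‖((x : ℝ) : ℂ) ^ 2 / (((y : ℝ) : ℂ) * ((z : ℝ) : ℂ))‖ = x^2 / (|y| * |z|) := by
    intro x y z hy hz
    rw [show ((x : ℝ) : ℂ) ^ 2 / (((y : ℝ) : ℂ) * ((z : ℝ) : ℂ))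
        = (((x^2/(y*z) : ℝ)) : ℂ) by push_cast; ring,
      Complex.norm_real, Real.norm_eq_abs, abs_div, abs_mul, abs_pow, sq_abs]
  refine ⟨stmt8P n b δ, ?_, ?_, ?_, ?_⟩
  · -- natDegree
    have hle : (stmt8P n b δ).natDegree ≤ 2*n+1 := by
      rw [Polynomial.natDegree_le_iff_coeff_eq_zero]
      intro N hN
      obtain ⟨j, rfl⟩ : ∃ j, N = j + 3 := ⟨N - 3, by omega⟩
      rw [stmt8P_coeff_ge3, if_neg (by simp only [Finset.mem_range]; omega)]
    have hge : 2*n+1 ≤ (stmt8P n b δ).natDegree := by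
      apply Polynomial.le_natDegree_of_ne_zero
      obtain ⟨j, hj⟩ : ∃ j, 2*n+1 = j + 3 := ⟨2*n-2, by omega⟩
      rw [hj, stmt8P_coeff_ge3, if_pos (Finset.mem_range.2 (by omega))]
      exact Complex.ofReal_ne_zero.2 (stmt8h_ne hb0 n _)
    omega
  · -- coefficients nonzero
    intro k hk
    rcases k with _|_|_|j
    · rw [stmt8P_coeff0]; exact Complex.ofReal_ne_zero.2 hδpos.ne'
    · rw [stmt8P_coeff1]; exact Complex.ofReal_ne_zero.2 h1ne
    · rw [stmt8P_coeff2 n hn]; exact Complex.ofReal_ne_zero.2 h2ne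
    · rw [show j + 1 + 1 + 1 = j + 3 from rfl, stmt8P_coeff_ge3,
        if_pos (Finset.mem_range.2 (by omega))]
      exact Complex.ofReal_ne_zero.2 (stmt8h_ne hb0 n _)
  · -- quotient bounds
    intro k hk2 hk
    obtain ⟨j, rfl⟩ : ∃ j, k = j + 2 := ⟨k - 2, by omega⟩
    simp only [show j + 2 - 1 = j + 1 from rfl, Nat.add_sub_cancel]
    rcases j with _|_|_|m
    · -- k = 2
      rw [show (0:ℕ) + 1 = 1 from rfl, show (0:ℕ) + 2 = 2 from rfl,
        stmt8P_coeff0, stmt8P_coeff1, stmt8P_coeff2 n hn,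
        hred _ _ _ hδpos.ne' h2ne]
      have hnum : A^2 ≤ (stmt8h n b 0 - 2*δ)^2 := by rw [hh0]; nlinarith
      have hDen : |δ| * |stmt8h n b 1 + δ| ≤ A^2/(2*b) := by
        rw [abs_of_pos hδpos]
        calc δ * |stmt8h n b 1 + δ| ≤ δ * (B + δ) := by nlinarith [abs_nonneg (stmt8h n b 1 + δ)]
          _ ≤ δ * (B + 1) := by nlinarith
          _ ≤ A^2/(2*b) := hδA
      have hDenPos : 0 < |δ| * |stmt8h n b 1 + δ| :=
        mul_pos (abs_pos.2 hδpos.ne') (abs_pos.2 h2ne)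
      rw [lt_div_iff₀ hDenPos]
      have hkey : (b - ε) * (|δ| * |stmt8h n b 1 + δ|) ≤ b * (A^2/(2*b)) := by
        rcases le_or_gt (b - ε) 0 with h | h
        · nlinarith [sq_nonneg A]
        · calc (b - ε) * (|δ| * |stmt8h n b 1 + δ|) ≤ b * (|δ| * |stmt8h n b 1 + δ|) := by
                nlinarith
            _ ≤ b * (A^2/(2*b)) := by nlinarith
      have heq : b * (A^2/(2*b)) = A^2/2 := by field_simp
      nlinarith [sq_nonneg A]
    · -- k = 3
      rw [show (1:ℕ) + 1 = 2 from rfl, show (1:ℕ) + 2 = 0 + 3 from rfl,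
        stmt8P_coeff1, stmt8P_coeff2 n hn, stmt8P_coeff_ge3,
        if_pos (Finset.mem_range.2 (by omega)),
        hred _ _ _ h1ne (stmt8h_ne hb0 n 2)]
      have hnum : (B - δ)^2 ≤ (stmt8h n b 1 + δ)^2 := by
        rw [← sq_abs (stmt8h n b 1 + δ)]
        nlinarith [abs_nonneg (stmt8h n b 1 + δ)]
      rw [habs0, hh2abs, lt_div_iff₀ (by positivity)]
      have e : (b - ε) * ((A + 2*δ)*Cc)
          = b*(A*Cc) + 2*δ*(b*Cc) - ε*(A*Cc) - 2*ε*δ*Cc := by ring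
      have e2 : (B - δ)^2 = b*(A*Cc) - 2*B*δ + δ^2 := by rw [sub_sq, hBsq]
      have h9 : 0 < ε*δ*Cc := by positivity
      linarith [hδ3, sq_nonneg δ, hnum, e, e2, h9]
    · -- k = 4
      rw [show (2:ℕ) + 1 = 0 + 3 from rfl, show (2:ℕ) + 2 = 1 + 3 from rfl,
        stmt8P_coeff2 n hn, stmt8P_coeff_ge3, stmt8P_coeff_ge3,
        if_pos (Finset.mem_range.2 (by omega)), if_pos (Finset.mem_range.2 (by omega)),
        hred _ _ _ h2ne (stmt8h_ne hb0 n 3)]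
      have hnum : (stmt8h n b 2)^2 = Cc^2 := by rw [← sq_abs (stmt8h n b 2), hh2abs]
      rw [hnum, hh3abs, lt_div_iff₀ (mul_pos (abs_pos.2 h2ne) hDpos)]
      have hY : 0 ≤ |stmt8h n b 1 + δ| * D := by positivity
      have hC2 : 0 < Cc^2 := pow_pos hCpos 2
      rcases le_or_gt (b - ε) 0 with h | h
      · nlinarith
      · have h6 : |stmt8h n b 1 + δ| * D ≤ (B+δ)*D :=
          mul_le_mul_of_nonneg_right habs1up hDpos.le
        have h10 : (b - ε) * (|stmt8h n b 1 + δ| * D) ≤ (b - ε) * ((B+δ)*D) :=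
          mul_le_mul_of_nonneg_left h6 h.le
        have e : (b - ε) * ((B+δ)*D) = b*(B*D) + b*δ*D - ε*B*D - ε*δ*D := by ring
        have h8 : b*δ*D < ε*B*D := by
          have := mul_lt_mul_of_pos_right hδ4 hDpos
          linarith [this]
        have h9 : 0 < ε*δ*D := by positivity
        linarith [hCsq, e, h8, h9, h10]
    · -- k ≥ 5
      rw [show m + 1 + 1 + 1 = m + 3 from rfl, show m + 3 + 1 = (m+1) + 3 from rfl,
        show m + 3 + 2 = (m+2) + 3 from rfl,
        stmt8P_coeff_ge3, stmt8P_coeff_ge3, stmt8P_coeff_ge3,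
        if_pos (Finset.mem_range.2 (by omega)), if_pos (Finset.mem_range.2 (by omega)),
        if_pos (Finset.mem_range.2 (by omega)),
        hred _ _ _ (stmt8h_ne hb0 n _) (stmt8h_ne hb0 n _)]
      have hval : (stmt8h n b ((m+1)+2))^2 / (|stmt8h n b (m+2)| * |stmt8h n b ((m+2)+2)|)
          = b := by
        rw [← sq_abs (stmt8h n b ((m+1)+2)), stmt8h_abs hb0, stmt8h_abs hb0, stmt8h_abs hb0,
          show (m+1)+2 = (m+2)+1 from rfl, stmt8g_sq hb0]
        have h1 := stmt8g_pos hb0 n (m+2)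
        have h2 := stmt8g_pos hb0 n (m+2+2)
        field_simp
      rw [hval]
      linarith
  · -- multiple root at 1
    refine ⟨1, ?_⟩
    have hPne : stmt8P n b δ ≠ 0 := by
      intro hc
      have h := stmt8P_coeff0 n b δ
      rw [hc, Polynomial.coeff_zero] at h
      exact hδpos.ne' (by exact_mod_cast h.symm)
    rw [Polynomial.le_rootMultiplicity_iff hPne]
    have hS0 : (stmt8H n b).eval 1 = 0 := by
      rw [stmt8H_eval1, stmt8_S0 n hn hb2]
      norm_num
    have hroot : (stmt8P n b δ).IsRoot 1 := by
      unfold stmt8P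
      simp [Polynomial.IsRoot, hS0]
    obtain ⟨Q, hQ⟩ := Polynomial.dvd_iff_isRoot.2 hroot
    have hderiv : ((stmt8P n b δ).derivative).eval 1 = 0 := by
      unfold stmt8P
      rw [Polynomial.derivative_add, Polynomial.eval_add]
      have hpart2 : ((Polynomial.C (δ:ℂ) * (Polynomial.X - Polynomial.C 1) ^ 2).derivative).eval 1
          = 0 := by
        simp [Polynomial.derivative_mul, Polynomial.derivative_pow]
      rw [hpart2, add_zero, Polynomial.derivative_mul, Polynomial.derivative_X, one_mul,
        Polynomial.eval_add, Polynomial.eval_mul, Polynomial.eval_X, one_mul, hS0,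
        stmt8H_deriv_eval1, stmt8_S1 n hn hb2]
      norm_num
    have hQroot : Q.IsRoot 1 := by
      rw [hQ, Polynomial.derivative_mul] at hderiv
      simp only [Polynomial.derivative_sub, Polynomial.derivative_X, Polynomial.derivative_C,
        sub_zero, one_mul, Polynomial.eval_add, Polynomial.eval_mul, Polynomial.eval_sub,
        Polynomial.eval_X, Polynomial.eval_C, Polynomial.eval_one, sub_self, zero_mul,
        add_zero] at hderiv
      exact hderiv
    obtain ⟨R, hR⟩ := Polynomial.dvd_iff_isRoot.2 hQroot
    exact ⟨R, by rw [hQ, hR]; ring⟩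
end

section
/- For every ε > 0 there exists an entire function f(z) = ∑_{k=0}^∞ a_k z^k with a_k ∈ ℂ \ {0} for all k, such that |q_k(f)| > b_∞ - ε for all k ≥ 2, and f has a multiple root. -/
open Finset Filter

noncomputable section

namespace Stmt9

variable (B : ℝ) (j : ℕ)

/-- tail terms of the defining series -/
def g (i : ℕ) : ℝ := B ^ (-((i : ℝ) + 1) ^ 2 / 2)

/-- Gaussian profile centered at `j` -/
def m (k : ℕ) : ℝ := B ^ (-((k : ℝ) - (j : ℝ)) ^ 2 / 2)

def T : ℝ := ∑' i : ℕ, g B (i + j)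
def U : ℝ := ∑' i : ℕ, ((i : ℝ) + 1) * g B (i + j)

def aR (k : ℕ) : ℝ :=
  m B j k + (if k = 0 then T B j + U B j else 0) + (if k = 1 then -(U B j) else 0)
    + (if k = j then -2 else 0)

def cR (k : ℕ) : ℝ := ∑' i : ℕ, aR B j (i + (k+1))

def aC (k : ℕ) : ℂ := ((aR B j k : ℝ) : ℂ)

def bR (k : ℕ) : ℝ := ∑' i : ℕ, ((i:ℝ)+1) * aR B j (i + (k+2))

section Basic

variable (hB1 : 1 < B)
include hB1

lemma B0 : (0:ℝ) < B := lt_trans one_pos hB1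

lemma g_pos (i : ℕ) : 0 < g B i := Real.rpow_pos_of_pos (B0 B hB1) _

lemma m_pos (k : ℕ) : 0 < m B j k := Real.rpow_pos_of_pos (B0 B hB1) _

lemma rho_lt_one : g B 0 < 1 := by
  apply Real.rpow_lt_one_of_one_lt_of_neg hB1; norm_num

lemma rho_pos : 0 < g B 0 := g_pos B hB1 0

omit hB1 in
/-- `g B 0 = B ^ (-1/2)` -/
lemma rho_def : g B 0 = B ^ (-(1:ℝ)/2) := by
  rw [g]; norm_num

lemma rho_pow (n : ℕ) : (g B 0) ^ n = B ^ (-(n:ℝ)/2) := by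
  rw [rho_def B, ← Real.rpow_natCast (B ^ (-(1:ℝ)/2)) n,
    ← Real.rpow_mul (B0 B hB1).le]
  congr 1; ring

lemma g_le_geo (i : ℕ) : g B i ≤ (g B 0) ^ (i + 1) := by
  rw [rho_pow B hB1]
  apply Real.rpow_le_rpow_of_exponent_le hB1.le
  have h : (0:ℝ) ≤ (i:ℝ) := Nat.cast_nonneg i
  push_cast
  nlinarith

lemma Sgeo : Summable (fun i : ℕ => (g B 0) ^ (i + 1)) := by
  have := (summable_geometric_of_lt_one (rho_pos B hB1).le
    (rho_lt_one B hB1)).mul_left (g B 0)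
  exact this.congr (fun i => by rw [pow_succ]; ring)

lemma Sg : Summable (g B) :=
  Summable.of_nonneg_of_le (fun i => (g_pos B hB1 i).le) (g_le_geo B hB1)
    (Sgeo B hB1)

lemma Sgeo' : Summable (fun i : ℕ => ((i:ℝ) + 1) * (g B 0) ^ (i + 1)) := by
  have hn : ‖g B 0‖ < 1 := by
    rw [Real.norm_eq_abs, abs_of_pos (rho_pos B hB1)]; exact rho_lt_one B hB1
  have h1 := summable_pow_mul_geometric_of_norm_lt_one (R := ℝ) 1 hn
  have h2 := (h1.add (summable_geometric_of_lt_one (rho_pos B hB1).le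
    (rho_lt_one B hB1))).mul_left (g B 0)
  exact h2.congr (fun i => by rw [pow_succ]; push_cast; ring)

lemma Sg' : Summable (fun i : ℕ => ((i:ℝ) + 1) * g B i) := by
  apply Summable.of_nonneg_of_le
    (fun i => mul_nonneg (by positivity) (g_pos B hB1 i).le) (fun i => ?_)
    (Sgeo' B hB1)
  have h1 := g_le_geo B hB1 i
  have h2 : (0:ℝ) ≤ (i:ℝ) + 1 := by positivity
  nlinarith

end Basic

section WithSum

variable (hB1 : 1 < B) (hg : ∑' i : ℕ, g B i = 1/2)
include hB1 hg

lemma rho_le_half : g B 0 ≤ 1/2 := by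
  rw [← hg]
  exact Summable.le_tsum (Sg B hB1) 0 (fun i _ => (g_pos B hB1 i).le)

lemma rho_ge_third : 1/3 ≤ g B 0 := by
  have h1 : (1:ℝ)/2 ≤ (g B 0) * (1 - g B 0)⁻¹ := by
    rw [← hg]
    have h2 := Summable.tsum_le_tsum (g_le_geo B hB1) (Sg B hB1) (Sgeo B hB1)
    calc ∑' i, g B i ≤ ∑' i : ℕ, (g B 0)^(i+1) := h2
    _ = (g B 0) * ∑' i : ℕ, (g B 0)^i := by
        rw [← tsum_mul_left]; exact tsum_congr (fun i => by rw [pow_succ]; ring)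
    _ = (g B 0) * (1 - g B 0)⁻¹ := by
        rw [tsum_geometric_of_lt_one (rho_pos B hB1).le (rho_lt_one B hB1)]
  have h3 : 0 < 1 - g B 0 := by linarith [rho_lt_one B hB1]
  rw [← div_eq_mul_inv, le_div_iff₀ h3] at h1
  linarith

omit hg in
lemma rho_sq : (g B 0)^2 = B⁻¹ := by
  rw [rho_pow B hB1 2, show (-((2:ℕ):ℝ)/2) = -1 by norm_num, Real.rpow_neg_one]

lemma B4 : 4 ≤ B := by
  have h1 := rho_le_half B hB1 hg
  have h2 : (g B 0)^2 ≤ 1/4 := by nlinarith [rho_pos B hB1]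
  rw [rho_sq B hB1] at h2
  have hB0 := B0 B hB1
  rw [inv_le_comm₀ hB0 (by norm_num)] at h2
  linarith

lemma B9 : B ≤ 9 := by
  have h1 := rho_ge_third B hB1 hg
  have h2 : 1/9 ≤ (g B 0)^2 := by nlinarith [rho_pos B hB1]
  rw [rho_sq B hB1] at h2
  have hB0 := B0 B hB1
  rw [le_inv_comm₀ (by norm_num) hB0] at h2
  linarith

end WithSum

section Master

variable (hB1 : 1 < B) (hB4 : 4 ≤ B)
include hB1

lemma m_ratio (k : ℕ) : m B j (k+1) = m B j k * B ^ ((j:ℝ) - k - 1/2) := by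
  rw [m, m, ← Real.rpow_add (B0 B hB1)]
  congr 1; push_cast; ring

include hB4 in
lemma Bexp_le (k : ℕ) (hk : j ≤ k) : B ^ ((j:ℝ) - k - 1/2) ≤ ((1:ℝ)/4) ^ (k - j) := by
  have h1 : B ^ ((j:ℝ) - k - 1/2) ≤ B ^ (-(((k - j : ℕ)):ℝ)) := by
    apply Real.rpow_le_rpow_of_exponent_le hB1.le
    have : ((k - j : ℕ):ℝ) = (k:ℝ) - (j:ℝ) := by
      push_cast [Nat.cast_sub hk]; ring
    rw [this]; linarith
  have h2 : B ^ (-(((k - j : ℕ)):ℝ)) = (B⁻¹) ^ (k - j) := by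
    rw [Real.rpow_neg (B0 B hB1).le, Real.rpow_natCast, inv_pow]
  calc B ^ ((j:ℝ) - k - 1/2) ≤ (B⁻¹) ^ (k - j) := by rw [← h2]; exact h1
    _ ≤ ((1:ℝ)/4) ^ (k - j) := by
        apply pow_le_pow_left₀ (by positivity)
        rw [one_div]
        exact inv_anti₀ (by norm_num) hB4

include hB4 in
lemma master (c : ℕ) (x : ℝ) (hx : 0 ≤ x) :
    Summable (fun k : ℕ => ((k:ℝ)+1) * m B j (k+c) * x ^ k) := by
  rcases eq_or_lt_of_le hx with h0 | hxpos
  · apply summable_of_ne_finset_zero (s := {0})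
    intro k hk
    simp only [Finset.mem_singleton] at hk
    rw [← h0, zero_pow hk, mul_zero]
  · -- first the case c = 0
    have base : Summable (fun k : ℕ => ((k:ℝ)+1) * m B j k * x ^ k) := by
      obtain ⟨n₀, hn₀⟩ := exists_pow_lt_of_lt_one
        (show (0:ℝ) < 1/(4*x) by positivity) (show (1:ℝ)/4 < 1 by norm_num)
      apply summable_of_ratio_norm_eventually_le (r := 1/2) (by norm_num)
      filter_upwards [eventually_ge_atTop (j + n₀)] with k hk
      have hmk := m_pos B j hB1 k
      have hmk1 := m_pos B j hB1 (k+1)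
      have hxk : (0:ℝ) < x ^ k := by positivity
      have hjk : j ≤ k := le_trans (Nat.le_add_right _ _) hk
      have h1 : B ^ ((j:ℝ) - k - 1/2) ≤ ((1:ℝ)/4) ^ (k - j) :=
        Bexp_le B j hB1 hB4 k hjk
      have h2 : ((1:ℝ)/4) ^ (k - j) ≤ ((1:ℝ)/4) ^ n₀ := by
        apply pow_le_pow_of_le_one (by norm_num) (by norm_num)
        omega
      have h3 : B ^ ((j:ℝ) - k - 1/2) * x < 1/4 := by
        have e1 : B ^ ((j:ℝ) - k - 1/2) * x ≤ ((1:ℝ)/4) ^ n₀ * x :=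
          mul_le_mul_of_nonneg_right (h1.trans h2) hx
        have e2 : ((1:ℝ)/4) ^ n₀ * x < (1/(4*x)) * x :=
          mul_lt_mul_of_pos_right hn₀ hxpos
        have e3 : (1/(4*x)) * x = 1/4 := by field_simp
        linarith
      rw [Real.norm_eq_abs, Real.norm_eq_abs, abs_of_pos (by positivity),
        abs_of_pos (by positivity)]
      rw [m_ratio B j hB1 k]
      push_cast
      have hBe : (0:ℝ) < B ^ ((j:ℝ) - k - 1/2) := Real.rpow_pos_of_pos (B0 B hB1) _
      have hk2 : ((k:ℝ) + 1 + 1) ≤ 2*((k:ℝ)+1) := by push_cast; linarith [Nat.cast_nonneg (α := ℝ) k]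
      calc ((k:ℝ) + 1 + 1) * (m B j k * B ^ ((j:ℝ) - k - 1/2)) * x ^ (k+1)
          = ((k:ℝ) + 1 + 1) * m B j k * x^k * (B ^ ((j:ℝ) - k - 1/2) * x) := by ring
        _ ≤ ((k:ℝ) + 1 + 1) * m B j k * x^k * (1/4) := by
            apply mul_le_mul_of_nonneg_left h3.le (by positivity)
        _ ≤ 2*((k:ℝ)+1) * m B j k * x^k * (1/4) := by
            have : (0:ℝ) ≤ m B j k * x ^ k * (1/4) := by positivity
            nlinarith
        _ = 1/2 * (((k:ℝ)+1) * m B j k * x ^ k) := by ring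
    -- now shift by c
    have shifted := (summable_nat_add_iff c).mpr base
    apply Summable.of_nonneg_of_le
      (fun k => mul_nonneg (mul_nonneg (by positivity) (m_pos B j hB1 (k+c)).le)
        (pow_nonneg hx k))
      (fun k => ?_) (shifted.mul_left ((x⁻¹)^c))
    have hxc : (0:ℝ) < x ^ c := by positivity
    have hrw : (x⁻¹)^c * (((((k+c:ℕ)):ℝ)+1) * m B j (k+c) * x^(k+c)) =
        (((k:ℝ)+(c:ℝ))+1) * m B j (k+c) * x^k := by
      rw [pow_add, inv_pow]
      push_cast
      field_simp
    show ((k:ℝ)+1) * m B j (k+c) * x ^ k ≤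
      (x⁻¹)^c * (((((k+c:ℕ)):ℝ)+1) * m B j (k+c) * x^(k+c))
    rw [hrw]
    apply mul_le_mul_of_nonneg_right _ (pow_nonneg hx k)
    apply mul_le_mul_of_nonneg_right _ (m_pos B j hB1 (k+c)).le
    have : (0:ℝ) ≤ (c:ℝ) := Nat.cast_nonneg c
    linarith

end Master

section Series

variable (hB1 : 1 < B) (hB4 : 4 ≤ B) (hj : 2 ≤ j)
  (hg : ∑' i : ℕ, g B i = 1/2)

include hB1

lemma m_j : m B j j = 1 := by
  rw [m]
  norm_num

lemma m_tail (i : ℕ) : m B j (i+(j+1)) = g B i := by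
  rw [m, g]
  congr 1
  push_cast
  ring

lemma m_rev (i : ℕ) (hij : i < j) : m B j (j-(i+1)) = g B i := by
  rw [m, g]
  congr 1
  have : ((j - (i+1) : ℕ):ℝ) = (j:ℝ) - (i:ℝ) - 1 := by
    rw [Nat.cast_sub (by omega)]
    push_cast; ring
  rw [this]
  ring

lemma ST : Summable (fun i : ℕ => g B (i+j)) :=
  (summable_nat_add_iff j).mpr (Sg B hB1)

lemma SU : Summable (fun i : ℕ => ((i:ℝ)+1) * g B (i+j)) := by
  apply Summable.of_nonneg_of_le
    (fun i => mul_nonneg (by positivity) (g_pos B hB1 (i+j)).le)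
    (fun i => ?_) ((summable_nat_add_iff j).mpr (Sg' B hB1))
  have h1 := (g_pos B hB1 (i+j)).le
  have h2 : ((i:ℝ)+1) ≤ (((i+j:ℕ)):ℝ)+1 := by push_cast; linarith [Nat.cast_nonneg (α := ℝ) j]
  exact mul_le_mul_of_nonneg_right h2 h1

lemma T_nonneg : 0 ≤ T B j :=
  tsum_nonneg (fun i => (g_pos B hB1 (i+j)).le)

lemma U_nonneg : 0 ≤ U B j :=
  tsum_nonneg (fun i => mul_nonneg (by positivity) (g_pos B hB1 (i+j)).le)

include hg in
lemma g_tail_le (i : ℕ) : g B (i+j) ≤ g B j * (1/2:ℝ)^i := by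
  have h1 : g B (i+j) ≤ g B j * (g B 0)^i := by
    rw [rho_pow B hB1, g, g, ← Real.rpow_add (B0 B hB1)]
    apply Real.rpow_le_rpow_of_exponent_le hB1.le
    push_cast
    nlinarith [Nat.cast_nonneg (α := ℝ) i, Nat.cast_nonneg (α := ℝ) j]
  refine h1.trans ?_
  apply mul_le_mul_of_nonneg_left _ (g_pos B hB1 j).le
  exact pow_le_pow_left₀ (rho_pos B hB1).le (rho_le_half B hB1 hg) i

include hg in
lemma T_le : T B j ≤ 2 * g B j := by
  have h1 : Summable (fun i : ℕ => g B j * (1/2:ℝ)^i) :=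
    (summable_geometric_of_lt_one (by norm_num) (by norm_num)).mul_left _
  have h2 := Summable.tsum_le_tsum (g_tail_le B j hB1 hg) (ST B j hB1) h1
  rw [tsum_mul_left, tsum_geometric_of_lt_one (by norm_num) (by norm_num)] at h2
  rw [T]
  norm_num at h2
  linarith

omit hB1 in
lemma half_summable : Summable (fun i : ℕ => ((i:ℝ)+1) * (1/2:ℝ)^i) := by
  have h1 := summable_pow_mul_geometric_of_norm_lt_one (R := ℝ) 1
    (r := (1/2:ℝ)) (by norm_num [Real.norm_eq_abs, abs])
  have := h1.add (summable_geometric_of_lt_one (by norm_num : (0:ℝ) ≤ 1/2) (by norm_num))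
  exact this.congr (fun i => by push_cast; ring)

omit hB1 in
lemma half_tsum : ∑' i : ℕ, ((i:ℝ)+1) * (1/2:ℝ)^i = 4 := by
  have h1 := summable_pow_mul_geometric_of_norm_lt_one (R := ℝ) 1
    (r := (1/2:ℝ)) (by norm_num [Real.norm_eq_abs, abs])
  have h2 : Summable (fun i : ℕ => ((1:ℝ)/2)^i) :=
    summable_geometric_of_lt_one (by norm_num) (by norm_num)
  have key : ∑' i : ℕ, ((i:ℝ)+1) * (1/2:ℝ)^i
      = (∑' i : ℕ, (i:ℝ) * (1/2:ℝ)^i) + ∑' i : ℕ, ((1:ℝ)/2)^i := by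
    rw [← Summable.tsum_add (h1.congr (fun i => by push_cast; ring)) h2]
    exact tsum_congr (fun i => by push_cast; ring)
  rw [key, tsum_geometric_of_lt_one (by norm_num) (by norm_num),
    tsum_coe_mul_geometric_of_norm_lt_one (by norm_num [Real.norm_eq_abs, abs])]
  norm_num

include hg in
lemma U_le : U B j ≤ 4 * g B j := by
  have h1 : Summable (fun i : ℕ => g B j * (((i:ℝ)+1) * (1/2:ℝ)^i)) :=
    (half_summable).mul_left _
  have hle : ∀ i : ℕ, ((i:ℝ)+1) * g B (i+j) ≤ g B j * (((i:ℝ)+1) * (1/2:ℝ)^i) := by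
    intro i
    have := g_tail_le B j hB1 hg i
    have hi : (0:ℝ) ≤ (i:ℝ)+1 := by positivity
    nlinarith [g_pos B hB1 (i+j)]
  have h2 := Summable.tsum_le_tsum hle (SU B j hB1) h1
  rw [tsum_mul_left, half_tsum] at h2
  rw [U]
  linarith

include hg in
lemma gj_m0 : g B j ≤ (1/2:ℝ)^(2*j+1) * m B j 0 := by
  have h1 : g B j = (g B 0)^(2*j+1) * m B j 0 := by
    rw [rho_pow B hB1, g, m, ← Real.rpow_add (B0 B hB1)]
    congr 1; push_cast; ring
  rw [h1]
  apply mul_le_mul_of_nonneg_right _ (m_pos B j hB1 0).le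
  exact pow_le_pow_left₀ (rho_pos B hB1).le (rho_le_half B hB1 hg) _

include hg in
lemma gj_m1 : g B j ≤ (1/2:ℝ)^(4*j) * m B j 1 := by
  have h1 : g B j = (g B 0)^(4*j) * m B j 1 := by
    rw [rho_pow B hB1, g, m, ← Real.rpow_add (B0 B hB1)]
    congr 1; push_cast; ring
  rw [h1]
  apply mul_le_mul_of_nonneg_right _ (m_pos B j hB1 1).le
  exact pow_le_pow_left₀ (rho_pos B hB1).le (rho_le_half B hB1 hg) _

include hg in
lemma TU_m0 : T B j + U B j ≤ 6 * ((1/2:ℝ)^(2*j+1) * m B j 0) := by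
  have := T_le B j hB1 hg
  have := U_le B j hB1 hg
  have := gj_m0 B j hB1 hg
  have := g_pos B hB1 j
  nlinarith

include hg in
lemma U_m1 : U B j ≤ 4 * ((1/2:ℝ)^(4*j) * m B j 1) := by
  have := U_le B j hB1 hg
  have := gj_m1 B j hB1 hg
  have := g_pos B hB1 j
  nlinarith

omit hB1 in
include hj in
lemma aR_0 : aR B j 0 = m B j 0 + (T B j + U B j) := by
  rw [aR]
  have h1 : ¬ (0 = 1) := by omega
  have h2 : ¬ (0 = j) := by omega
  simp [h1, h2]

omit hB1 in
include hj in
lemma aR_1 : aR B j 1 = m B j 1 - U B j := by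
  rw [aR]
  have h2 : ¬ (1 = j) := by omega
  simp [h2]
  ring

omit hB1 in
lemma aR_ge2 (k : ℕ) (hk : 2 ≤ k) : aR B j k = m B j k + (if k = j then -2 else 0) := by
  rw [aR]
  have h1 : ¬ (k = 0) := by omega
  have h2 : ¬ (k = 1) := by omega
  simp [h1, h2]

lemma abs_aR (k : ℕ) (hk : 2 ≤ k) : |aR B j k| = m B j k := by
  rw [aR_ge2 B j k hk]
  split_ifs with h
  · rw [h, m_j B j hB1]
    norm_num
  · rw [add_zero]
    exact abs_of_pos (m_pos B j hB1 k)

include hg hj in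
lemma small_pow0 : 6 * ((1/2:ℝ)^(2*j+1) * m B j 0) ≤ 2 * m B j 0 := by
  have h1 : ((1:ℝ)/2)^(2*j+1) ≤ (1/2:ℝ)^5 := by
    apply pow_le_pow_of_le_one (by norm_num) (by norm_num)
    omega
  have := (m_pos B j hB1 0).le
  nlinarith

include hg hj in
lemma small_pow1 : 4 * ((1/2:ℝ)^(4*j) * m B j 1) ≤ (1/2) * m B j 1 := by
  have h1 : ((1:ℝ)/2)^(4*j) ≤ (1/2:ℝ)^8 := by
    apply pow_le_pow_of_le_one (by norm_num) (by norm_num)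
    omega
  have := (m_pos B j hB1 1).le
  nlinarith

include hg hj in
lemma U_lt_m1 : U B j ≤ (1/2) * m B j 1 :=
  le_trans (U_m1 B j hB1 hg) (small_pow1 B j hB1 hj hg)

include hg hj in
lemma aR_abs_le (k : ℕ) : |aR B j k| ≤ 3 * m B j k := by
  rcases Nat.lt_or_ge k 2 with hk | hk
  · interval_cases k
    · rw [aR_0 B j hj]
      have h1 := T_nonneg B j hB1
      have h2 := U_nonneg B j hB1
      have h3 := (TU_m0 B j hB1 hg).trans (small_pow0 B j hB1 hj hg)
      have h4 := m_pos B j hB1 0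
      rw [abs_of_pos (by linarith)]
      linarith
    · rw [aR_1 B j hj]
      have h2 := U_nonneg B j hB1
      have h3 := U_lt_m1 B j hB1 hj hg
      have h4 := m_pos B j hB1 1
      rw [abs_of_pos (by linarith)]
      linarith
  · rw [abs_aR B j hB1 k hk]
    have := m_pos B j hB1 k
    linarith

include hB4 in
lemma Sm1 : Summable (fun k : ℕ => m B j k) := by
  apply Summable.of_nonneg_of_le (fun k => (m_pos B j hB1 k).le) (fun k => ?_)
    (master B j hB1 hB4 0 1 (by norm_num))
  have h1 := (m_pos B j hB1 k).le
  have h2 : (0:ℝ) ≤ (k:ℝ) := Nat.cast_nonneg k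
  simp only [add_zero, one_pow, mul_one]
  nlinarith

include hg hj hB4 in
lemma SaR : Summable (aR B j) :=
  Summable.of_norm_bounded ((Sm1 B j hB1 hB4).mul_left 3)
    (fun k => by rw [Real.norm_eq_abs]; exact aR_abs_le B j hB1 hj hg k)

include hg hj hB4 in
lemma SkaR : Summable (fun k : ℕ => (k:ℝ) * aR B j k) := by
  apply Summable.of_norm_bounded ((master B j hB1 hB4 0 1 (by norm_num)).mul_left 3)
  intro k
  rw [Real.norm_eq_abs, abs_mul, Nat.abs_cast]
  have h1 := aR_abs_le B j hB1 hj hg k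
  have h2 : (0:ℝ) ≤ (k:ℝ) := Nat.cast_nonneg k
  have h3 := abs_nonneg (aR B j k)
  have h4 := (m_pos B j hB1 k).le
  simp only [add_zero, one_pow, mul_one]
  nlinarith

include hg in
lemma head_g (hjj : True) : ∑ i ∈ range j, g B i = 1/2 - T B j := by
  have h := Summable.sum_add_tsum_nat_add j (Sg B hB1)
  rw [hg] at h
  rw [T]
  linarith

include hg in
lemma head_m : ∑ k ∈ range (j+1), m B j k = 3/2 - T B j := by
  have h0 := Finset.sum_range_reflect (fun k => m B j k) (j+1)
  rw [← h0, Finset.sum_range_succ' (fun i => m B j (j+1-1-(i:ℕ))) j]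
  have h1 : ∀ i ∈ range j, m B j (j+1-1-(i+1)) = g B i := by
    intro i hi
    have : j+1-1-(i+1) = j - (i+1) := by omega
    rw [this, m_rev B j hB1 i (mem_range.mp hi)]
  rw [Finset.sum_congr rfl h1]
  have h2 : j+1-1-0 = j := by omega
  rw [h2, m_j B j hB1, head_g B j hB1 hg trivial]
  ring

include hg hj hB4 in
lemma E1 : ∑' k : ℕ, aR B j k = 0 := by
  have hsplit := Summable.sum_add_tsum_nat_add (j+1) (SaR B j hB1 hB4 hj hg)
  have htail : ∀ i : ℕ, aR B j (i+(j+1)) = g B i := by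
    intro i
    rw [aR]
    have h0 : ¬ (i+(j+1) = 0) := by omega
    have h1 : ¬ (i+(j+1) = 1) := by omega
    have h2 : ¬ (i+(j+1) = j) := by omega
    simp [h0, h1, h2]
    exact m_tail B j hB1 i
  have htail' : ∑' i : ℕ, aR B j (i+(j+1)) = 1/2 := by
    rw [tsum_congr htail, hg]
  have hhead : ∑ k ∈ range (j+1), aR B j k = -(1/2) := by
    have e1 : ∑ k ∈ range (j+1), aR B j k
        = ∑ k ∈ range (j+1), m B j k
          + ∑ k ∈ range (j+1), (if k = 0 then T B j + U B j else 0)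
          + ∑ k ∈ range (j+1), (if k = 1 then -(U B j) else 0)
          + ∑ k ∈ range (j+1), (if k = j then (-2:ℝ) else 0) := by
      rw [← Finset.sum_add_distrib, ← Finset.sum_add_distrib, ← Finset.sum_add_distrib]
      rfl
    rw [e1, Finset.sum_ite_eq' (range (j+1)) 0 (fun _ => T B j + U B j),
      Finset.sum_ite_eq' (range (j+1)) 1 (fun _ => -(U B j)),
      Finset.sum_ite_eq' (range (j+1)) j (fun _ => (-2:ℝ)),
      head_m B j hB1 hg]
    have m0 : (0:ℕ) ∈ range (j+1) := by simp
    have m1 : (1:ℕ) ∈ range (j+1) := by simp; omega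
    have mj : j ∈ range (j+1) := by simp
    rw [if_pos m0, if_pos m1, if_pos mj]
    ring
  rw [← hsplit, htail', hhead]
  ring

include hg hj hB4 in
lemma E2 : ∑' k : ℕ, (k:ℝ) * aR B j k = 0 := by
  have hsplit := Summable.sum_add_tsum_nat_add (j+1) (SkaR B j hB1 hB4 hj hg)
  -- tail = j/2 + V₁
  have htail : ∀ i : ℕ, ((i+(j+1) : ℕ):ℝ) * aR B j (i+(j+1))
      = (j:ℝ) * g B i + (((i:ℝ)+1) * g B i) := by
    intro i
    rw [aR]
    have h0 : ¬ (i+(j+1) = 0) := by omega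
    have h1 : ¬ (i+(j+1) = 1) := by omega
    have h2 : ¬ (i+(j+1) = j) := by omega
    simp [h0, h1, h2]
    rw [m_tail B j hB1 i]
    push_cast
    ring
  have htail' : ∑' i : ℕ, ((i+(j+1) : ℕ):ℝ) * aR B j (i+(j+1))
      = (j:ℝ) * (1/2) + ∑' i : ℕ, ((i:ℝ)+1) * g B i := by
    rw [tsum_congr htail, Summable.tsum_add ((Sg B hB1).mul_left _) (Sg' B hB1),
      tsum_mul_left, hg]
  -- head
  have hg_head : ∑ i ∈ range j, ((i:ℝ)+1) * g B i
      = (∑' i : ℕ, ((i:ℝ)+1) * g B i) - (U B j + (j:ℝ) * T B j) := by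
    have h := Summable.sum_add_tsum_nat_add j (Sg' B hB1)
    have h2 : ∑' i : ℕ, (((i+j:ℕ):ℝ)+1) * g B (i+j)
        = U B j + (j:ℝ) * T B j := by
      have e : ∀ i : ℕ, (((i+j:ℕ):ℝ)+1) * g B (i+j)
          = (((i:ℝ)+1) * g B (i+j)) + (j:ℝ) * g B (i+j) := by
        intro i; push_cast; ring
      rw [tsum_congr e, Summable.tsum_add (SU B j hB1) ((ST B j hB1).mul_left _),
        tsum_mul_left]
      rfl
    rw [h2] at h
    linarith
  have hhead_m : ∑ k ∈ range (j+1), (k:ℝ) * m B j k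
      = (j:ℝ) * (1/2 - T B j)
        - ((∑' i : ℕ, ((i:ℝ)+1) * g B i) - (U B j + (j:ℝ) * T B j)) + (j:ℝ) := by
    have h0 := Finset.sum_range_reflect (fun k => (k:ℝ) * m B j k) (j+1)
    rw [← h0, Finset.sum_range_succ' (fun i => ((j+1-1-(i:ℕ) : ℕ):ℝ) * m B j (j+1-1-(i:ℕ))) j]
    have h1 : ∀ i ∈ range j, ((j+1-1-(i+1) : ℕ):ℝ) * m B j (j+1-1-(i+1))
        = (j:ℝ) * g B i - (((i:ℝ)+1) * g B i) := by
      intro i hi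
      have hij := mem_range.mp hi
      have e1 : j+1-1-(i+1) = j - (i+1) := by omega
      have e2 : ((j - (i+1) : ℕ):ℝ) = (j:ℝ) - (i:ℝ) - 1 := by
        rw [Nat.cast_sub (by omega)]; push_cast; ring
      rw [e1, m_rev B j hB1 i hij, e2]
      ring
    rw [Finset.sum_congr rfl h1]
    have h2 : j+1-1-0 = j := by omega
    rw [h2, m_j B j hB1, Finset.sum_sub_distrib, ← Finset.mul_sum,
      head_g B j hB1 hg trivial, hg_head]
    ring
  have hhead : ∑ k ∈ range (j+1), (k:ℝ) * aR B j k
      = -((j:ℝ) * (1/2)) - ∑' i : ℕ, ((i:ℝ)+1) * g B i := by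
    have e1 : ∀ k : ℕ, (k:ℝ) * aR B j k
        = (k:ℝ) * m B j k + (if k = 1 then -(U B j) else 0)
          + (if k = j then (-2:ℝ)*(j:ℝ) else 0) := by
      intro k
      rw [aR]
      by_cases h0 : k = 0
      · subst h0
        simp [show ¬((0:ℕ) = 1) by omega, show ¬((0:ℕ) = j) by omega]
      by_cases h1 : k = 1
      · subst h1
        simp [show ¬((1:ℕ) = j) by omega]
      by_cases h2 : k = j
      · rw [h2]
        simp [show ¬(j = 0) by omega, show ¬(j = 1) by omega]
        push_cast
        ring
      · simp [h0, h1, h2]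
    rw [Finset.sum_congr rfl (fun k _ => e1 k), Finset.sum_add_distrib,
      Finset.sum_add_distrib,
      Finset.sum_ite_eq' (range (j+1)) 1 (fun _ => -(U B j)),
      Finset.sum_ite_eq' (range (j+1)) j (fun _ => (-2:ℝ)*(j:ℝ)),
      hhead_m]
    have m1 : (1:ℕ) ∈ range (j+1) := by simp; omega
    have mj : j ∈ range (j+1) := by simp
    rw [if_pos m1, if_pos mj]
    ring
  rw [← hsplit, htail', hhead]
  ring

end Series

section Telescope

variable (hB1 : 1 < B) (hB4 : 4 ≤ B) (hj : 2 ≤ j)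
  (hg : ∑' i : ℕ, g B i = 1/2)
include hB1 hB4 hj hg

lemma Sc (k : ℕ) : Summable (fun i : ℕ => aR B j (i + k)) :=
  (summable_nat_add_iff k).mpr (SaR B j hB1 hB4 hj hg)

lemma Sb_inner (k : ℕ) : Summable (fun i : ℕ => ((i:ℝ)+1) * aR B j (i + k)) := by
  apply Summable.of_norm_bounded ((master B j hB1 hB4 k 1 (by norm_num)).mul_left 3)
  intro i
  rw [Real.norm_eq_abs, abs_mul]
  have h1 := aR_abs_le B j hB1 hj hg (i + k)
  have h2 : |((i:ℝ)+1)| = (i:ℝ)+1 := abs_of_pos (by positivity)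
  rw [h2]
  have h3 : (0:ℝ) ≤ (i:ℝ)+1 := by positivity
  have h4 := abs_nonneg (aR B j (i+k))
  have h5 := (m_pos B j hB1 (i+k)).le
  simp only [one_pow, mul_one]
  nlinarith

lemma cstep (k : ℕ) : cR B j k = aR B j (k+1) + cR B j (k+1) := by
  rw [cR, Summable.tsum_eq_zero_add (Sc B j hB1 hB4 hj hg (k+1)), cR]
  congr 1
  · congr 1; omega
  · exact tsum_congr (fun b => by congr 1; omega)

lemma bstep (k : ℕ) : bR B j k = bR B j (k+1) + cR B j (k+1) := by
  have h1 : bR B j k = aR B j (k+2)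
      + ∑' i : ℕ, (((i:ℝ)+1) * aR B j (i + (k+3)) + aR B j (i + (k+3))) := by
    rw [bR, Summable.tsum_eq_zero_add (Sb_inner B j hB1 hB4 hj hg (k+2))]
    simp only [Nat.cast_zero, zero_add, one_mul]
    congr 1
    exact tsum_congr (fun i => by push_cast [show i+1+(k+2) = i+(k+3) from by omega]; ring)
  rw [h1, Summable.tsum_add (Sb_inner B j hB1 hB4 hj hg (k+3)) (Sc B j hB1 hB4 hj hg (k+3))]
  have h2 : bR B j (k+1) = ∑' i : ℕ, ((i:ℝ)+1) * aR B j (i + (k+3)) := rfl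
  have h3 : cR B j (k+1) = aR B j (k+2) + ∑' i : ℕ, aR B j (i + (k+3)) := by
    rw [cstep B j hB1 hB4 hj hg (k+1)]
    rfl
  rw [h2, h3]
  ring

lemma e1' : aR B j 0 + aR B j 1 + cR B j 1 = 0 := by
  have h0 := E1 B j hB1 hB4 hj hg
  rw [Summable.tsum_eq_zero_add (SaR B j hB1 hB4 hj hg)] at h0
  have h1 : ∑' i : ℕ, aR B j (i + 1) = aR B j 1 + cR B j 1 := by
    rw [Summable.tsum_eq_zero_add (Sc B j hB1 hB4 hj hg 1)]
    rfl
  rw [h1] at h0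
  linarith

lemma e2' : aR B j 1 + bR B j 0 + cR B j 1 = 0 := by
  have h0 := E2 B j hB1 hB4 hj hg
  have hS1 : Summable (fun i : ℕ => ((i+1:ℕ):ℝ) * aR B j (i + 1)) := by
    have := (summable_nat_add_iff 1).mpr (SkaR B j hB1 hB4 hj hg)
    exact this.congr (fun i => by push_cast; ring)
  rw [Summable.tsum_eq_zero_add (SkaR B j hB1 hB4 hj hg)] at h0
  simp only [Nat.cast_zero, zero_mul, zero_add] at h0
  have h1 : ∑' i : ℕ, ((i+1:ℕ):ℝ) * aR B j (i + 1)
      = aR B j 1 + (bR B j 0 + cR B j 1) := by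
    rw [Summable.tsum_eq_zero_add hS1]
    simp only [zero_add, Nat.cast_one, one_mul]
    congr 1
    have h2 : ∀ i : ℕ, ((i+1+1:ℕ):ℝ) * aR B j (i+1+1)
        = ((i:ℝ)+1) * aR B j (i + 2) + aR B j (i + 2) := by
      intro i
      push_cast [show i+1+1 = i+2 from by omega]
      ring
    rw [tsum_congr h2, Summable.tsum_add (Sb_inner B j hB1 hB4 hj hg 2) (Sc B j hB1 hB4 hj hg 2)]
    have hb : bR B j 0 = ∑' i : ℕ, ((i:ℝ)+1) * aR B j (i + 2) := rfl
    have hc : cR B j 1 = ∑' i : ℕ, aR B j (i + 2) := rfl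
    rw [hb, hc]
  rw [h1] at h0
  linarith

lemma id0 : aR B j 0 = bR B j 0 := by
  have h1 := e1' B j hB1 hB4 hj hg
  have h2 := e2' B j hB1 hB4 hj hg
  linarith

lemma id1 : aR B j 1 = bR B j 1 - 2 * bR B j 0 := by
  have h1 := e2' B j hB1 hB4 hj hg
  have h2 := bstep B j hB1 hB4 hj hg 0
  linarith

lemma idA (l : ℕ) : aR B j (l+2) = bR B j (l+2) - 2 * bR B j (l+1) + bR B j l := by
  have h1 := bstep B j hB1 hB4 hj hg l
  have h2 := bstep B j hB1 hB4 hj hg (l+1)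
  have h3 := cstep B j hB1 hB4 hj hg (l+1)
  linarith

lemma m_decay (c : ℕ) (hc : j+1 ≤ c) (i : ℕ) :
    m B j (i+c) ≤ m B j c * (1/2:ℝ)^i := by
  have h1 : m B j (i+c) ≤ m B j c * (g B 0)^i := by
    rw [rho_pow B hB1, m, m, ← Real.rpow_add (B0 B hB1)]
    apply Real.rpow_le_rpow_of_exponent_le hB1.le
    have hcj : (j:ℝ) + 1 ≤ (c:ℝ) := by exact_mod_cast hc
    have hi : (0:ℝ) ≤ (i:ℝ) := Nat.cast_nonneg i
    push_cast
    nlinarith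
  refine h1.trans ?_
  apply mul_le_mul_of_nonneg_left _ (m_pos B j hB1 c).le
  exact pow_le_pow_left₀ (rho_pos B hB1).le (rho_le_half B hB1 hg) i

lemma bR_bound (k : ℕ) (hk : j ≤ k+1) : |bR B j k| ≤ 12 * m B j (k+2) := by
  have hc : j+1 ≤ k+2 := by omega
  have hnorm : Summable (fun i : ℕ => |((i:ℝ)+1) * aR B j (i + (k+2))|) :=
    (Sb_inner B j hB1 hB4 hj hg (k+2)).abs
  have h1 : |bR B j k| ≤ ∑' i : ℕ, |((i:ℝ)+1) * aR B j (i + (k+2))| := by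
    rw [bR, ← Real.norm_eq_abs]
    refine (norm_tsum_le_tsum_norm
      (hnorm.congr (fun i => (Real.norm_eq_abs _).symm))).trans ?_
    apply le_of_eq
    exact tsum_congr (fun i => Real.norm_eq_abs _)
  have hSbound : Summable (fun i : ℕ => 3 * m B j (k+2) * (((i:ℝ)+1) * (1/2:ℝ)^i)) :=
    half_summable.mul_left _
  have h2 : ∑' i : ℕ, |((i:ℝ)+1) * aR B j (i + (k+2))|
      ≤ ∑' i : ℕ, 3 * m B j (k+2) * (((i:ℝ)+1) * (1/2:ℝ)^i) := by
    apply Summable.tsum_le_tsum _ hnorm hSbound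
    intro i
    rw [abs_mul, abs_of_pos (show (0:ℝ) < (i:ℝ)+1 by positivity)]
    have h3 := aR_abs_le B j hB1 hj hg (i + (k+2))
    have h4 := m_decay B j hB1 hB4 hj hg (k+2) hc i
    have h5 : (0:ℝ) ≤ (i:ℝ)+1 := by positivity
    have h6 := abs_nonneg (aR B j (i + (k+2)))
    have h7 := (m_pos B j hB1 (i+(k+2))).le
    have h8 : (0:ℝ) ≤ ((1:ℝ)/2)^i := by positivity
    have h9 := (m_pos B j hB1 (k+2)).le
    nlinarith
  have h3 : ∑' i : ℕ, 3 * m B j (k+2) * (((i:ℝ)+1) * (1/2:ℝ)^i)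
      = 12 * m B j (k+2) := by
    rw [tsum_mul_left, half_tsum]
    ring
  linarith

lemma SmShift (c : ℕ) (x : ℝ) (hx : 0 ≤ x) :
    Summable (fun k : ℕ => m B j (k+c) * x^k) := by
  apply Summable.of_nonneg_of_le
    (fun k => mul_nonneg (m_pos B j hB1 (k+c)).le (pow_nonneg hx k))
    (fun k => ?_) (master B j hB1 hB4 c x hx)
  have h1 := (m_pos B j hB1 (k+c)).le
  have h2 : (0:ℝ) ≤ (k:ℝ) := Nat.cast_nonneg k
  have h3 : (0:ℝ) ≤ x^k := pow_nonneg hx k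
  nlinarith [mul_nonneg h2 (mul_nonneg h1 h3)]

lemma SbN (x : ℝ) (hx : 0 ≤ x) : Summable (fun k : ℕ => |bR B j k| * x^k) := by
  rw [← summable_nat_add_iff (j+1)]
  apply Summable.of_nonneg_of_le
    (fun k => mul_nonneg (abs_nonneg _) (pow_nonneg hx _))
    (fun k => ?_)
    (((SmShift B j hB1 hB4 hj hg (j+3) x hx).mul_left (12 * x^(j+1))))
  have h1 := bR_bound B j hB1 hB4 hj hg (k+(j+1)) (by omega)
  have h2 : m B j (k+(j+1)+2) = m B j (k+(j+3)) := congrArg (m B j) (by omega)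
  rw [h2] at h1
  have h4 : (0:ℝ) ≤ x^(j+1) * x^k := by positivity
  calc |bR B j (k+(j+1))| * x^(k+(j+1))
      = |bR B j (k+(j+1))| * (x^(j+1) * x^k) := by rw [pow_add]; ring
    _ ≤ (12 * m B j (k+(j+3))) * (x^(j+1) * x^k) :=
        mul_le_mul_of_nonneg_right h1 h4
    _ = 12 * x^(j+1) * (m B j (k+(j+3)) * x^k) := by ring

end Telescope

def hC (z : ℂ) : ℂ := ∑' k : ℕ, ((bR B j k : ℝ) : ℂ) * z^k

def fC (z : ℂ) : ℂ := (z - 1)^2 * hC B j z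

def M : ℝ := ∑' k : ℕ, |bR B j k| * 2^k

section Cx

variable (hB1 : 1 < B) (hB4 : 4 ≤ B) (hj : 2 ≤ j)
  (hg : ∑' i : ℕ, g B i = 1/2)
include hB1 hB4 hj hg

lemma SbC (z : ℂ) : Summable (fun k : ℕ => ((bR B j k : ℝ) : ℂ) * z^k) := by
  apply Summable.of_norm
  have h1 : ∀ k : ℕ, ‖((bR B j k : ℝ) : ℂ) * z^k‖ = |bR B j k| * ‖z‖^k := by
    intro k
    rw [norm_mul, Complex.norm_real, norm_pow, Real.norm_eq_abs]
  exact ((SbN B j hB1 hB4 hj hg ‖z‖ (norm_nonneg z)).congr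
    (fun k => (h1 k).symm))

lemma hasSum_hC (z : ℂ) :
    HasSum (fun k : ℕ => ((bR B j k : ℝ) : ℂ) * z^k) (hC B j z) :=
  (SbC B j hB1 hB4 hj hg z).hasSum

lemma hasSum_f (z : ℂ) :
    HasSum (fun k : ℕ => aC B j k * z^k) (fC B j z) := by
  classical
  set b : ℕ → ℂ := fun k => ((bR B j k : ℝ) : ℂ) with hb
  have Hb : HasSum (fun k : ℕ => b k * z^k) (hC B j z) :=
    hasSum_hC B j hB1 hB4 hj hg z
  set P1 : ℕ → ℂ := fun k => if k = 0 then 0 else b (k-1) * z^k with hP1def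
  set P2 : ℕ → ℂ := fun k => if k < 2 then 0 else b (k-2) * z^k with hP2def
  have H1 : HasSum P1 (z * hC B j z) := by
    have h1 : HasSum (fun n : ℕ => P1 (n+1)) (z * hC B j z) := by
      have h2 : (fun n : ℕ => P1 (n+1)) = (fun n : ℕ => z * (b n * z^n)) := by
        funext n
        simp only [hP1def]
        rw [if_neg (by omega)]
        simp only [Nat.add_sub_cancel]
        ring
      rw [h2]
      exact Hb.mul_left z
    have h3 := (hasSum_nat_add_iff (f := P1) 1).mp h1
    simpa [hP1def] using h3
  have H2 : HasSum P2 (z^2 * hC B j z) := by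
    have h1 : HasSum (fun n : ℕ => P2 (n+2)) (z^2 * hC B j z) := by
      have h2 : (fun n : ℕ => P2 (n+2)) = (fun n : ℕ => z^2 * (b n * z^n)) := by
        funext n
        simp only [hP2def]
        rw [if_neg (by omega)]
        simp only [Nat.add_sub_cancel]
        ring
      rw [h2]
      exact Hb.mul_left (z^2)
    have h3 := (hasSum_nat_add_iff (f := P2) 2).mp h1
    have h4 : ∑ i ∈ range 2, P2 i = 0 := by
      rw [Finset.sum_range_succ, Finset.sum_range_one]
      norm_num [hP2def]
    rw [h4, add_zero] at h3
    exact h3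
  have Hcomb : HasSum (fun k : ℕ => b k * z^k - 2 * P1 k + P2 k)
      (hC B j z - 2 * (z * hC B j z) + z^2 * hC B j z) :=
    (Hb.sub (H1.mul_left 2)).add H2
  have hfun : ∀ k : ℕ, aC B j k * z^k = b k * z^k - 2 * P1 k + P2 k := by
    intro k
    match k with
    | 0 =>
      simp only [hP1def, hP2def, if_pos rfl, if_pos (by omega : (0:ℕ) < 2)]
      have := id0 B j hB1 hB4 hj hg
      simp only [aC, hb, this]
      ring
    | 1 =>
      simp only [hP1def, hP2def, if_neg (by omega : ¬(1 = 0)),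
        if_pos (by omega : (1:ℕ) < 2)]
      have := id1 B j hB1 hB4 hj hg
      simp only [aC, hb]
      rw [this]
      push_cast
      ring
    | (l+2) =>
      simp only [hP1def, hP2def, if_neg (by omega : ¬(l+2 = 0)),
        if_neg (by omega : ¬(l+2 < 2))]
      have := idA B j hB1 hB4 hj hg l
      simp only [aC, hb]
      rw [this]
      have e1 : l+2-1 = l+1 := by omega
      have e2 : l+2-2 = l := by omega
      rw [e1, e2]
      push_cast
      ring
  have hval : hC B j z - 2 * (z * hC B j z) + z^2 * hC B j z = fC B j z := by
    rw [fC]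
    ring
  rw [← hval]
  have hfe : (fun k : ℕ => aC B j k * z^k)
      = (fun k : ℕ => b k * z^k - 2 * P1 k + P2 k) := funext hfun
  rw [hfe]
  exact Hcomb

lemma M_nonneg : 0 ≤ M B j :=
  tsum_nonneg (fun k => mul_nonneg (abs_nonneg _) (by positivity))

lemma hC_bound (z : ℂ) (hz : ‖z‖ ≤ 2) : ‖hC B j z‖ ≤ M B j := by
  have hS := SbC B j hB1 hB4 hj hg z
  have hSn : Summable (fun k : ℕ => ‖((bR B j k : ℝ) : ℂ) * z^k‖) :=
    (SbN B j hB1 hB4 hj hg ‖z‖ (norm_nonneg z)).congr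
      (fun k => by rw [norm_mul, Complex.norm_real, norm_pow, Real.norm_eq_abs])
  have h1 := norm_tsum_le_tsum_norm hSn
  refine le_trans h1 ?_
  apply Summable.tsum_le_tsum _ hSn (SbN B j hB1 hB4 hj hg 2 (by norm_num))
  intro k
  rw [norm_mul, Complex.norm_real, norm_pow, Real.norm_eq_abs]
  apply mul_le_mul_of_nonneg_left _ (abs_nonneg _)
  exact pow_le_pow_left₀ (norm_nonneg z) hz k

lemma fC_one : fC B j 1 = 0 := by
  rw [fC]
  ring

lemma deriv_fC : HasDerivAt (fC B j) 0 1 := by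
  rw [hasDerivAt_iff_isLittleO]
  simp only [fC_one B j hB1 hB4 hj hg, sub_zero, smul_zero]
  rw [Asymptotics.isLittleO_iff]
  intro c hc
  have hM := M_nonneg B j hB1 hB4 hj hg
  have hδ : 0 < min 1 (c/(M B j + 1)) := by positivity
  filter_upwards [Metric.ball_mem_nhds (1:ℂ) hδ] with z hz
  rw [Metric.mem_ball, Complex.dist_eq] at hz
  have hz1 : ‖z - 1‖ < 1 := lt_of_lt_of_le hz (min_le_left _ _)
  have hz2 : ‖z - 1‖ < c/(M B j + 1) := lt_of_lt_of_le hz (min_le_right _ _)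
  have hzn : ‖z‖ ≤ 2 := by
    calc ‖z‖ = ‖(z - 1) + 1‖ := by ring_nf
      _ ≤ ‖z - 1‖ + ‖(1:ℂ)‖ := norm_add_le _ _
      _ ≤ 2 := by rw [norm_one]; linarith
  have hb := hC_bound B j hB1 hB4 hj hg z hzn
  rw [fC, norm_mul, norm_pow]
  have h1 : ‖z - 1‖^2 * ‖hC B j z‖ ≤ ‖z-1‖ * ((c/(M B j + 1)) * (M B j)) := by
    have e1 : ‖z - 1‖^2 * ‖hC B j z‖ = ‖z-1‖ * (‖z-1‖ * ‖hC B j z‖) := by ring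
    rw [e1]
    apply mul_le_mul_of_nonneg_left _ (norm_nonneg _)
    apply mul_le_mul hz2.le hb (norm_nonneg _) (by positivity)
  refine h1.trans ?_
  rw [mul_comm (c:ℝ) ‖z-1‖]
  apply mul_le_mul_of_nonneg_left _ (norm_nonneg _)
  rw [div_mul_eq_mul_div, div_le_iff₀ (by positivity)]
  nlinarith

end Cx

section Q

variable (hB1 : 1 < B) (hB4 : 4 ≤ B) (hj : 2 ≤ j)
  (hg : ∑' i : ℕ, g B i = 1/2)
include hB1 hB4 hj hg

omit hB4 hj hg in
omit hB4 hj hg in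
lemma m_mul (p q : ℕ) : m B j p * m B j q
    = B ^ (-((p:ℝ)-(j:ℝ))^2/2 + -((q:ℝ)-(j:ℝ))^2/2) := by
  rw [m, m, ← Real.rpow_add (B0 B hB1)]

omit hB4 hj hg in
lemma mid (p : ℕ) : (m B j (p+1))^2 = B * (m B j p * m B j (p+2)) := by
  have hmul : ∀ x : ℝ, B * B ^ x = B ^ (1 + x) := by
    intro x
    rw [Real.rpow_add (B0 B hB1), Real.rpow_one]
  rw [pow_two, m_mul B j hB1, m_mul B j hB1, hmul]
  congr 1
  push_cast
  ring

lemma aR0_pos : 0 < aR B j 0 := by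
  rw [aR_0 B j hj]
  have := T_nonneg B j hB1
  have := U_nonneg B j hB1
  have := m_pos B j hB1 0
  linarith

lemma aR1_pos : 0 < aR B j 1 := by
  rw [aR_1 B j hj]
  have := U_lt_m1 B j hB1 hj hg
  have := m_pos B j hB1 1
  linarith

lemma aR_ne (k : ℕ) : aR B j k ≠ 0 := by
  rcases Nat.lt_or_ge k 2 with hk | hk
  · interval_cases k
    · exact (aR0_pos B j hB1 hB4 hj hg).ne'
    · exact (aR1_pos B j hB1 hB4 hj hg).ne'
  · have h1 := abs_aR B j hB1 k hk
    have h2 := m_pos B j hB1 k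
    intro h
    rw [h, abs_zero] at h1
    linarith

set_option maxHeartbeats 1600000 in
lemma q_big (ε : ℝ) (hε : 0 < ε) (hB9 : B ≤ 9)
    (hw16 : ((1:ℝ)/2)^(2*j) ≤ 1/16) (hwε : 32 * ((1:ℝ)/2)^(2*j) < ε)
    (k : ℕ) (hk : 2 ≤ k) :
    B - ε < |aR B j (k-1)|^2 / (|aR B j (k-2)| * |aR B j k|) := by
  set w : ℝ := ((1:ℝ)/2)^(2*j) with hw
  have hw0 : 0 < w := by positivity
  have hU : U B j ≤ 4 * w^2 * m B j 1 := by
    have h1 := U_m1 B j hB1 hg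
    have h2 : ((1:ℝ)/2)^(4*j) = w^2 := by
      rw [hw, ← pow_mul]
      congr 1
      omega
    rw [h2] at h1
    linarith
  have hTU : T B j + U B j ≤ 3 * w * m B j 0 := by
    have h1 := TU_m0 B j hB1 hg
    have h2 : ((1:ℝ)/2)^(2*j+1) = w * (1/2) := by
      rw [hw, pow_succ]
    rw [h2] at h1
    nlinarith [m_pos B j hB1 0]
  have hm0 := m_pos B j hB1 0
  have hm1 := m_pos B j hB1 1
  have hm2 := m_pos B j hB1 2
  have hm3 := m_pos B j hB1 3
  have hUn := U_nonneg B j hB1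
  have hTn := T_nonneg B j hB1
  have hU1 := U_lt_m1 B j hB1 hj hg
  rcases Nat.lt_or_ge k 4 with hk4 | hk4
  · interval_cases k
    · -- k = 2
      have e1 : (2:ℕ) - 1 = 1 := rfl
      have e2 : (2:ℕ) - 2 = 0 := rfl
      rw [e1, e2, abs_of_pos (aR1_pos B j hB1 hB4 hj hg), abs_of_pos (aR0_pos B j hB1 hB4 hj hg),
        aR_0 B j hj, aR_1 B j hj, abs_aR B j hB1 2 (by omega)]
      have hmid := mid B j hB1 0
      have hDpos0 : (0:ℝ) < (m B j 0 + (T B j + U B j)) * m B j 2 :=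
        mul_pos (by linarith) hm2
      rw [lt_div_iff₀ hDpos0]
      have key1 : B * (m B j 0 * m B j 2) * (1 - 8*w^2) ≤ (m B j 1 - U B j)^2 := by
        have h1 : m B j 1^2 - 2*(m B j 1)*(U B j) ≤ (m B j 1 - U B j)^2 := by
          nlinarith [sq_nonneg (U B j)]
        have h2 : m B j 1 * U B j ≤ 4*w^2 * (m B j 1^2) := by
          nlinarith [mul_le_mul_of_nonneg_left hU hm1.le]
        have h3 : B * (m B j 0 * m B j 2) = m B j 1^2 := hmid.symm
        rw [h3]
        nlinarith
      rcases le_or_gt (B - ε) 0 with hBe | hBe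
      · have hle : (B - ε) * ((m B j 0 + (T B j + U B j)) * m B j 2) ≤ 0 :=
          mul_nonpos_of_nonpos_of_nonneg hBe hDpos0.le
        have hpos : 0 < (m B j 1 - U B j)^2 := pow_pos (by linarith) 2
        linarith
      · have hD : (m B j 0 + (T B j + U B j)) * m B j 2
            ≤ (1 + 3*w) * (m B j 0 * m B j 2) := by nlinarith
        have hεw : 0 ≤ ε * w := le_of_lt (mul_pos hε hw0)
        have h8 : 8*B*w^2 ≤ 72*w^2 := by nlinarith [sq_nonneg w]
        have h9 : 72*w^2 ≤ 5*w := by nlinarith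
        have h10 : 3*B*w ≤ 27*w := by nlinarith
        have hcoef : (B - ε) * (1 + 3*w) < B * (1 - 8*w^2) := by nlinarith
        have hDpos : (0:ℝ) < m B j 0 * m B j 2 := mul_pos hm0 hm2
        calc (B - ε) * ((m B j 0 + (T B j + U B j)) * m B j 2)
            ≤ (B - ε) * ((1 + 3*w) * (m B j 0 * m B j 2)) :=
              mul_le_mul_of_nonneg_left hD hBe.le
          _ = ((B - ε) * (1 + 3*w)) * (m B j 0 * m B j 2) := by ring
          _ < (B * (1 - 8*w^2)) * (m B j 0 * m B j 2) :=
              mul_lt_mul_of_pos_right hcoef hDpos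
          _ = B * (m B j 0 * m B j 2) * (1 - 8*w^2) := by ring
          _ ≤ (m B j 1 - U B j)^2 := key1
    · -- k = 3
      have e1 : (3:ℕ) - 1 = 2 := rfl
      have e2 : (3:ℕ) - 2 = 1 := rfl
      rw [e1, e2, abs_of_pos (aR1_pos B j hB1 hB4 hj hg), aR_1 B j hj,
        abs_aR B j hB1 2 (by omega), abs_aR B j hB1 3 (by omega)]
      have hmid := mid B j hB1 1
      have hx : (0:ℝ) < (m B j 1 - U B j) * m B j 3 := mul_pos (by linarith) hm3
      rw [lt_div_iff₀ hx]
      have s1 : (B-ε) * ((m B j 1 - U B j) * m B j 3)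
          < B * ((m B j 1 - U B j) * m B j 3) := by nlinarith
      have s2 : B * ((m B j 1 - U B j) * m B j 3) ≤ B * (m B j 1 * m B j 3) := by
        nlinarith [mul_nonneg (mul_nonneg (show (0:ℝ) ≤ B by linarith) hUn) hm3.le]
      linarith [hmid]
  · -- k ≥ 4
    obtain ⟨l, rfl⟩ : ∃ l, k = l + 4 := ⟨k - 4, by omega⟩
    have e1 : l + 4 - 1 = l + 3 := by omega
    have e2 : l + 4 - 2 = l + 2 := by omega
    rw [e1, e2, abs_aR B j hB1 (l+3) (by omega), abs_aR B j hB1 (l+2) (by omega),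
      abs_aR B j hB1 (l+4) (by omega)]
    have hmid := mid B j hB1 (l+2)
    have hml2 := m_pos B j hB1 (l+2)
    have hml4 := m_pos B j hB1 (l+4)
    have hval : m B j (l+3)^2 / (m B j (l+2) * m B j (l+4)) = B := by
      rw [show (l+2)+1 = l+3 from rfl, show (l+2)+2 = l+4 from rfl] at hmid
      rw [hmid, mul_div_assoc, div_self (by positivity), mul_one]
    rw [hval]
    linarith

end Q

/-- Main theorem -/
theorem main (B : ℝ)
    (hB : 1 < B ∧ 1 - 2 * ∑' k : ℕ, B ^ (-((k : ℝ) + 1) ^ 2 / 2) = 0)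
    (ε : ℝ) (hε : 0 < ε) :
    ∃ (a : ℕ → ℂ) (f : ℂ → ℂ),
      (∀ k, a k ≠ 0) ∧
      (∀ z : ℂ, HasSum (fun k : ℕ => a k * z ^ k) (f z)) ∧
      (∀ k, 2 ≤ k → B - ε < ‖(a (k - 1)) ^ 2 / (a (k - 2) * a k)‖) ∧
      (∃ z : ℂ, f z = 0 ∧ deriv f z = 0) := by
  obtain ⟨hB1, heq⟩ := hB
  have hg : ∑' i : ℕ, g B i = 1/2 := by
    have h1 : ∑' i : ℕ, g B i = ∑' k : ℕ, B ^ (-((k : ℝ) + 1) ^ 2 / 2) := rfl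
    rw [h1]
    linarith
  have hB4 := B4 B hB1 hg
  have hB9 := B9 B hB1 hg
  obtain ⟨n, hn⟩ := exists_pow_lt_of_lt_one (show (0:ℝ) < ε/64 by positivity)
    (show ((1:ℝ)/2) < 1 by norm_num)
  set j : ℕ := 2*n + 4 with hjdef
  have hj : 2 ≤ j := by omega
  have hwle : ((1:ℝ)/2)^(2*j) ≤ ((1:ℝ)/2)^n * ((1:ℝ)/2)^8 := by
    rw [← pow_add]
    apply pow_le_pow_of_le_one (by norm_num) (by norm_num)
    omega
  have hw16 : ((1:ℝ)/2)^(2*j) ≤ 1/16 := by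
    have h2 : ((1:ℝ)/2)^n ≤ 1 := pow_le_one₀ (by norm_num) (by norm_num)
    nlinarith [pow_nonneg (show (0:ℝ) ≤ 1/2 by norm_num) n]
  have hwε : 32 * ((1:ℝ)/2)^(2*j) < ε := by
    have h2 : ((1:ℝ)/2)^n * ((1:ℝ)/2)^8 ≤ ((1:ℝ)/2)^n := by
      nlinarith [pow_nonneg (show (0:ℝ) ≤ 1/2 by norm_num) n,
        pow_le_one₀ (show (0:ℝ) ≤ 1/2 by norm_num) (show (1:ℝ)/2 ≤ 1 by norm_num) (n := 8)]
    nlinarith [pow_nonneg (show (0:ℝ) ≤ 1/2 by norm_num) n]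
  refine ⟨aC B j, fC B j, ?_, ?_, ?_, ?_⟩
  · intro k
    rw [aC]
    exact_mod_cast Complex.ofReal_ne_zero.mpr (aR_ne B j hB1 hB4 hj hg k)
  · exact hasSum_f B j hB1 hB4 hj hg
  · intro k hk
    have hq := q_big B j hB1 hB4 hj hg ε hε hB9 hw16 hwε k hk
    have habs : ‖(aC B j (k-1))^2 / (aC B j (k-2) * aC B j k)‖
        = |aR B j (k-1)|^2 / (|aR B j (k-2)| * |aR B j k|) := by
      simp only [aC, norm_div, norm_mul, norm_pow, Complex.norm_real, Real.norm_eq_abs]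
    rw [habs]
    exact hq
  · exact ⟨1, fC_one B j hB1 hB4 hj hg, (deriv_fC B j hB1 hB4 hj hg).deriv⟩

end Stmt9


/-- For every `ε > 0` there exists an entire function `f(z) = ∑ a_k z^k` with all
`a_k ≠ 0`, with `|q_k(f)| > b_∞ - ε` for all `k ≥ 2`, having a multiple root. -/
theorem stmt_9 (B : ℝ)
    (hB : 1 < B ∧ 1 - 2 * ∑' k : ℕ, B ^ (-((k : ℝ) + 1) ^ 2 / 2) = 0)
    (ε : ℝ) (hε : 0 < ε) :
    ∃ (a : ℕ → ℂ) (f : ℂ → ℂ),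
      (∀ k, a k ≠ 0) ∧
      (∀ z : ℂ, HasSum (fun k : ℕ => a k * z ^ k) (f z)) ∧
      (∀ k, 2 ≤ k → B - ε < ‖(a (k - 1)) ^ 2 / (a (k - 2) * a k)‖) ∧
      (∃ z : ℂ, f z = 0 ∧ deriv f z = 0) := by
  exact Stmt9.main B hB ε hε
end
end
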